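/- arXiv:1204.6008 — 7 statements merged into one kernel-verified Lean document; each statement's English description precedes it below -/
import Mathlib

section
/- Let d ≥ 1, p ∈ [1,∞), and let φ : ℝ^d → ℝ^d be a bi-Lipschitz homeomorphism preserving Lebesgue measure. There is a constant C depending only on d and p such that: if f ∈ L^p_loc(ℝ^d) satisfies (|B|⁻¹ ∫_B |f − av_B f|^p dx)^{1/p} ≤ N for every ball B ⊂ ℝ^d, then (|B|⁻¹ ∫_B |f∘φ − av_B(f∘φ)|^p dx)^{1/p} ≤ C · K(φ)^{d/p} · N for every ball B ⊂ ℝ^d. -/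
open Metric MeasureTheory

/-- `K(φ)`: the supremum over pairs of distinct points of
`|φ(x) − φ(y)|/|x − y| + |x − y|/|φ(x) − φ(y)|`. -/
noncomputable def Kconst {d : ℕ} (φ : EuclideanSpace ℝ (Fin d) → EuclideanSpace ℝ (Fin d)) : ℝ :=
  ⨆ q : {p : EuclideanSpace ℝ (Fin d) × EuclideanSpace ℝ (Fin d) // p.1 ≠ p.2},
    dist (φ q.1.1) (φ q.1.2) / dist q.1.1 q.1.2 +
      dist q.1.1 q.1.2 / dist (φ q.1.1) (φ q.1.2)

lemma aux_center {α : Type*} [MeasurableSpace α] (μ : Measure α) [IsProbabilityMeasure μ]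
    {p : ℝ} (hp : 1 ≤ p) (h : α → ℝ)
    (hh : MemLp h (ENNReal.ofReal p) μ) (c : ℝ) :
    (∫ y, |h y - ∫ z, h z ∂μ| ^ p ∂μ) ^ (1 / p) ≤ 2 * (∫ y, |h y - c| ^ p ∂μ) ^ (1 / p) := by
  have hp0 : 0 < p := lt_of_lt_of_le one_pos hp
  set p' : ENNReal := ENNReal.ofReal p with hp'def
  have hp'1 : 1 ≤ p' := by
    rw [hp'def, ← ENNReal.ofReal_one]
    exact ENNReal.ofReal_le_ofReal hp
  have hp'0 : p' ≠ 0 := by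
    simp [hp'def, ENNReal.ofReal_eq_zero, not_le, hp0]
  have hp't : p' ≠ ⊤ := ENNReal.ofReal_ne_top
  have hpt : p'.toReal = p := ENNReal.toReal_ofReal hp0.le
  set m : ℝ := ∫ z, h z ∂μ with hm
  have hmem1 : MemLp (fun y => h y - m) p' μ := hh.sub (memLp_const m)
  have hmem2 : MemLp (fun y => h y - c) p' μ := hh.sub (memLp_const c)
  have hint : Integrable h μ := hh.integrable hp'1
  have hint2 : Integrable (fun y => h y - c) μ := hint.sub (integrable_const c)
  -- key: |c - m| bounded by eLpNorm
  have hkey0 : (‖c - m‖₊ : ENNReal) ≤ eLpNorm (fun y => h y - c) p' μ := by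
    have h1 : ∫ y, (h y - c) ∂μ = m - c := by
      rw [integral_sub hint (integrable_const c), integral_const]
      simp [hm]
    have h2 : (‖c - m‖₊ : ENNReal) = ENNReal.ofReal ‖∫ y, (h y - c) ∂μ‖ := by
      rw [h1, ← enorm_eq_nnnorm, ← ofReal_norm, norm_sub_rev]
    calc (‖c - m‖₊ : ENNReal) = ENNReal.ofReal ‖∫ y, (h y - c) ∂μ‖ := h2
      _ ≤ ENNReal.ofReal (∫ y, ‖h y - c‖ ∂μ) :=
          ENNReal.ofReal_le_ofReal (norm_integral_le_integral_norm _)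
      _ = ∫⁻ y, ‖h y - c‖₊ ∂μ := ofReal_integral_norm_eq_lintegral_enorm hint2
      _ = eLpNorm (fun y => h y - c) 1 μ := by rw [eLpNorm_one_eq_lintegral_enorm]; rfl
      _ ≤ eLpNorm (fun y => h y - c) p' μ :=
          eLpNorm_le_eLpNorm_of_exponent_le hp'1 hmem2.aestronglyMeasurable
  have hkey : eLpNorm (fun y => h y - m) p' μ ≤ 2 * eLpNorm (fun y => h y - c) p' μ := by
    have hsplit : (fun y => h y - m) = (fun y => h y - c) + (fun _ => c - m) := by
      funext y
      show h y - m = (h y - c) + (c - m)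
      ring
    calc eLpNorm (fun y => h y - m) p' μ
        = eLpNorm ((fun y => h y - c) + fun _ => c - m) p' μ := by rw [hsplit]
      _ ≤ eLpNorm (fun y => h y - c) p' μ + eLpNorm (fun _ : α => c - m) p' μ :=
          eLpNorm_add_le hmem2.aestronglyMeasurable aestronglyMeasurable_const hp'1
      _ = eLpNorm (fun y => h y - c) p' μ + (‖c - m‖₊ : ENNReal) := by
          rw [eLpNorm_const _ hp'0 (IsProbabilityMeasure.ne_zero μ)]
          simp
          rfl
      _ ≤ eLpNorm (fun y => h y - c) p' μ + eLpNorm (fun y => h y - c) p' μ :=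
          add_le_add le_rfl hkey0
      _ = 2 * eLpNorm (fun y => h y - c) p' μ := (two_mul _).symm
  -- convert to integrals
  have e1 := hmem1.eLpNorm_eq_integral_rpow_norm hp'0 hp't
  have e2 := hmem2.eLpNorm_eq_integral_rpow_norm hp'0 hp't
  rw [e1, e2] at hkey
  have hne : (2 : ENNReal) * ENNReal.ofReal ((∫ y, ‖h y - c‖ ^ p'.toReal ∂μ) ^ p'.toReal⁻¹) ≠ ⊤ := by
    exact ENNReal.mul_ne_top (by norm_num) ENNReal.ofReal_ne_top
  have := ENNReal.toReal_le_toReal (by exact ENNReal.ofReal_ne_top) hne |>.mpr hkey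
  rw [ENNReal.toReal_mul, ENNReal.toReal_ofReal (Real.rpow_nonneg
        (integral_nonneg fun y => Real.rpow_nonneg (norm_nonneg _) _) _),
      ENNReal.toReal_ofReal (Real.rpow_nonneg
        (integral_nonneg fun y => Real.rpow_nonneg (norm_nonneg _) _) _)] at this
  simpa [hpt, Real.norm_eq_abs, one_div, ENNReal.toReal_ofNat] using this

/-- Let `d ≥ 1`, `p ∈ [1,∞)` and `φ` a bi-Lipschitz measure-preserving homeomorphism of `ℝ^d`.
There is `C = C(d,p)` such that if `f ∈ L^p_loc` has `BMO_p` seminorm at most `N`, then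
`f ∘ φ` has `BMO_p` seminorm at most `C · K(φ)^{d/p} · N`. -/
theorem stmt4 (d : ℕ) (hd : 1 ≤ d) (p : ℝ) (hp : 1 ≤ p) :
    ∃ C : ℝ, 0 < C ∧
      ∀ (φ : EuclideanSpace ℝ (Fin d) → EuclideanSpace ℝ (Fin d)),
        Function.Bijective φ →
        (∃ A : NNReal, LipschitzWith A φ) →
        (∃ A : NNReal, LipschitzWith A (Function.invFun φ)) →
        MeasurePreserving φ volume volume →
        ∀ (f : EuclideanSpace ℝ (Fin d) → ℝ) (N : ℝ), 0 ≤ N →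
          (∀ (x : EuclideanSpace ℝ (Fin d)) (r : ℝ), 0 < r →
            MemLp f (ENNReal.ofReal p) (volume.restrict (ball x r))) →
          (∀ (x : EuclideanSpace ℝ (Fin d)) (r : ℝ), 0 < r →
            (⨍ y in ball x r, |f y - ⨍ z in ball x r, f z| ^ p) ^ (1 / p) ≤ N) →
          ∀ (x : EuclideanSpace ℝ (Fin d)) (r : ℝ), 0 < r →
            (⨍ y in ball x r, |f (φ y) - ⨍ z in ball x r, f (φ z)| ^ p) ^ (1 / p)
              ≤ C * Kconst φ ^ ((d : ℝ) / p) * N := by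
  have hp0 : 0 < p := lt_of_lt_of_le one_pos hp
  haveI : Nonempty (Fin d) := ⟨⟨0, hd⟩⟩
  haveI : Nontrivial (EuclideanSpace ℝ (Fin d)) := by
    infer_instance
  refine ⟨2, two_pos, ?_⟩
  rintro φ hbij ⟨A, hA⟩ ⟨A', hA'⟩ hmp f N hN hloc hbmo x r hr
  set L := Kconst φ with hLdef
  -- basic properties of L
  have hdistpos : ∀ a b : EuclideanSpace ℝ (Fin d), a ≠ b → 0 < dist (φ a) (φ b) := by
    intro a b hab
    exact dist_pos.2 fun hcon => hab (hbij.1 hcon)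
  have hbdd : BddAbove (Set.range fun q : {q : EuclideanSpace ℝ (Fin d) × EuclideanSpace ℝ (Fin d) // q.1 ≠ q.2} =>
      dist (φ q.1.1) (φ q.1.2) / dist q.1.1 q.1.2 +
        dist q.1.1 q.1.2 / dist (φ q.1.1) (φ q.1.2)) := by
    refine ⟨(A : ℝ) + (A' : ℝ), ?_⟩
    rintro _ ⟨⟨⟨a, b⟩, hab⟩, rfl⟩
    have h1 : dist (φ a) (φ b) / dist a b ≤ (A : ℝ) := by
      rw [div_le_iff₀ (dist_pos.2 hab)]
      exact hA.dist_le_mul a b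
    have h2 : dist a b / dist (φ a) (φ b) ≤ (A' : ℝ) := by
      rw [div_le_iff₀ (hdistpos a b hab)]
      calc dist a b = dist (Function.invFun φ (φ a)) (Function.invFun φ (φ b)) := by
            rw [Function.leftInverse_invFun hbij.1 a, Function.leftInverse_invFun hbij.1 b]
        _ ≤ (A' : ℝ) * dist (φ a) (φ b) := hA'.dist_le_mul _ _
    exact add_le_add h1 h2
  have hterm_le : ∀ (q : {q : EuclideanSpace ℝ (Fin d) × EuclideanSpace ℝ (Fin d) // q.1 ≠ q.2}),
      dist (φ q.1.1) (φ q.1.2) / dist q.1.1 q.1.2 +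
        dist q.1.1 q.1.2 / dist (φ q.1.1) (φ q.1.2) ≤ L := fun q => le_ciSup hbdd q
  have hL2 : 2 ≤ L := by
    obtain ⟨a, b, hab⟩ := exists_pair_ne (EuclideanSpace ℝ (Fin d))
    refine le_trans ?_ (hterm_le ⟨(a, b), hab⟩)
    set t := dist (φ a) (φ b)
    set s := dist a b
    have ht : 0 < t := hdistpos a b hab
    have hs : 0 < s := dist_pos.2 hab
    rw [div_add_div _ _ hs.ne' ht.ne', le_div_iff₀ (by positivity)]
    nlinarith [sq_nonneg (t - s)]
  have hLpos : 0 < L := lt_of_lt_of_le two_pos hL2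
  have hLip : ∀ a b : EuclideanSpace ℝ (Fin d), dist (φ a) (φ b) ≤ L * dist a b := by
    intro a b
    rcases eq_or_ne a b with rfl | hab
    · simp
    · have h1 : dist (φ a) (φ b) / dist a b ≤ L := by
        refine le_trans ?_ (hterm_le ⟨(a, b), hab⟩)
        have := div_nonneg (dist_nonneg (x := a) (y := b)) (hdistpos a b hab).le
        linarith
      rw [div_le_iff₀ (dist_pos.2 hab)] at h1
      exact h1
  -- balls
  set B := ball x r with hBdef
  have hr' : 0 < L * r := mul_pos hLpos hr
  set B' := ball (φ x) (L * r) with hB'def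
  have himg : φ '' B ⊆ B' := by
    rintro _ ⟨y, hy, rfl⟩
    rw [hB'def, mem_ball]
    calc dist (φ y) (φ x) ≤ L * dist y x := hLip y x
      _ < L * r := by
        exact mul_lt_mul_of_pos_left (by rwa [hBdef, mem_ball] at hy) hLpos
  -- measurable embedding and map of restricted measure
  have hφc : Continuous φ := hA.continuous
  have hemb : MeasurableEmbedding φ := hφc.measurableEmbedding hbij.1
  have himgmeas : MeasurableSet (φ '' B) := by
    have heq : φ '' B = Function.invFun φ ⁻¹' B :=
      congrFun (Set.image_eq_preimage_of_inverse (Function.leftInverse_invFun hbij.1)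
        (Function.rightInverse_invFun hbij.2)) B
    rw [heq]
    exact (isOpen_ball.preimage hA'.continuous).measurableSet
  have hmap : Measure.map φ (volume.restrict B) = volume.restrict (φ '' B) := by
    have h1 := Measure.restrict_map hemb.measurable (μ := volume) himgmeas
    rw [hmp.map_eq, Set.preimage_image_eq _ hbij.1] at h1
    exact h1.symm
  -- MemLp facts
  have hfB' : MemLp f (ENNReal.ofReal p) (volume.restrict B') := hloc (φ x) (L * r) hr'
  have hfimg : MemLp f (ENNReal.ofReal p) (volume.restrict (φ '' B)) :=
    hfB'.mono_measure (Measure.restrict_mono himg le_rfl)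
  have hgB : MemLp (fun y => f (φ y)) (ENNReal.ofReal p) (volume.restrict B) := by
    have := hemb.memLp_map_measure_iff (g := f) (p := ENNReal.ofReal p)
      (μ := volume.restrict B)
    rw [hmap] at this
    exact this.mp hfimg
  -- probability measures
  have hvolB_pos : 0 < volume B := measure_ball_pos volume x hr
  have hvolB_lt : volume B < ⊤ := measure_ball_lt_top
  have hvolB'_pos : 0 < volume B' := measure_ball_pos volume (φ x) hr'
  have hvolB'_lt : volume B' < ⊤ := measure_ball_lt_top
  set μ : Measure (EuclideanSpace ℝ (Fin d)) := (volume B)⁻¹ • volume.restrict B with hμdef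
  set ν : Measure (EuclideanSpace ℝ (Fin d)) := (volume B')⁻¹ • volume.restrict B' with hνdef
  haveI hμprob : IsProbabilityMeasure μ := by
    constructor
    rw [hμdef, Measure.smul_apply, Measure.restrict_apply_univ, smul_eq_mul,
      ENNReal.inv_mul_cancel hvolB_pos.ne' hvolB_lt.ne]
  haveI hνprob : IsProbabilityMeasure ν := by
    constructor
    rw [hνdef, Measure.smul_apply, Measure.restrict_apply_univ, smul_eq_mul,
      ENNReal.inv_mul_cancel hvolB'_pos.ne' hvolB'_lt.ne]
  have havgB : ∀ F : EuclideanSpace ℝ (Fin d) → ℝ, ⨍ y in B, F y = ∫ y, F y ∂μ := by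
    intro F
    rw [setAverage_eq, hμdef, integral_smul_measure, ENNReal.toReal_inv]
    rfl
  have havgB' : ∀ F : EuclideanSpace ℝ (Fin d) → ℝ, ⨍ y in B', F y = ∫ y, F y ∂ν := by
    intro F
    rw [setAverage_eq, hνdef, integral_smul_measure, ENNReal.toReal_inv]
    rfl
  have hgμ : MemLp (fun y => f (φ y)) (ENNReal.ofReal p) μ :=
    hgB.smul_measure (ENNReal.inv_ne_top.2 hvolB_pos.ne')
  set c : ℝ := ⨍ z in B', f z with hcdef
  -- Claim A
  have claimA : (∫ y, |f (φ y) - ∫ z, f (φ z) ∂μ| ^ p ∂μ) ^ (1 / p)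
      ≤ 2 * (∫ y, |f (φ y) - c| ^ p ∂μ) ^ (1 / p) :=
    aux_center μ hp (fun y => f (φ y)) hgμ c
  -- Claim B
  have claimB : ∫ y, |f (φ y) - c| ^ p ∂μ ≤ (L ^ d) * ∫ y, |f y - c| ^ p ∂ν := by
    have hp'0 : (ENNReal.ofReal p) ≠ 0 := by
      simp [ENNReal.ofReal_eq_zero, not_le, hp0]
    haveI : IsFiniteMeasure (volume.restrict B') :=
      ⟨by rw [Measure.restrict_apply_univ]; exact hvolB'_lt⟩
    have hint : Integrable (fun y => |f y - c| ^ p) (volume.restrict B') := by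
      have := (hfB'.sub (memLp_const c)).integrable_norm_rpow hp'0 ENNReal.ofReal_ne_top
      simpa [Real.norm_eq_abs, ENNReal.toReal_ofReal hp0.le] using this
    have h1 : ∫ y, |f (φ y) - c| ^ p ∂μ
        = (volume B).toReal⁻¹ * ∫ y in B, |f (φ y) - c| ^ p := by
      rw [hμdef, integral_smul_measure, ENNReal.toReal_inv, smul_eq_mul]
    have h2 : ∫ y in B, |f (φ y) - c| ^ p = ∫ z in φ '' B, |f z - c| ^ p := by
      rw [← hmap, hemb.integral_map]
    have h3 : ∫ z in φ '' B, |f z - c| ^ p ≤ ∫ z in B', |f z - c| ^ p :=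
      setIntegral_mono_set hint
        (Filter.Eventually.of_forall fun y => Real.rpow_nonneg (abs_nonneg _) _)
        (HasSubset.Subset.eventuallyLE himg)
    have hB'ne : (volume B').toReal ≠ 0 :=
      ENNReal.toReal_ne_zero.2 ⟨hvolB'_pos.ne', hvolB'_lt.ne⟩
    have h4 : ∫ z in B', |f z - c| ^ p = (volume B').toReal * ∫ y, |f y - c| ^ p ∂ν := by
      rw [hνdef, integral_smul_measure, ENNReal.toReal_inv, smul_eq_mul, ← mul_assoc,
        mul_inv_cancel₀ hB'ne, one_mul]
    have hratio : (volume B).toReal⁻¹ * (volume B').toReal = L ^ d := by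
      rw [hBdef, hB'def, Measure.addHaar_ball volume x hr.le,
        Measure.addHaar_ball volume (φ x) hr'.le, finrank_euclideanSpace_fin]
      have hv0 : volume (ball (0 : EuclideanSpace ℝ (Fin d)) 1) ≠ 0 :=
        (measure_ball_pos volume 0 one_pos).ne'
      have hvt : volume (ball (0 : EuclideanSpace ℝ (Fin d)) 1) ≠ ⊤ :=
        measure_ball_lt_top.ne
      set vt := (volume (ball (0 : EuclideanSpace ℝ (Fin d)) 1)).toReal with hvtdef
      have hvtpos : 0 < vt := ENNReal.toReal_pos hv0 hvt
      rw [ENNReal.toReal_mul, ENNReal.toReal_mul, ENNReal.toReal_ofReal (by positivity),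
        ENNReal.toReal_ofReal (by positivity), mul_pow]
      have hrd : (0:ℝ) < r ^ d := by positivity
      field_simp
      ring
      exact mul_inv_cancel₀ hvtpos.ne'
    calc ∫ y, |f (φ y) - c| ^ p ∂μ
        = (volume B).toReal⁻¹ * ∫ z in φ '' B, |f z - c| ^ p := by rw [h1, h2]
      _ ≤ (volume B).toReal⁻¹ * ∫ z in B', |f z - c| ^ p :=
          mul_le_mul_of_nonneg_left h3 (by positivity)
      _ = ((volume B).toReal⁻¹ * (volume B').toReal) * ∫ y, |f y - c| ^ p ∂ν := by
          rw [h4]; ring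
      _ = (L ^ d) * ∫ y, |f y - c| ^ p ∂ν := by rw [hratio]
  -- Claim C
  have claimC : (∫ y, |f y - c| ^ p ∂ν) ^ (1 / p) ≤ N := by
    rw [← havgB']
    have := hbmo (φ x) (L * r) hr'
    rw [← hB'def, ← hcdef] at this
    exact this
  -- combine
  have hZnonneg : 0 ≤ ∫ y, |f y - c| ^ p ∂ν :=
    integral_nonneg fun y => Real.rpow_nonneg (abs_nonneg _) _
  have hYnonneg : 0 ≤ ∫ y, |f (φ y) - c| ^ p ∂μ :=
    integral_nonneg fun y => Real.rpow_nonneg (abs_nonneg _) _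
  have step2 : (∫ y, |f (φ y) - c| ^ p ∂μ) ^ (1 / p)
      ≤ L ^ ((d : ℝ) / p) * (∫ y, |f y - c| ^ p ∂ν) ^ (1 / p) := by
    calc (∫ y, |f (φ y) - c| ^ p ∂μ) ^ (1 / p)
        ≤ ((L ^ d) * ∫ y, |f y - c| ^ p ∂ν) ^ (1 / p) :=
          Real.rpow_le_rpow hYnonneg claimB (by positivity)
      _ = (L ^ d) ^ (1 / p) * (∫ y, |f y - c| ^ p ∂ν) ^ (1 / p) :=
          Real.mul_rpow (by positivity) hZnonneg
      _ = L ^ ((d : ℝ) / p) * (∫ y, |f y - c| ^ p ∂ν) ^ (1 / p) := by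
          rw [← Real.rpow_natCast L d, ← Real.rpow_mul hLpos.le]
          rw [mul_one_div]
  have hfinal : (⨍ y in B, |f (φ y) - ⨍ z in B, f (φ z)| ^ p) ^ (1 / p)
      ≤ 2 * L ^ ((d : ℝ) / p) * N := by
    have h0 : ⨍ y in B, |f (φ y) - ⨍ z in B, f (φ z)| ^ p
        = ∫ y, |f (φ y) - ∫ z, f (φ z) ∂μ| ^ p ∂μ := by
      rw [havgB fun z => f (φ z)]
      exact havgB _
    rw [h0]
    calc (∫ y, |f (φ y) - ∫ z, f (φ z) ∂μ| ^ p ∂μ) ^ (1 / p)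
        ≤ 2 * (∫ y, |f (φ y) - c| ^ p ∂μ) ^ (1 / p) := claimA
      _ ≤ 2 * (L ^ ((d : ℝ) / p) * (∫ y, |f y - c| ^ p ∂ν) ^ (1 / p)) := by
          linarith [step2]
      _ ≤ 2 * (L ^ ((d : ℝ) / p) * N) := by
          have hLr : 0 ≤ L ^ ((d : ℝ) / p) := Real.rpow_nonneg hLpos.le _
          have := mul_le_mul_of_nonneg_left claimC hLr
          linarith
      _ = 2 * L ^ ((d : ℝ) / p) * N := by ring
  exact hfinal
end

section
/- Let d ≥ 1, a ∈ (0,1], p ∈ [1,∞). There is a constant C depending only on d, a and p such that: if f ∈ L^p_loc(ℝ^d) satisfies (|B|^{−1−ap/d} ∫_B |f − av_B f|^p)^{1/p} ≤ N for every ball B ⊂ ℝ^d, then for every ball B and every λ ≥ 1, |av_B f − av_{λB} f| ≤ C · λ^a · |B|^{a/d} · N, where λB denotes the concentric dilate of B by factor λ. -/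
open Metric MeasureTheory

lemma vol_scale (d : ℕ) (hd : 1 ≤ d) (x : EuclideanSpace ℝ (Fin d)) (r t : ℝ) (ht : 0 ≤ t) :
    (volume (ball x (t * r))).toReal = t ^ d * (volume (ball x r)).toReal := by
  haveI : Nonempty (Fin d) := ⟨⟨0, hd⟩⟩
  haveI : Nontrivial (EuclideanSpace ℝ (Fin d)) := by infer_instance
  rw [Measure.addHaar_ball_mul volume x ht r,
    show volume (ball x r) = volume (ball (0 : EuclideanSpace ℝ (Fin d)) r) from
      Measure.addHaar_ball_center volume x r,
    ENNReal.toReal_mul, ENNReal.toReal_ofReal (by positivity), finrank_euclideanSpace_fin]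

lemma onestep (d : ℕ) (hd : 1 ≤ d) (a p : ℝ) (ha : 0 < a) (ha1 : a ≤ 1) (hp : 1 ≤ p)
    (f : EuclideanSpace ℝ (Fin d) → ℝ) (N : ℝ) (hN : 0 ≤ N)
    (hmem : ∀ (x : EuclideanSpace ℝ (Fin d)) (r : ℝ), 0 < r →
      MemLp f (ENNReal.ofReal p) (volume.restrict (ball x r)))
    (hlip : ∀ (x : EuclideanSpace ℝ (Fin d)) (r : ℝ), 0 < r →
      ((volume (ball x r)).toReal ^ (-(1 + a * p / d)) *
        ∫ y in ball x r, |f y - ⨍ z in ball x r, f z| ^ p) ^ (1 / p) ≤ N)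
    (x : EuclideanSpace ℝ (Fin d)) (r : ℝ) (hr : 0 < r) (lam : ℝ) (h1 : 1 ≤ lam) (h2 : lam ≤ 2) :
    |(⨍ y in ball x r, f y) - ⨍ y in ball x (lam * r), f y|
      ≤ 2 ^ (d + 1) * (volume (ball x r)).toReal ^ (a / d) * N := by
  have hdR : (0:ℝ) < d := by exact_mod_cast hd
  have hp0 : (0:ℝ) < p := lt_of_lt_of_le one_pos hp
  have hlam0 : (0:ℝ) < lam := lt_of_lt_of_le one_pos h1
  have hr' : 0 < lam * r := by positivity
  set s := ball x r with hs
  set s' := ball x (lam * r) with hs'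
  have hsub : s ⊆ s' := ball_subset_ball (le_mul_of_one_le_left hr.le h1)
  set m := (volume s).toReal with hm
  set M := (volume s').toReal with hM
  have hmpos : 0 < m := by
    refine ENNReal.toReal_pos (measure_ball_pos volume x hr).ne' measure_ball_lt_top.ne
  have hMpos : 0 < M := by
    refine ENNReal.toReal_pos (measure_ball_pos volume x hr').ne' measure_ball_lt_top.ne
  haveI : IsFiniteMeasure (volume.restrict s') :=
    ⟨by rw [Measure.restrict_apply_univ]; exact measure_ball_lt_top⟩
  haveI : IsFiniteMeasure (volume.restrict s) :=
    ⟨by rw [Measure.restrict_apply_univ]; exact measure_ball_lt_top⟩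
  have hone : (1:ENNReal) ≤ ENNReal.ofReal p := by
    rw [← ENNReal.ofReal_one]; exact ENNReal.ofReal_le_ofReal hp
  set c := ⨍ y in s', f y with hc
  have hmem' : MemLp f (ENNReal.ofReal p) (volume.restrict s') := hmem x (lam * r) hr'
  have hfi' : Integrable f (volume.restrict s') := hmem'.integrable hone
  have hfi : Integrable f (volume.restrict s) :=
    hfi'.mono_measure (Measure.restrict_mono hsub le_rfl)
  have hgi' : Integrable (fun y => f y - c) (volume.restrict s') := hfi'.sub (integrable_const c)
  have hgi'abs : Integrable (fun y => |f y - c|) (volume.restrict s') := hgi'.abs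
  set J := ∫ y in s', |f y - c| ^ p with hJ
  have hJ0 : 0 ≤ J := integral_nonneg (fun y => by positivity)
  -- Step A
  have hA : (⨍ y in s, f y) - c = m⁻¹ * ∫ y in s, (f y - c) := by
    rw [integral_sub hfi (integrable_const c), setAverage_eq, setIntegral_const]
    simp only [smul_eq_mul, measureReal_def, ← hm]
    field_simp
  -- Step B
  have hB : |(⨍ y in s, f y) - c| ≤ m⁻¹ * ∫ y in s', |f y - c| := by
    rw [hA, abs_mul, abs_of_nonneg (by positivity : (0:ℝ) ≤ m⁻¹)]
    gcongr
    calc |∫ y in s, (f y - c)| ≤ ∫ y in s, |f y - c| := by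
          simpa [Real.norm_eq_abs] using
            norm_integral_le_integral_norm (μ := volume.restrict s) (f := fun y => f y - c)
      _ ≤ ∫ y in s', |f y - c| := by
          refine setIntegral_mono_set hgi'abs ?_ (HasSubset.Subset.eventuallyLE hsub)
          filter_upwards with y using abs_nonneg _
  -- Step C : Hölder
  have hC : ∫ y in s', |f y - c| ≤ J ^ (1 / p) * M ^ (1 - 1 / p) := by
    rcases eq_or_lt_of_le hp with hpe | hpl
    · have hJe : J = ∫ y in s', |f y - c| := by
        rw [hJ, ← hpe]; simp [Real.rpow_one]
      rw [hJe, ← hpe]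
      simp [Real.rpow_one]
    · set q := Real.conjExponent p with hq
      have hpq : p.HolderConjugate q := Real.HolderConjugate.conjExponent hpl
      have habs : MemLp (fun y => |f y - c|) (ENNReal.ofReal p) (volume.restrict s') := by
        simpa [Real.norm_eq_abs] using (hmem'.sub (memLp_const c)).norm
      have hconst : MemLp (fun _ : EuclideanSpace ℝ (Fin d) => (1:ℝ)) (ENNReal.ofReal q)
          (volume.restrict s') := memLp_const 1
      have hH := integral_mul_le_Lp_mul_Lq_of_nonneg hpq
        (Filter.Eventually.of_forall fun y => abs_nonneg _)
        (Filter.Eventually.of_forall fun y => zero_le_one) habs hconst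
      simp only [mul_one, Real.one_rpow, setIntegral_const, smul_eq_mul] at hH
      rw [show (1:ℝ) - 1/p = 1/q by
        have h := hpq.inv_add_inv_eq_one; rw [one_div, one_div]; linarith]
      exact hH
  -- Step D
  have hD : J ^ (1 / p) ≤ N * M ^ ((1 + a * p / d) / p) := by
    have hlip' : (M ^ (-(1 + a * p / d)) * J) ^ (1 / p) ≤ N := hlip x (lam * r) hr'
    have hkey : J ^ (1 / p) = M ^ ((1 + a * p / d) / p) * (M ^ (-(1 + a * p / d)) * J) ^ (1 / p) := by
      rw [Real.mul_rpow (by positivity) hJ0, ← Real.rpow_mul hMpos.le, ← mul_assoc,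
        ← Real.rpow_add hMpos]
      rw [show (1 + a * p / d) / p + -(1 + a * p / d) * (1 / p) = 0 by ring, Real.rpow_zero,
        one_mul]
    rw [hkey, mul_comm N _]
    exact mul_le_mul_of_nonneg_left hlip' (by positivity)
  -- Step E : combine
  have hMm : M = lam ^ d * m := vol_scale d hd x r lam hlam0.le
  have hexp : (1 + a * p / d) / p + (1 - 1 / p) = 1 + a / d := by
    field_simp; ring
  calc |(⨍ y in s, f y) - c| ≤ m⁻¹ * ∫ y in s', |f y - c| := hB
    _ ≤ m⁻¹ * (J ^ (1 / p) * M ^ (1 - 1 / p)) := by gcongr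
    _ ≤ m⁻¹ * ((N * M ^ ((1 + a * p / d) / p)) * M ^ (1 - 1 / p)) := by
        have h1 : (0:ℝ) ≤ M ^ (1 - 1/p) := by positivity
        have h2 : (0:ℝ) ≤ m⁻¹ := by positivity
        exact mul_le_mul_of_nonneg_left (mul_le_mul_of_nonneg_right hD h1) h2
    _ = N * (m⁻¹ * M ^ (1 + a / d)) := by
        rw [mul_assoc, ← Real.rpow_add hMpos, hexp]; ring
    _ = N * (lam ^ ((d:ℝ) + a) * m ^ (a / d)) := by
        rw [hMm, Real.mul_rpow (by positivity) hmpos.le, ← Real.rpow_natCast lam d,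
          ← Real.rpow_mul hlam0.le,
          show (d:ℝ) * (1 + a / d) = (d:ℝ) + a by field_simp,
          show (1:ℝ) + a / d = 1 + a / d from rfl]
        rw [Real.rpow_add hmpos 1 (a / d), Real.rpow_one]
        field_simp
    _ ≤ N * (2 ^ (d + 1) * m ^ (a / d)) := by
        have hle : lam ^ ((d:ℝ) + a) ≤ 2 ^ (d + 1) := by
          calc lam ^ ((d:ℝ) + a) ≤ 2 ^ ((d:ℝ) + a) :=
                Real.rpow_le_rpow hlam0.le h2 (by positivity)
            _ ≤ 2 ^ ((d:ℝ) + 1) := Real.rpow_le_rpow_of_exponent_le one_le_two (by linarith)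
            _ = 2 ^ (d + 1) := by
                rw [← Real.rpow_natCast 2 (d + 1), Nat.cast_add, Nat.cast_one]
        have : (0:ℝ) ≤ m ^ (a / d) := by positivity
        exact mul_le_mul_of_nonneg_left (mul_le_mul_of_nonneg_right hle this) hN
    _ = 2 ^ (d + 1) * m ^ (a / d) * N := by ring

lemma steps (d : ℕ) (hd : 1 ≤ d) (a p : ℝ) (ha : 0 < a) (ha1 : a ≤ 1) (hp : 1 ≤ p)
    (f : EuclideanSpace ℝ (Fin d) → ℝ) (N : ℝ) (hN : 0 ≤ N)
    (hmem : ∀ (x : EuclideanSpace ℝ (Fin d)) (r : ℝ), 0 < r →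
      MemLp f (ENNReal.ofReal p) (volume.restrict (ball x r)))
    (hlip : ∀ (x : EuclideanSpace ℝ (Fin d)) (r : ℝ), 0 < r →
      ((volume (ball x r)).toReal ^ (-(1 + a * p / d)) *
        ∫ y in ball x r, |f y - ⨍ z in ball x r, f z| ^ p) ^ (1 / p) ≤ N) : ∀ n : ℕ, ∀ lam : ℝ, 1 ≤ lam → lam ≤ 2 ^ n →
    ∀ (x : EuclideanSpace ℝ (Fin d)) (r : ℝ), 0 < r →
    |(⨍ y in ball x r, f y) - ⨍ y in ball x (lam * r), f y|
      ≤ (2 ^ (d + 1) * (1 + 1 / (2 ^ a - 1))) * lam ^ a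
          * (volume (ball x r)).toReal ^ (a / d) * N := by
  have h2a : (1:ℝ) < 2 ^ a := (Real.one_lt_rpow_iff_of_pos two_pos).2 (Or.inl ⟨one_lt_two, ha⟩)
  have ht : (0:ℝ) < 2 ^ a - 1 := by linarith
  have hK : (0:ℝ) < 2 ^ (d + 1) := by positivity
  have hCK : (2:ℝ) ^ (d + 1) ≤ 2 ^ (d + 1) * (1 + 1 / (2 ^ a - 1)) := by
    nlinarith [one_div_pos.2 ht]
  intro n
  induction n with
  | zero =>
    intro lam hl1 hl2 x r hr
    have hlam : lam = 1 := le_antisymm (by simpa using hl2) hl1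
    subst hlam
    rw [one_mul, sub_self, abs_zero]
    have h1a : (0:ℝ) ≤ (1:ℝ) ^ a := by positivity
    refine mul_nonneg (mul_nonneg (mul_nonneg ?_ h1a) (by positivity)) hN
    nlinarith [one_div_pos.2 ht]
  | succ n ih =>
    intro lam hl1 hl2 x r hr
    by_cases hcase : lam ≤ 2
    · refine (onestep d hd a p ha ha1 hp f N hN hmem hlip x r hr lam hl1 hcase).trans ?_
      have hla : (1:ℝ) ≤ lam ^ a := Real.one_le_rpow hl1 ha.le
      have h1 : (2:ℝ) ^ (d + 1) ≤ (2 ^ (d + 1) * (1 + 1 / (2 ^ a - 1))) * lam ^ a := by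
        nlinarith [one_div_pos.2 ht]
      exact mul_le_mul_of_nonneg_right
        (mul_le_mul_of_nonneg_right h1 (by positivity)) hN
    · push_neg at hcase
      have hlam0 : (0:ℝ) < lam := by linarith
      have h1' : 1 ≤ lam / 2 := by linarith
      have h2' : lam / 2 ≤ 2 ^ n := by rw [pow_succ] at hl2; linarith
      have hIH := ih (lam / 2) h1' h2' x r hr
      have hone := onestep d hd a p ha ha1 hp f N hN hmem hlip x ((lam / 2) * r)
        (by positivity) 2 one_le_two le_rfl
      rw [show 2 * (lam / 2 * r) = lam * r by ring,
        vol_scale d hd x r (lam / 2) (by positivity)] at hone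
      have hsplit : ((lam / 2) ^ d * (volume (ball x r)).toReal) ^ (a / d)
          = (lam / 2) ^ a * (volume (ball x r)).toReal ^ (a / d) := by
        have hm0 : (0:ℝ) ≤ (volume (ball x r)).toReal := ENNReal.toReal_nonneg
        rw [Real.mul_rpow (by positivity) hm0, ← Real.rpow_natCast (lam / 2) d,
          ← Real.rpow_mul (by positivity),
          show (d:ℝ) * (a / d) = a by
            field_simp]
      rw [hsplit] at hone
      set m := (volume (ball x r)).toReal with hm
      have hm0 : (0:ℝ) ≤ m := ENNReal.toReal_nonneg
      set K : ℝ := 2 ^ (d + 1) with hKdef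
      set C : ℝ := K * (1 + 1 / (2 ^ a - 1)) with hCdef
      calc |(⨍ y in ball x r, f y) - ⨍ y in ball x (lam * r), f y|
          ≤ |(⨍ y in ball x r, f y) - ⨍ y in ball x (lam / 2 * r), f y|
            + |(⨍ y in ball x (lam / 2 * r), f y) - ⨍ y in ball x (lam * r), f y| :=
            abs_sub_le _ _ _
        _ ≤ C * (lam / 2) ^ a * m ^ (a / d) * N
            + K * ((lam / 2) ^ a * m ^ (a / d)) * N := add_le_add hIH hone
        _ = (C + K) * (lam / 2) ^ a * m ^ (a / d) * N := by ring
        _ ≤ C * lam ^ a * m ^ (a / d) * N := by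
            refine mul_le_mul_of_nonneg_right (mul_le_mul_of_nonneg_right ?_ (by positivity)) hN
            have hdiv : (lam / 2) ^ a = lam ^ a / 2 ^ a :=
              Real.div_rpow hlam0.le (by norm_num : (0:ℝ) ≤ 2) a
            have hkey : C + K ≤ C * 2 ^ a := by
              have hCt : C * (2 ^ a - 1) = K * (2 ^ a - 1) + K := by
                rw [hCdef]; field_simp
              nlinarith [mul_nonneg hK.le ht.le]
            rw [hdiv]
            calc (C + K) * (lam ^ a / 2 ^ a) ≤ (C * 2 ^ a) * (lam ^ a / 2 ^ a) := by
                  have : (0:ℝ) ≤ lam ^ a / 2 ^ a := by positivity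
                  exact mul_le_mul_of_nonneg_right hkey this
              _ = C * lam ^ a := by field_simp

/-- Let `d ≥ 1`, `a ∈ (0,1]`, `p ∈ [1,∞)`. There is `C = C(d,a,p)` such that if
`f ∈ L^p_loc(ℝ^d)` has `Lip_p(a)` seminorm at most `N`, then for every ball `B` and every
`λ ≥ 1`, `|av_B f − av_{λB} f| ≤ C · λ^a · |B|^{a/d} · N`. -/
theorem stmt9 (d : ℕ) (hd : 1 ≤ d) (a : ℝ) (ha : a ∈ Set.Ioc (0 : ℝ) 1)
    (p : ℝ) (hp : 1 ≤ p) :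
    ∃ C : ℝ, 0 < C ∧
      ∀ (f : EuclideanSpace ℝ (Fin d) → ℝ) (N : ℝ), 0 ≤ N →
        (∀ (x : EuclideanSpace ℝ (Fin d)) (r : ℝ), 0 < r →
          MemLp f (ENNReal.ofReal p) (volume.restrict (ball x r))) →
        (∀ (x : EuclideanSpace ℝ (Fin d)) (r : ℝ), 0 < r →
          ((volume (ball x r)).toReal ^ (-(1 + a * p / d)) *
            ∫ y in ball x r, |f y - ⨍ z in ball x r, f z| ^ p) ^ (1 / p) ≤ N) →
        ∀ (x : EuclideanSpace ℝ (Fin d)) (r : ℝ), 0 < r → ∀ lam : ℝ, 1 ≤ lam →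
          |(⨍ y in ball x r, f y) - ⨍ y in ball x (lam * r), f y|
            ≤ C * lam ^ a * (volume (ball x r)).toReal ^ (a / d) * N := by
  obtain ⟨ha0, ha1⟩ := ha
  have h2a : (1:ℝ) < 2 ^ a := (Real.one_lt_rpow_iff_of_pos two_pos).2 (Or.inl ⟨one_lt_two, ha0⟩)
  refine ⟨2 ^ (d + 1) * (1 + 1 / (2 ^ a - 1)), ?_, ?_⟩
  · have : (0:ℝ) < 1 / (2 ^ a - 1) := one_div_pos.2 (by linarith)
    positivity
  · intro f N hN hmem hlip x r hr lam hlam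
    obtain ⟨n, hn⟩ := pow_unbounded_of_one_lt lam (one_lt_two (α := ℝ))
    exact steps d hd a p ha0 ha1 hp f N hN hmem hlip n lam hlam hn.le x r hr
end

section
/- Let d ≥ 1 and let φ : ℝ^d → ℝ^d be a bi-Lipschitz homeomorphism preserving Lebesgue measure, with Lipschitz constant L (i.e. |φ(x) − φ(y)| ≤ L|x − y| for all x, y, and L is the least such constant). Then the inverse map φ⁻¹ is Lipschitz with constant at most L^{d−1}; that is, |x − y| ≤ L^{d−1} |φ(x) − φ(y)| for all x, y ∈ ℝ^d. -/
open Metric MeasureTheory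
open scoped RealInnerProductSpace ENNReal Pointwise


lemma linAux {d : ℕ} (hd : 1 ≤ d) (L : ℝ) (hL0 : 0 < L)
    (A B : EuclideanSpace ℝ (Fin d) →L[ℝ] EuclideanSpace ℝ (Fin d))
    (hBA : ∀ z, B (A z) = z)
    (hAnorm : ∀ z, ‖A z‖ ≤ L * ‖z‖)
    (hdet : |LinearMap.det (A : EuclideanSpace ℝ (Fin d) →ₗ[ℝ] EuclideanSpace ℝ (Fin d))| = 1) :
    ∀ z, ‖z‖ ≤ L ^ (d - 1) * ‖A z‖ := by
  set E := EuclideanSpace ℝ (Fin d)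
  set aA : E →ₗ[ℝ] E := (A : E →ₗ[ℝ] E) with haA
  set T : E →ₗ[ℝ] E := LinearMap.adjoint aA * aA with hTdef
  have hT : T.IsSymmetric := LinearMap.isSymmetric_adjoint_mul_self aA
  have hn : Module.finrank ℝ E = d := finrank_euclideanSpace_fin
  set b := hT.eigenvectorBasis hn with hb
  set μ := hT.eigenvalues hn with hμ
  -- inner products
  have hinner : ∀ z : E, ⟪T z, z⟫ = ‖A z‖ ^ 2 := by
    intro z
    rw [hTdef, Module.End.mul_apply, LinearMap.adjoint_inner_left]
    have h : aA z = A z := rfl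
    rw [h, real_inner_self_eq_norm_sq]
  have hμval : ∀ i, μ i = ‖A (b i)‖ ^ 2 := by
    intro i
    have h1 : T (b i) = (μ i : ℝ) • b i := hT.apply_eigenvectorBasis hn i
    have h2 : ⟪T (b i), b i⟫ = μ i := by
      rw [h1, real_inner_smul_left, real_inner_self_eq_norm_sq, b.orthonormal.1 i, one_pow,
        mul_one]
    rw [← h2, hinner]
  have hμle : ∀ i, μ i ≤ L ^ 2 := by
    intro i
    rw [hμval i]
    have := hAnorm (b i)
    rw [b.orthonormal.1 i, mul_one] at this
    have h0 : (0:ℝ) ≤ ‖A (b i)‖ := norm_nonneg _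
    nlinarith
  have hμpos : ∀ i, 0 < μ i := by
    intro i
    rw [hμval i]
    have hne : A (b i) ≠ 0 := by
      intro h
      have := hBA (b i)
      rw [h, map_zero] at this
      exact b.toBasis.ne_zero i (by simp [this])
    exact pow_pos (norm_pos_iff.mpr hne) 2
  -- determinant of T
  have hmat : LinearMap.toMatrix b.toBasis b.toBasis T = Matrix.diagonal μ := by
    ext i j
    rw [LinearMap.toMatrix_apply, OrthonormalBasis.coe_toBasis_repr_apply,
      OrthonormalBasis.coe_toBasis, hT.apply_eigenvectorBasis]
    rcases eq_or_ne i j with h | h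
    · subst h
      simp [hb, hμ, OrthonormalBasis.repr_self, EuclideanSpace.single_apply]
    · simp [hb, OrthonormalBasis.repr_self, EuclideanSpace.single_apply, Ne.symm h,
        Matrix.diagonal_apply_ne _ h]
  have hdetT : LinearMap.det T = ∏ i, μ i := by
    rw [← LinearMap.det_toMatrix b.toBasis, hmat, Matrix.det_diagonal]
  have hdetadj : LinearMap.det (LinearMap.adjoint aA) = LinearMap.det aA := by
    rw [← LinearMap.det_toMatrix b.toBasis, ← LinearMap.det_toMatrix b.toBasis aA,
      LinearMap.toMatrix_adjoint, Matrix.det_conjTranspose, star_trivial]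
  have hprod : ∏ i, μ i = 1 := by
    have hTm : (∏ i, μ i) = LinearMap.det aA * LinearMap.det aA := by
      rw [← hdetT, hTdef, map_mul, hdetadj]
    rw [hTm, ← sq, ← sq_abs, hdet, one_pow]
  -- each eigenvalue is at least L^(2-2d)
  have hkey : ∀ i, 1 ≤ (L ^ (d-1)) ^ 2 * μ i := by
    intro i
    have hsplit : μ i * ∏ j ∈ Finset.univ.erase i, μ j = 1 := by
      rw [Finset.mul_prod_erase Finset.univ μ (Finset.mem_univ i), hprod]
    have hP : ∏ j ∈ Finset.univ.erase i, μ j ≤ (L ^ 2) ^ (d - 1) := by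
      have := Finset.prod_le_prod (s := Finset.univ.erase i) (f := μ) (g := fun _ => L ^ 2)
        (fun j _ => (hμpos j).le) (fun j _ => hμle j)
      rwa [Finset.prod_const, Finset.card_erase_of_mem (Finset.mem_univ i),
        Finset.card_univ, Fintype.card_fin] at this
    have h2 : (L ^ 2) ^ (d - 1) = (L ^ (d - 1)) ^ 2 := by
      rw [← pow_mul, ← pow_mul, Nat.mul_comm]
    calc (1:ℝ) = μ i * ∏ j ∈ Finset.univ.erase i, μ j := hsplit.symm
      _ ≤ μ i * (L ^ (d-1)) ^ 2 := by
          rw [← h2]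
          exact mul_le_mul_of_nonneg_left hP (hμpos i).le
      _ = (L ^ (d-1)) ^ 2 * μ i := mul_comm _ _
  -- Parseval
  intro z
  have hAz : ‖z‖ ^ 2 ≤ (L ^ (d-1)) ^ 2 * ‖A z‖ ^ 2 := by
    have hTz : ⟪T z, z⟫ = ∑ i, μ i * (b.repr z i) ^ 2 := by
      rw [← b.repr.inner_map_map (T z) z]
      simp only [PiLp.inner_apply, RCLike.inner_apply, starRingEnd_apply, star_trivial]
      refine Finset.sum_congr rfl fun i _ => ?_
      rw [hT.eigenvectorBasis_apply_self_apply hn z i]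
      simp only [RCLike.ofReal_real_eq_id, id]
      ring
    have hnz : ‖z‖ ^ 2 = ∑ i, (b.repr z i) ^ 2 := by
      rw [← real_inner_self_eq_norm_sq, ← b.repr.inner_map_map z z]
      simp only [PiLp.inner_apply, RCLike.inner_apply, starRingEnd_apply, star_trivial]
      exact Finset.sum_congr rfl fun i _ => (sq (b.repr z i)).symm
    calc ‖z‖ ^ 2 = ∑ i, (b.repr z i) ^ 2 := hnz
      _ ≤ ∑ i, (L ^ (d-1)) ^ 2 * (μ i * (b.repr z i) ^ 2) := by
          refine Finset.sum_le_sum fun i _ => ?_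
          have h1 := hkey i
          have h2 : (0:ℝ) ≤ (b.repr z i) ^ 2 := sq_nonneg _
          nlinarith
      _ = (L ^ (d-1)) ^ 2 * ∑ i, μ i * (b.repr z i) ^ 2 := by rw [Finset.mul_sum]
      _ = (L ^ (d-1)) ^ 2 * ‖A z‖ ^ 2 := by rw [← hTz, hinner]
  have hLp : (0:ℝ) ≤ L ^ (d-1) := by positivity
  have := Real.sqrt_le_sqrt hAz
  rwa [Real.sqrt_sq (norm_nonneg z), ← mul_pow, Real.sqrt_sq (by positivity)] at this


lemma buAux {d : ℕ} (hd : 1 ≤ d) (ψ : EuclideanSpace ℝ (Fin d) → EuclideanSpace ℝ (Fin d))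
    (x : EuclideanSpace ℝ (Fin d)) (A B : EuclideanSpace ℝ (Fin d) →L[ℝ] EuclideanSpace ℝ (Fin d))
    (hA : HasFDerivAt ψ A x) (hAB : ∀ z, A (B z) = z)
    (hvol : ∀ r : ℝ, 0 < r → volume (ψ '' Metric.ball x r) = volume (Metric.ball x r)) :
    1 ≤ |LinearMap.det (A : EuclideanSpace ℝ (Fin d) →ₗ[ℝ] EuclideanSpace ℝ (Fin d))| := by
  haveI : Nonempty (Fin d) := ⟨⟨0, hd⟩⟩
  haveI : Nontrivial (EuclideanSpace ℝ (Fin d)) := inferInstance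
  set D : ℝ := |LinearMap.det (A : EuclideanSpace ℝ (Fin d) →ₗ[ℝ] EuclideanSpace ℝ (Fin d))|
    with hD
  have hfin : Module.finrank ℝ (EuclideanSpace ℝ (Fin d)) = d := finrank_euclideanSpace_fin
  have key : ∀ ε : ℝ, 0 < ε → 1 ≤ D * (1 + ε * ‖B‖) ^ d := by
    intro ε hε
    have hlo := hA.isLittleO.def hε
    rw [Metric.eventually_nhds_iff] at hlo
    obtain ⟨r, hr, hball⟩ := hlo
    have h1ε : (0:ℝ) < 1 + ε * ‖B‖ := by positivity
    have hRpos : 0 < r * (1 + ε * ‖B‖) := by positivity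
    have hincl : ψ '' Metric.ball x r ⊆
        (fun z => ψ x + A z) '' Metric.ball 0 (r * (1 + ε * ‖B‖)) := by
      rintro _ ⟨w, hw, rfl⟩
      rw [mem_ball_iff_norm] at hw
      have hest : ‖ψ w - ψ x - A (w - x)‖ ≤ ε * ‖w - x‖ := by
        apply hball
        rw [dist_eq_norm]; exact hw
      refine ⟨(w - x) + B (ψ w - ψ x - A (w - x)), ?_, ?_⟩
      · rw [mem_ball_iff_norm, sub_zero]
        calc ‖(w - x) + B (ψ w - ψ x - A (w - x))‖
            ≤ ‖w - x‖ + ‖B (ψ w - ψ x - A (w - x))‖ := norm_add_le _ _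
          _ ≤ ‖w - x‖ + ‖B‖ * ‖ψ w - ψ x - A (w - x)‖ := by gcongr; exact B.le_opNorm _
          _ ≤ ‖w - x‖ + ‖B‖ * (ε * ‖w - x‖) := by gcongr
          _ = ‖w - x‖ * (1 + ε * ‖B‖) := by ring
          _ < r * (1 + ε * ‖B‖) := mul_lt_mul_of_pos_right hw h1ε
      · show ψ x + A ((w - x) + B (ψ w - ψ x - A (w - x))) = ψ w
        rw [map_add, hAB]
        abel
    have hmeas : volume (Metric.ball x r) ≤
        ENNReal.ofReal D * volume (Metric.ball (0 : EuclideanSpace ℝ (Fin d)) (r * (1 + ε * ‖B‖))) := by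
      calc volume (Metric.ball x r) = volume (ψ '' Metric.ball x r) := (hvol r hr).symm
        _ ≤ volume ((fun z => ψ x + A z) '' Metric.ball 0 (r * (1 + ε * ‖B‖))) :=
            measure_mono hincl
        _ = volume ((ψ x) +ᵥ (A '' Metric.ball 0 (r * (1 + ε * ‖B‖)))) := by
            rw [← Set.image_vadd, Set.image_image]
            simp [vadd_eq_add]
        _ = volume (A '' Metric.ball (0 : EuclideanSpace ℝ (Fin d)) (r * (1 + ε * ‖B‖))) :=
            measure_vadd _ _ _
        _ = ENNReal.ofReal D * volume (Metric.ball (0 : EuclideanSpace ℝ (Fin d)) (r * (1 + ε * ‖B‖))) := by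
            rw [Measure.addHaar_image_continuousLinearMap]
    rw [Measure.addHaar_ball _ _ hr.le, Measure.addHaar_ball _ _ hRpos.le, hfin, ← mul_assoc]
      at hmeas
    have hc0 : volume (Metric.ball (0 : EuclideanSpace ℝ (Fin d)) 1) ≠ 0 :=
      (measure_ball_pos _ _ one_pos).ne'
    have hct : volume (Metric.ball (0 : EuclideanSpace ℝ (Fin d)) 1) ≠ ⊤ := measure_ball_lt_top.ne
    have hmeas2 : ENNReal.ofReal (r ^ d) ≤
        ENNReal.ofReal D * ENNReal.ofReal ((r * (1 + ε * ‖B‖)) ^ d) :=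
      (ENNReal.mul_le_mul_iff_left hc0 hct).mp hmeas
    rw [← ENNReal.ofReal_mul (abs_nonneg _)] at hmeas2
    have hreal : r ^ d ≤ D * (r * (1 + ε * ‖B‖)) ^ d := by
      have h2 := ENNReal.toReal_mono ENNReal.ofReal_ne_top hmeas2
      rwa [ENNReal.toReal_ofReal (by positivity), ENNReal.toReal_ofReal (by positivity)] at h2
    rw [mul_pow, ← mul_assoc] at hreal
    have hrd : (0:ℝ) < r ^ d := by positivity
    calc (1:ℝ) = r ^ d / r ^ d := (div_self hrd.ne').symm
      _ ≤ (D * r ^ d * (1 + ε * ‖B‖) ^ d) / r ^ d := by gcongr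
      _ = D * (1 + ε * ‖B‖) ^ d := by field_simp
  have htend : Filter.Tendsto (fun ε : ℝ => D * (1 + ε * ‖B‖) ^ d) (nhdsWithin 0 (Set.Ioi 0))
      (nhds (D * (1 + 0 * ‖B‖) ^ d)) := by
    apply Filter.Tendsto.mono_left _ nhdsWithin_le_nhds
    exact (Continuous.tendsto (by continuity) 0)
  rw [show D * (1 + 0 * ‖B‖) ^ d = D by ring_nf] at htend
  exact ge_of_tendsto htend (eventually_nhdsWithin_of_forall fun ε hε => key ε hε)


lemma oneDimAux (f : ℝ → ℝ) (K : NNReal) (hf : LipschitzWith K f) (c : ℝ) (hc : 0 ≤ c)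
    (hae : ∀ᵐ t : ℝ, t ∈ Set.Icc (0:ℝ) 1 → ∃ f', HasDerivAt f f' t ∧ |f'| ≤ c) :
    f 1 - f 0 ≤ c := by
  classical
  set D : Set ℝ := {t | DifferentiableAt ℝ f t ∧ |deriv f t| ≤ c} with hDdef
  have hDmeas : MeasurableSet D := by
    apply MeasurableSet.inter
    · exact measurableSet_of_differentiableAt ℝ f
    · exact measurableSet_le (measurable_deriv f).abs measurable_const
  have hnull : volume (Set.Icc (0:ℝ) 1 \ D) = 0 := by
    rw [MeasureTheory.ae_iff] at hae
    refine measure_mono_null ?_ hae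
    rintro t ⟨ht1, ht2⟩
    simp only [Set.mem_setOf_eq, not_forall]
    refine ⟨ht1, ?_⟩
    rintro ⟨f', hf', hf'c⟩
    exact ht2 ⟨hf'.differentiableAt, by rwa [hf'.deriv]⟩
  set s : Set ℝ := Set.Icc (0:ℝ) 1 ∩ D with hsdef
  have hsmeas : MeasurableSet s := measurableSet_Icc.inter hDmeas
  -- image of the good part
  have himg1 : volume (f '' s) ≤ ENNReal.ofReal c := by
    have hder : ∀ t ∈ s, HasFDerivWithinAt f
        (ContinuousLinearMap.smulRight (1 : ℝ →L[ℝ] ℝ) (deriv f t)) s t := by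
      intro t ht
      exact (ht.2.1.hasDerivAt.hasFDerivAt).hasFDerivWithinAt
    calc volume (f '' s)
        ≤ ∫⁻ t in s, ENNReal.ofReal
            |(ContinuousLinearMap.smulRight (1 : ℝ →L[ℝ] ℝ) (deriv f t)).det| ∂volume :=
          MeasureTheory.addHaar_image_le_lintegral_abs_det_fderiv volume hsmeas hder
      _ ≤ ∫⁻ _ in s, ENNReal.ofReal c ∂volume := by
          apply MeasureTheory.setLIntegral_mono measurable_const
          intro t ht
          rw [ContinuousLinearMap.smulRight_one_eq_toSpanSingleton, ContinuousLinearMap.det_toSpanSingleton]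
          exact ENNReal.ofReal_le_ofReal ht.2.2
      _ = ENNReal.ofReal c * volume s := by
          rw [MeasureTheory.setLIntegral_const]
      _ ≤ ENNReal.ofReal c * 1 := by
          gcongr
          calc volume s ≤ volume (Set.Icc (0:ℝ) 1) := measure_mono Set.inter_subset_left
            _ = 1 := by rw [Real.volume_Icc]; norm_num
      _ = ENNReal.ofReal c := mul_one _
  -- image of the null part
  have himg2 : volume (f '' (Set.Icc (0:ℝ) 1 \ D)) = 0 := by
    have h1 := hf.hausdorffMeasure_image_le (zero_le_one) (Set.Icc (0:ℝ) 1 \ D)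
    rw [hausdorffMeasure_real, hnull, mul_zero] at h1
    exact le_antisymm h1 (zero_le)
  -- image of the whole interval controls |f 1 - f 0|
  have himg3 : ENNReal.ofReal |f 1 - f 0| ≤ volume (f '' Set.Icc (0:ℝ) 1) := by
    rcases le_total (f 0) (f 1) with h | h
    · have hsub : Set.Icc (f 0) (f 1) ⊆ f '' Set.Icc (0:ℝ) 1 :=
        intermediate_value_Icc zero_le_one hf.continuous.continuousOn
      calc ENNReal.ofReal |f 1 - f 0| = volume (Set.Icc (f 0) (f 1)) := by
            rw [Real.volume_Icc, abs_of_nonneg (by linarith)]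
        _ ≤ volume (f '' Set.Icc (0:ℝ) 1) := measure_mono hsub
    · have hsub : Set.Icc (f 1) (f 0) ⊆ f '' Set.Icc (0:ℝ) 1 :=
        intermediate_value_Icc' zero_le_one hf.continuous.continuousOn
      calc ENNReal.ofReal |f 1 - f 0| = volume (Set.Icc (f 1) (f 0)) := by
            rw [Real.volume_Icc, abs_of_nonpos (by linarith), neg_sub]
        _ ≤ volume (f '' Set.Icc (0:ℝ) 1) := measure_mono hsub
  have hcover : f '' Set.Icc (0:ℝ) 1 ⊆ f '' s ∪ f '' (Set.Icc (0:ℝ) 1 \ D) := by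
    rw [← Set.image_union]
    apply Set.image_mono
    intro t ht
    by_cases h : t ∈ D
    · exact Or.inl ⟨ht, h⟩
    · exact Or.inr ⟨ht, h⟩
  have hfinal : ENNReal.ofReal |f 1 - f 0| ≤ ENNReal.ofReal c := by
    calc ENNReal.ofReal |f 1 - f 0| ≤ volume (f '' Set.Icc (0:ℝ) 1) := himg3
      _ ≤ volume (f '' s ∪ f '' (Set.Icc (0:ℝ) 1 \ D)) := measure_mono hcover
      _ ≤ volume (f '' s) + volume (f '' (Set.Icc (0:ℝ) 1 \ D)) := measure_union_le _ _
      _ ≤ ENNReal.ofReal c + 0 := by rw [himg2]; gcongr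
      _ = ENNReal.ofReal c := add_zero _
  have habs : |f 1 - f 0| ≤ c := (ENNReal.ofReal_le_ofReal_iff hc).mp hfinal
  exact (le_abs_self _).trans habs


lemma globAux {d : ℕ} (g : EuclideanSpace ℝ (Fin d) → EuclideanSpace ℝ (Fin d)) (K : NNReal)
    (hg : LipschitzWith K g) (M : ℝ) (hM : 0 ≤ M)
    (hae : ∀ᵐ p : EuclideanSpace ℝ (Fin d),
      DifferentiableAt ℝ g p ∧ ∀ w, ‖fderiv ℝ g p w‖ ≤ M * ‖w‖) :
    ∀ u v, dist (g u) (g v) ≤ M * dist u v := by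
  classical
  intro u v
  rcases eq_or_ne u v with rfl | huv
  · simp
  obtain ⟨N, hNsub, hNmeas, hNnull⟩ := exists_measurable_superset_of_null (ae_iff.mp hae)
  -- the affine parametrization of translated segments
  set c : ℝ → EuclideanSpace ℝ (Fin d) := fun t => u + t • (v - u) with hc
  have hccont : Continuous c := by
    apply Continuous.add continuous_const
    exact continuous_id.smul continuous_const
  -- Tonelli: almost every translate of the segment meets N in a null set
  have hslice : ∀ᵐ z : EuclideanSpace ℝ (Fin d),
      volume ((fun t : ℝ => c t + z) ⁻¹' N ∩ Set.Icc (0:ℝ) 1) = 0 := by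
    set F : ℝ × EuclideanSpace ℝ (Fin d) → ℝ≥0∞ :=
      fun q => N.indicator (fun _ => 1) (c q.1 + q.2) with hF
    have hFmeas : Measurable F := by
      apply Measurable.indicator measurable_const hNmeas |>.comp
      exact ((hccont.comp continuous_fst).add continuous_snd).measurable
    have hinner : ∀ t : ℝ, ∫⁻ z, F (t, z) ∂volume = 0 := by
      intro t
      have hmp : MeasurePreserving (fun z : EuclideanSpace ℝ (Fin d) => c t + z)
          volume volume := measurePreserving_add_left volume (c t)
      calc ∫⁻ z, F (t, z) ∂volume
          = ∫⁻ y, N.indicator (fun _ => 1) y ∂volume :=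
            hmp.lintegral_comp (Measurable.indicator measurable_const hNmeas)
        _ = volume N := lintegral_indicator_one hNmeas
        _ = 0 := hNnull
    have hswap : ∫⁻ z, (∫⁻ t in Set.Icc (0:ℝ) 1, F (t, z) ∂volume) ∂volume = 0 := by
      have hswapmeas : AEMeasurable
          (Function.uncurry fun (z : EuclideanSpace ℝ (Fin d)) (t : ℝ) => F (t, z))
          (volume.prod (volume.restrict (Set.Icc (0:ℝ) 1))) :=
        (hFmeas.comp measurable_swap).aemeasurable
      rw [lintegral_lintegral_swap hswapmeas]
      calc ∫⁻ t in Set.Icc (0:ℝ) 1, (∫⁻ z, F (t, z) ∂volume) ∂volume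
          = ∫⁻ t in Set.Icc (0:ℝ) 1, 0 ∂volume := by
            apply lintegral_congr
            intro t
            exact hinner t
        _ = 0 := lintegral_zero
    have hz0 := (lintegral_eq_zero_iff (Measurable.lintegral_prod_left' hFmeas)).mp hswap
    filter_upwards [hz0] with z hz
    simp only [Pi.zero_apply] at hz
    have hpre : MeasurableSet ((fun t : ℝ => c t + z) ⁻¹' N) :=
      hNmeas.preimage (hccont.add continuous_const).measurable
    have : (∫⁻ t in Set.Icc (0:ℝ) 1, F (t, z) ∂volume)
        = volume ((fun t : ℝ => c t + z) ⁻¹' N ∩ Set.Icc (0:ℝ) 1) := by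
      have heq : ∀ t : ℝ, F (t, z) =
          Set.indicator ((fun t : ℝ => c t + z) ⁻¹' N) (fun _ => (1:ℝ≥0∞)) t := by
        intro t
        show N.indicator (fun _ => (1:ℝ≥0∞)) (c t + z) = _
        by_cases h : c t + z ∈ N
        · rw [Set.indicator_of_mem h, Set.indicator_of_mem (by exact h)]
        · rw [Set.indicator_of_notMem h, Set.indicator_of_notMem (by exact h)]
      calc (∫⁻ t in Set.Icc (0:ℝ) 1, F (t, z) ∂volume)
          = ∫⁻ t in Set.Icc (0:ℝ) 1,
              Set.indicator ((fun t : ℝ => c t + z) ⁻¹' N) (fun _ => (1:ℝ≥0∞)) t ∂volume := by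
            apply lintegral_congr
            intro t
            exact heq t
        _ = volume ((fun t : ℝ => c t + z) ⁻¹' N ∩ Set.Icc (0:ℝ) 1) := by
            rw [lintegral_indicator hpre, setLIntegral_one, Measure.restrict_apply hpre]
    rw [this] at hz
    exact hz
  -- the key a.e. statement
  have hkey : ∀ᵐ z : EuclideanSpace ℝ (Fin d),
      dist (g (u + z)) (g (v + z)) ≤ M * dist u v := by
    filter_upwards [hslice] with z hz
    set w : EuclideanSpace ℝ (Fin d) := g (v + z) - g (u + z) with hw
    rcases eq_or_ne w 0 with hw0 | hw0
    · have : g (v + z) = g (u + z) := by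
        have := sub_eq_zero.mp hw0
        exact this
      rw [dist_eq_norm, ← this]
      simp only [sub_self, norm_zero]
      positivity
    set f : ℝ → ℝ := fun t => ⟪w, g (c t + z)⟫ with hf
    have hline : LipschitzWith ‖v - u‖₊ (fun t : ℝ => c t + z) := by
      apply LipschitzWith.of_dist_le_mul
      intro s t
      have hsub : (c s + z) - (c t + z) = (s - t) • (v - u) := by
        rw [hc]
        simp only []
        rw [sub_smul]
        abel
      rw [dist_eq_norm, hsub, norm_smul, Real.dist_eq, coe_nnnorm]
      rw [Real.norm_eq_abs, mul_comm]
    have hflip : LipschitzWith (‖innerSL ℝ w‖₊ * (K * ‖v - u‖₊)) f :=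
      (innerSL ℝ w).lipschitz.comp (hg.comp hline)
    have haef : ∀ᵐ t : ℝ, t ∈ Set.Icc (0:ℝ) 1 →
        ∃ f', HasDerivAt f f' t ∧ |f'| ≤ ‖w‖ * (M * dist u v) := by
      have hae_nmem : ∀ᵐ t : ℝ, t ∉ ((fun t : ℝ => c t + z) ⁻¹' N ∩ Set.Icc (0:ℝ) 1) :=
        (measure_eq_zero_iff_ae_notMem).mp hz
      filter_upwards [hae_nmem] with t ht htIcc
      have hptN : c t + z ∉ N := by
        intro hmem
        exact ht ⟨hmem, htIcc⟩
      have hpt : DifferentiableAt ℝ g (c t + z) ∧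
          ∀ w', ‖fderiv ℝ g (c t + z) w'‖ ≤ M * ‖w'‖ := by
        by_contra hcon
        exact hptN (hNsub hcon)
      have hd1 : HasDerivAt (fun t : ℝ => c t + z) (v - u) t := by
        have h1 : HasDerivAt (fun t : ℝ => t • (v - u)) ((1:ℝ) • (v - u)) t :=
          (hasDerivAt_id t).smul_const (v - u)
        rw [one_smul] at h1
        simpa [hc] using (h1.const_add u).add_const z
      have hgd : HasFDerivAt g (fderiv ℝ g (c t + z)) (c t + z) := hpt.1.hasFDerivAt
      have hcomp : HasDerivAt (fun t : ℝ => g (c t + z)) (fderiv ℝ g (c t + z) (v - u)) t :=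
        hgd.comp_hasDerivAt t hd1
      have hfd : HasDerivAt f (⟪w, fderiv ℝ g (c t + z) (v - u)⟫) t :=
        (innerSL ℝ w).hasFDerivAt.comp_hasDerivAt t hcomp
      refine ⟨_, hfd, ?_⟩
      calc |⟪w, fderiv ℝ g (c t + z) (v - u)⟫|
          ≤ ‖w‖ * ‖fderiv ℝ g (c t + z) (v - u)‖ := abs_real_inner_le_norm _ _
        _ ≤ ‖w‖ * (M * ‖v - u‖) := by
            gcongr
            exact hpt.2 (v - u)
        _ = ‖w‖ * (M * dist u v) := by rw [dist_eq_norm']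
    have h10 := oneDimAux f _ hflip (‖w‖ * (M * dist u v)) (by positivity) haef
    have harg1 : u + (1:ℝ) • (v - u) + z = v + z := by rw [one_smul]; abel
    have harg0 : u + (0:ℝ) • (v - u) + z = u + z := by rw [zero_smul, add_zero]
    have hf1 : f 1 = ⟪w, g (v + z)⟫ := by
      show ⟪w, g (u + (1:ℝ) • (v - u) + z)⟫ = _
      rw [harg1]
    have hf0 : f 0 = ⟪w, g (u + z)⟫ := by
      show ⟪w, g (u + (0:ℝ) • (v - u) + z)⟫ = _
      rw [harg0]
    rw [hf1, hf0, ← inner_sub_right, ← hw, real_inner_self_eq_norm_sq] at h10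
    have hwpos : 0 < ‖w‖ := norm_pos_iff.mpr hw0
    have hwle : ‖w‖ ≤ M * dist u v := by
      have := h10
      rw [sq] at this
      nlinarith
    rw [dist_eq_norm, norm_sub_rev]
    exact hwle
  -- conclude by density and continuity
  have hdense : Dense {z : EuclideanSpace ℝ (Fin d) |
      dist (g (u + z)) (g (v + z)) ≤ M * dist u v} := Measure.dense_of_ae hkey
  have hclosed : IsClosed {z : EuclideanSpace ℝ (Fin d) |
      dist (g (u + z)) (g (v + z)) ≤ M * dist u v} := by
    apply isClosed_le _ continuous_const
    exact Continuous.dist (hg.continuous.comp (continuous_const.add continuous_id))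
      (hg.continuous.comp (continuous_const.add continuous_id))
  have huniv : {z : EuclideanSpace ℝ (Fin d) |
      dist (g (u + z)) (g (v + z)) ≤ M * dist u v} = Set.univ := by
    rw [← hclosed.closure_eq]
    exact hdense.closure_eq
  have h0 : (0 : EuclideanSpace ℝ (Fin d)) ∈ {z : EuclideanSpace ℝ (Fin d) |
      dist (g (u + z)) (g (v + z)) ≤ M * dist u v} := by
    rw [huniv]; trivial
  simpa using h0
/-- Let `d ≥ 1` and `φ : ℝ^d → ℝ^d` a bi-Lipschitz homeomorphism preserving Lebesgue measure,
with (least) Lipschitz constant `L`. Then `φ⁻¹` is Lipschitz with constant at most `L^{d−1}`: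
`|x − y| ≤ L^{d−1} |φ(x) − φ(y)|` for all `x, y`. -/
theorem stmt12 (d : ℕ) (hd : 1 ≤ d)
    (φ : EuclideanSpace ℝ (Fin d) → EuclideanSpace ℝ (Fin d))
    (hbij : Function.Bijective φ)
    (hlipinv : ∃ A : NNReal, LipschitzWith A (Function.invFun φ))
    (hmp : MeasurePreserving φ volume volume)
    (L : ℝ)
    (hL : ∀ x y, dist (φ x) (φ y) ≤ L * dist x y)
    (hLleast : ∀ L' : ℝ, (∀ x y, dist (φ x) (φ y) ≤ L' * dist x y) → L ≤ L') :
    ∀ x y : EuclideanSpace ℝ (Fin d), dist x y ≤ L ^ (d - 1) * dist (φ x) (φ y) := by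
  classical
  obtain ⟨A₀, hgl⟩ := hlipinv
  set g : EuclideanSpace ℝ (Fin d) → EuclideanSpace ℝ (Fin d) := Function.invFun φ with hgdef
  have hgφ : Function.LeftInverse g φ := Function.leftInverse_invFun hbij.1
  have hφg : Function.RightInverse g φ := Function.rightInverse_invFun hbij.2
  -- positivity of L
  haveI : Nonempty (Fin d) := ⟨⟨0, hd⟩⟩
  have hL0 : 0 < L := by
    set a : EuclideanSpace ℝ (Fin d) := EuclideanSpace.single ⟨0, hd⟩ (1:ℝ) with ha
    have hane : a ≠ 0 := by
      intro h
      have h2 : a ⟨0, hd⟩ = 0 := by rw [h]; rfl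
      rw [ha, EuclideanSpace.single_apply] at h2
      simp at h2
    have hne : φ a ≠ φ 0 := fun h => hane (hbij.1 h)
    have h1 : 0 < dist (φ a) (φ 0) := dist_pos.mpr hne
    have h2 := hL a 0
    have h3 : 0 < dist a 0 := dist_pos.mpr hane
    nlinarith
  have hφl : LipschitzWith L.toNNReal φ := by
    apply LipschitzWith.of_dist_le_mul
    intro x y
    rw [Real.coe_toNNReal L hL0.le]
    exact hL x y
  have hgc : Continuous g := hgl.continuous
  have hφc : Continuous φ := hφl.continuous
  -- g is measure preserving
  let e : EuclideanSpace ℝ (Fin d) ≃ₜ EuclideanSpace ℝ (Fin d) :=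
    { toFun := φ
      invFun := g
      left_inv := hgφ
      right_inv := hφg
      continuous_toFun := hφc
      continuous_invFun := hgc }
  have hgmp : MeasurePreserving g volume volume := by
    have h1 : MeasurePreserving e.toMeasurableEquiv volume volume := hmp
    have h2 := h1.symm e.toMeasurableEquiv
    exact h2
  have M : ℝ := L ^ (d - 1)
  have hM : (0:ℝ) ≤ L ^ (d - 1) := by positivity
  -- a.e. differentiability statements
  have hgdiff : ∀ᵐ p : EuclideanSpace ℝ (Fin d), DifferentiableAt ℝ g p :=
    hgl.ae_differentiableAt
  have hφdiff : ∀ᵐ x : EuclideanSpace ℝ (Fin d), DifferentiableAt ℝ φ x :=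
    hφl.ae_differentiableAt
  have hφdiffg : ∀ᵐ p : EuclideanSpace ℝ (Fin d), DifferentiableAt ℝ φ (g p) :=
    hgmp.quasiMeasurePreserving.ae hφdiff
  -- the key a.e. derivative bound
  have hae : ∀ᵐ p : EuclideanSpace ℝ (Fin d),
      DifferentiableAt ℝ g p ∧ ∀ w, ‖fderiv ℝ g p w‖ ≤ L ^ (d - 1) * ‖w‖ := by
    filter_upwards [hgdiff, hφdiffg] with p h1 h2
    refine ⟨h1, ?_⟩
    set B : EuclideanSpace ℝ (Fin d) →L[ℝ] EuclideanSpace ℝ (Fin d) := fderiv ℝ g p with hB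
    set A : EuclideanSpace ℝ (Fin d) →L[ℝ] EuclideanSpace ℝ (Fin d) := fderiv ℝ φ (g p) with hA
    have hBd : HasFDerivAt g B p := h1.hasFDerivAt
    have hAd : HasFDerivAt φ A (g p) := h2.hasFDerivAt
    have hφgp : φ (g p) = p := hφg p
    -- chain rule both ways
    have hABid : A.comp B = ContinuousLinearMap.id ℝ (EuclideanSpace ℝ (Fin d)) := by
      have hcomp : HasFDerivAt (φ ∘ g) (A.comp B) p := HasFDerivAt.comp p hAd hBd
      have : φ ∘ g = id := funext hφg
      rw [this] at hcomp
      exact hcomp.unique (hasFDerivAt_id p)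
    have hBAid : B.comp A = ContinuousLinearMap.id ℝ (EuclideanSpace ℝ (Fin d)) := by
      have hBd' : HasFDerivAt g B (φ (g p)) := by rw [hφgp]; exact hBd
      have hcomp : HasFDerivAt (g ∘ φ) (B.comp A) (g p) := HasFDerivAt.comp (g p) hBd' hAd
      have : g ∘ φ = id := funext hgφ
      rw [this] at hcomp
      exact hcomp.unique (hasFDerivAt_id (g p))
    have hAB : ∀ z, A (B z) = z := fun z => by
      have := congrArg (fun (T : _ →L[ℝ] _) => T z) hABid
      simpa using this
    have hBA : ∀ z, B (A z) = z := fun z => by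
      have := congrArg (fun (T : _ →L[ℝ] _) => T z) hBAid
      simpa using this
    -- determinants
    have hvolφ : ∀ r : ℝ, 0 < r → volume (φ '' Metric.ball (g p) r)
        = volume (Metric.ball (g p) r) := by
      intro r hr
      have himg : φ '' Metric.ball (g p) r = g ⁻¹' Metric.ball (g p) r := by
        ext q
        constructor
        · rintro ⟨s, hs, rfl⟩
          rwa [Set.mem_preimage, hgφ s]
        · intro hq
          exact ⟨g q, hq, hφg q⟩
      rw [himg, hgmp.measure_preimage measurableSet_ball.nullMeasurableSet]
    have hvolg : ∀ r : ℝ, 0 < r → volume (g '' Metric.ball p r)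
        = volume (Metric.ball p r) := by
      intro r hr
      have himg : g '' Metric.ball p r = φ ⁻¹' Metric.ball p r := by
        ext q
        constructor
        · rintro ⟨s, hs, rfl⟩
          rwa [Set.mem_preimage, hφg s]
        · intro hq
          exact ⟨φ q, hq, hgφ q⟩
      rw [himg, hmp.measure_preimage measurableSet_ball.nullMeasurableSet]
    have hdetA1 : 1 ≤ |LinearMap.det
        (A : EuclideanSpace ℝ (Fin d) →ₗ[ℝ] EuclideanSpace ℝ (Fin d))| :=
      buAux hd φ (g p) A B hAd hAB hvolφ
    have hdetB1 : 1 ≤ |LinearMap.det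
        (B : EuclideanSpace ℝ (Fin d) →ₗ[ℝ] EuclideanSpace ℝ (Fin d))| :=
      buAux hd g p B A hBd hBA hvolg
    have hdetmul : LinearMap.det (A : EuclideanSpace ℝ (Fin d) →ₗ[ℝ] EuclideanSpace ℝ (Fin d))
        * LinearMap.det (B : EuclideanSpace ℝ (Fin d) →ₗ[ℝ] EuclideanSpace ℝ (Fin d)) = 1 := by
      have hcoe : ((A.comp B : EuclideanSpace ℝ (Fin d) →L[ℝ] EuclideanSpace ℝ (Fin d)) :
          EuclideanSpace ℝ (Fin d) →ₗ[ℝ] EuclideanSpace ℝ (Fin d))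
          = (A : EuclideanSpace ℝ (Fin d) →ₗ[ℝ] EuclideanSpace ℝ (Fin d)) ∘ₗ
            (B : EuclideanSpace ℝ (Fin d) →ₗ[ℝ] EuclideanSpace ℝ (Fin d)) := rfl
      have := congrArg (fun (T : EuclideanSpace ℝ (Fin d) →L[ℝ] EuclideanSpace ℝ (Fin d)) =>
        LinearMap.det (T : EuclideanSpace ℝ (Fin d) →ₗ[ℝ] EuclideanSpace ℝ (Fin d))) hABid
      simp only [hcoe] at this
      rw [LinearMap.det_comp] at this
      simpa using this
    have hdetA : |LinearMap.det
        (A : EuclideanSpace ℝ (Fin d) →ₗ[ℝ] EuclideanSpace ℝ (Fin d))| = 1 := by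
      have habs : |LinearMap.det (A : EuclideanSpace ℝ (Fin d) →ₗ[ℝ] EuclideanSpace ℝ (Fin d))|
          * |LinearMap.det (B : EuclideanSpace ℝ (Fin d) →ₗ[ℝ] EuclideanSpace ℝ (Fin d))| = 1 := by
        rw [← abs_mul, hdetmul, abs_one]
      nlinarith
    -- operator norm bound on A
    have hAnorm : ∀ z, ‖A z‖ ≤ L * ‖z‖ := by
      intro z
      have h1 : ‖A‖ ≤ (L.toNNReal : ℝ) := hAd.le_of_lipschitz hφl
      rw [Real.coe_toNNReal L hL0.le] at h1
      calc ‖A z‖ ≤ ‖A‖ * ‖z‖ := A.le_opNorm z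
        _ ≤ L * ‖z‖ := mul_le_mul_of_nonneg_right h1 (norm_nonneg z)
    -- conclude with the linear algebra lemma
    have hlin := linAux hd L hL0 A B hBA hAnorm hdetA
    intro w
    calc ‖B w‖ ≤ L ^ (d - 1) * ‖A (B w)‖ := hlin (B w)
      _ = L ^ (d - 1) * ‖w‖ := by rw [hAB]
  -- globalize
  have hglob := globAux g A₀ hgl (L ^ (d - 1)) hM hae
  intro x y
  have := hglob (φ x) (φ y)
  rwa [hgφ x, hgφ y] at this
end

section
/- Let d ≥ 1 and let A : ℝ^d → ℝ^d be an invertible linear map with |det A| = 1. Then the operator norms satisfy ‖A⁻¹‖ ≤ ‖A‖^{d−1}. -/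
open scoped RealInnerProductSpace


/-- Let `d ≥ 1` and `A : ℝ^d → ℝ^d` an invertible linear map with `|det A| = 1`. Then the
operator norms satisfy `‖A⁻¹‖ ≤ ‖A‖^{d−1}`. -/
theorem stmt13 (d : ℕ) (hd : 1 ≤ d)
    (A : EuclideanSpace ℝ (Fin d) ≃L[ℝ] EuclideanSpace ℝ (Fin d))
    (hdet : |LinearMap.det (A : EuclideanSpace ℝ (Fin d) →ₗ[ℝ] EuclideanSpace ℝ (Fin d))| = 1) :
    ‖(A.symm : EuclideanSpace ℝ (Fin d) →L[ℝ] EuclideanSpace ℝ (Fin d))‖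
      ≤ ‖(A : EuclideanSpace ℝ (Fin d) →L[ℝ] EuclideanSpace ℝ (Fin d))‖ ^ (d - 1) := by
  set E := EuclideanSpace ℝ (Fin d) with hE
  set Ac : E →L[ℝ] E := (A : E →L[ℝ] E) with hAc
  have hn : Module.finrank ℝ E = d := finrank_euclideanSpace_fin
  set T : E →L[ℝ] E := (ContinuousLinearMap.adjoint Ac).comp Ac with hTdef
  have hsa : IsSelfAdjoint T := by
    rw [hTdef, IsSelfAdjoint, ContinuousLinearMap.star_eq_adjoint,
      ContinuousLinearMap.adjoint_comp, ContinuousLinearMap.adjoint_adjoint]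
  have hT : (T : E →ₗ[ℝ] E).IsSymmetric := hsa.isSymmetric
  set b := hT.eigenvectorBasis hn with hb
  set μ := hT.eigenvalues hn with hμ
  have heig : ∀ i, T (b i) = μ i • b i := by
    intro i
    have := (hT.hasEigenvector_eigenvectorBasis hn i).1
    rwa [Module.End.mem_eigenspace_iff] at this
  -- inner products via coordinates
  have hinner : ∀ x y : E, ⟪x, y⟫ = ∑ i, b.repr x i * b.repr y i := by
    intro x y
    rw [← b.repr.inner_map_map x y]
    simp only [PiLp.inner_apply, RCLike.inner_apply, conj_trivial]
    exact Finset.sum_congr rfl fun i _ => mul_comm _ _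
  have hT' : ∀ x y : E, ⟪T x, y⟫ = ⟪x, T y⟫ := fun x y => hT x y
  have hreprT : ∀ (x : E) (i : Fin d), b.repr (T x) i = μ i * b.repr x i := by
    intro x i
    rw [b.repr_apply_apply, b.repr_apply_apply, ← hT' (b i) x, heig i,
      inner_smul_left]
    simp
  have hTxx : ∀ x : E, ‖Ac x‖ ^ 2 = ∑ i, μ i * (b.repr x i) ^ 2 := by
    intro x
    have h1 : ⟪T x, x⟫ = ‖Ac x‖ ^ 2 := by
      rw [hTdef]
      simp only [ContinuousLinearMap.comp_apply, ContinuousLinearMap.adjoint_inner_left]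
      rw [real_inner_self_eq_norm_sq]
    rw [← h1, hinner]
    exact Finset.sum_congr rfl fun i _ => by rw [hreprT]; ring
  have hnormsq : ∀ x : E, ‖x‖ ^ 2 = ∑ i, (b.repr x i) ^ 2 := by
    intro x
    rw [← real_inner_self_eq_norm_sq, hinner]
    exact Finset.sum_congr rfl fun i _ => by ring
  -- eigenvalues
  have hμ_eq : ∀ i, μ i = ‖Ac (b i)‖ ^ 2 := by
    intro i
    rw [hTxx (b i)]
    simp [b.repr_self, EuclideanSpace.single_apply, Finset.sum_ite_eq', mul_pow]
  have hμ_nonneg : ∀ i, 0 ≤ μ i := fun i => (hμ_eq i) ▸ sq_nonneg _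
  have hμ_le : ∀ i, μ i ≤ ‖Ac‖ ^ 2 := by
    intro i
    rw [hμ_eq i]
    have h1 : ‖Ac (b i)‖ ≤ ‖Ac‖ * ‖b i‖ := Ac.le_opNorm _
    rw [b.orthonormal.1 i, mul_one] at h1
    exact pow_le_pow_left₀ (norm_nonneg _) h1 2
  -- determinant of T
  have hdiag : LinearMap.toMatrix b.toBasis b.toBasis (T : E →ₗ[ℝ] E) = Matrix.diagonal μ := by
    ext i j
    rw [LinearMap.toMatrix_apply, Matrix.diagonal_apply]
    have : b.toBasis.repr ((T : E →ₗ[ℝ] E) (b.toBasis j)) i = b.repr (T (b j)) i := by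
      rw [OrthonormalBasis.coe_toBasis_repr_apply, OrthonormalBasis.coe_toBasis]
      rfl
    rw [this, hreprT, b.repr_self, EuclideanSpace.single_apply]
    by_cases h : i = j <;> simp [h]
  have hdetT : LinearMap.det (T : E →ₗ[ℝ] E) = ∏ i, μ i := by
    rw [← LinearMap.det_toMatrix b.toBasis, hdiag, Matrix.det_diagonal]
  have hadj : ((ContinuousLinearMap.adjoint Ac : E →L[ℝ] E) : E →ₗ[ℝ] E)
      = LinearMap.adjoint (Ac : E →ₗ[ℝ] E) := by
    refine ((LinearMap.eq_adjoint_iff _ _).2 fun x y => ?_)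
    exact ContinuousLinearMap.adjoint_inner_left Ac y x
  have hdetadj : LinearMap.det (LinearMap.adjoint (Ac : E →ₗ[ℝ] E))
      = LinearMap.det (Ac : E →ₗ[ℝ] E) := by
    rw [← LinearMap.det_toMatrix b.toBasis, LinearMap.toMatrix_adjoint b b,
      Matrix.det_conjTranspose, ← LinearMap.det_toMatrix b.toBasis (Ac : E →ₗ[ℝ] E)]
    simp
  have hprod : ∏ i, μ i = 1 := by
    have hcoe : (T : E →ₗ[ℝ] E)
        = (LinearMap.adjoint (Ac : E →ₗ[ℝ] E)).comp (Ac : E →ₗ[ℝ] E) := by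
      rw [hTdef, ContinuousLinearMap.toLinearMap_comp, hadj]
    have h2 : LinearMap.det (T : E →ₗ[ℝ] E) = LinearMap.det (Ac : E →ₗ[ℝ] E) ^ 2 := by
      rw [hcoe, LinearMap.det_comp, hdetadj, sq]
    have h3 : LinearMap.det (Ac : E →ₗ[ℝ] E) ^ 2 = 1 := by
      rw [← sq_abs, show |LinearMap.det (Ac : E →ₗ[ℝ] E)| = 1 from hdet, one_pow]
    rw [← hdetT, h2, h3]
  -- positivity of eigenvalues and of the norm
  haveI : Nonempty (Fin d) := ⟨⟨0, hd⟩⟩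
  have hμ_pos : ∀ i, 0 < μ i := by
    intro i
    rcases (hμ_nonneg i).lt_or_eq with h | h
    · exact h
    · exfalso
      have : ∏ j, μ j = 0 := Finset.prod_eq_zero (Finset.mem_univ i) h.symm
      rw [hprod] at this; norm_num at this
  have hA_pos : 0 < ‖Ac‖ := by
    have h1 := hμ_pos (Classical.arbitrary (Fin d))
    have h2 := hμ_le (Classical.arbitrary (Fin d))
    nlinarith [norm_nonneg Ac]
  -- each eigenvalue is bounded below
  have hμ_lb : ∀ i, 1 ≤ μ i * (‖Ac‖ ^ (d - 1)) ^ 2 := by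
    intro i
    have h1 : ∏ j ∈ Finset.univ.erase i, μ j ≤ ∏ j ∈ Finset.univ.erase i, ‖Ac‖ ^ 2 :=
      Finset.prod_le_prod (fun j _ => hμ_nonneg j) (fun j _ => hμ_le j)
    have hcard : (Finset.univ.erase i).card = d - 1 := by
      rw [Finset.card_erase_of_mem (Finset.mem_univ i)]
      simp
    rw [Finset.prod_const, hcard] at h1
    have h2 : (1 : ℝ) = μ i * ∏ j ∈ Finset.univ.erase i, μ j := by
      rw [← hprod, Finset.mul_prod_erase _ _ (Finset.mem_univ i)]
    have h3 : (‖Ac‖ ^ 2) ^ (d - 1) = (‖Ac‖ ^ (d - 1)) ^ 2 := by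
      rw [← pow_mul, ← pow_mul, Nat.mul_comm]
    rw [h2, ← h3]
    exact mul_le_mul_of_nonneg_left h1 (hμ_nonneg i)
  -- final bound
  refine ContinuousLinearMap.opNorm_le_bound _ (pow_nonneg (norm_nonneg _) _) fun y => ?_
  set x : E := (A.symm : E →L[ℝ] E) y with hx
  have hAx : Ac x = y := A.apply_symm_apply y
  have h1 : ‖x‖ ^ 2 ≤ ((‖Ac‖ ^ (d - 1)) ^ 2) * ‖y‖ ^ 2 := by
    have e1 : ‖x‖ ^ 2 = ∑ i, (b.repr x i) ^ 2 := hnormsq x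
    have e2 : ‖y‖ ^ 2 = ∑ i, μ i * (b.repr x i) ^ 2 := by rw [← hAx]; exact hTxx x
    rw [e1, e2, Finset.mul_sum]
    refine Finset.sum_le_sum fun i _ => ?_
    have := hμ_lb i
    nlinarith [sq_nonneg (b.repr x i), hμ_nonneg i]
  nlinarith [norm_nonneg x, norm_nonneg y, pow_nonneg (norm_nonneg Ac) (d-1),
    mul_nonneg (pow_nonneg (norm_nonneg Ac) (d-1)) (norm_nonneg y)]
end

section
/- Let d ≥ 1 and let φ : ℝ^d → ℝ^d be a bi-Lipschitz homeomorphism preserving Lebesgue measure. Let β : (0,∞) × ℝ^d → ℝ be measurable and bounded, and let μ be the measure on (0,∞) × ℝ^d with density |β(t,x)|²/t with respect to dt ⊗ dx. Suppose μ is a Carleson measure with norm at most M, so μ(B × (0, r_B]) ≤ M·|B| for every ball B of radius r_B. Let μ^{♯φ} be the measure on (0,∞) × ℝ^d with density |β(t, φ(x))|²/t with respect to dt ⊗ dx. Then there is a constant C depending only on d such that for every ball B ⊂ ℝ^d of radius r_B, μ^{♯φ}(B × (0, r_B]) ≤ C·( M + log(K(φ)) · ‖β‖_{L^∞}² )·|B|.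 -/
open Metric MeasureTheory Set

set_option maxHeartbeats 1000000 in
/-- Let `φ` be a bi-Lipschitz measure-preserving homeomorphism of `ℝ^d`, `β` measurable and
(essentially) bounded on `(0,∞) × ℝ^d`, and `μ` the measure with density `|β(t,x)|²/t`.
If `μ` is Carleson with norm at most `M`, then the measure `μ^{♯φ}` with density
`|β(t,φ(x))|²/t` satisfies `μ^{♯φ}(B × (0,r_B]) ≤ C·(M + log K(φ)·‖β‖_∞²)·|B|` for every
ball `B`, where `C` depends only on `d`. -/
theorem stmt15 (d : ℕ) (hd : 1 ≤ d) :
    ∃ C : ℝ, 0 < C ∧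
      ∀ (φ : EuclideanSpace ℝ (Fin d) → EuclideanSpace ℝ (Fin d)),
        Function.Bijective φ →
        (∃ A : NNReal, LipschitzWith A φ) →
        (∃ A : NNReal, LipschitzWith A (Function.invFun φ)) →
        MeasurePreserving φ volume volume →
        ∀ β : ℝ × EuclideanSpace ℝ (Fin d) → ℝ, Measurable β →
          eLpNorm β ⊤ (volume.restrict (Ioi (0 : ℝ) ×ˢ univ)) < ⊤ →
          ∀ M : ℝ, 0 ≤ M →
          (∀ (x : EuclideanSpace ℝ (Fin d)) (r : ℝ), 0 < r →
            ((volume.restrict (Ioi (0 : ℝ) ×ˢ univ)).withDensity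
                (fun q => ENNReal.ofReal (β q ^ 2 / q.1))) (Ioc (0 : ℝ) r ×ˢ ball x r)
              ≤ ENNReal.ofReal M * volume (ball x r)) →
          ∀ (x : EuclideanSpace ℝ (Fin d)) (r : ℝ), 0 < r →
            ((volume.restrict (Ioi (0 : ℝ) ×ˢ univ)).withDensity
                (fun q => ENNReal.ofReal (β (q.1, φ q.2) ^ 2 / q.1))) (Ioc (0 : ℝ) r ×ˢ ball x r)
              ≤ ENNReal.ofReal
                  (C * (M + Real.log (Kconst φ) *
                    ((eLpNorm β ⊤ (volume.restrict (Ioi (0 : ℝ) ×ˢ univ))).toReal) ^ 2))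
                * volume (ball x r) := by
  classical
  refine ⟨2 ^ d, by positivity, ?_⟩
  intro φ hbij hlip hlipinv hpres β hβmeas hβbound M hM hCar x r hr
  set P : Set (ℝ × EuclideanSpace ℝ (Fin d)) := Ioi (0 : ℝ) ×ˢ univ with hP
  set N : ℝ := (eLpNorm β ⊤ (volume.restrict P)).toReal with hN
  have hN0 : 0 ≤ N := ENNReal.toReal_nonneg
  obtain ⟨A, hA⟩ := hlip
  obtain ⟨A', hA'⟩ := hlipinv
  have hleft : Function.LeftInverse (Function.invFun φ) φ := Function.leftInverse_invFun hbij.1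
  have hright : Function.RightInverse (Function.invFun φ) φ := Function.rightInverse_invFun hbij.2
  set K : ℝ := Kconst φ with hK
  -- basic facts about K
  have hbdd : BddAbove (Set.range fun q : {p : EuclideanSpace ℝ (Fin d) × EuclideanSpace ℝ (Fin d) // p.1 ≠ p.2} =>
      dist (φ q.1.1) (φ q.1.2) / dist q.1.1 q.1.2 + dist q.1.1 q.1.2 / dist (φ q.1.1) (φ q.1.2)) := by
    refine ⟨A + A', ?_⟩
    rintro _ ⟨q, rfl⟩
    have hdpos : 0 < dist q.1.1 q.1.2 := dist_pos.2 q.2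
    have hdpos' : 0 < dist (φ q.1.1) (φ q.1.2) := dist_pos.2 fun h => q.2 (hbij.1 h)
    have h1 : dist (φ q.1.1) (φ q.1.2) ≤ A * dist q.1.1 q.1.2 := hA.dist_le_mul _ _
    have h2 : dist q.1.1 q.1.2 ≤ A' * dist (φ q.1.1) (φ q.1.2) := by
      have := hA'.dist_le_mul (φ q.1.1) (φ q.1.2)
      simpa [hleft _] using this
    exact add_le_add ((div_le_iff₀ hdpos).2 h1) ((div_le_iff₀ hdpos').2 h2)
  have hKub : ∀ a b, a ≠ b →
      dist (φ a) (φ b) / dist a b + dist a b / dist (φ a) (φ b) ≤ K := by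
    intro a b hab
    exact le_ciSup hbdd (⟨(a, b), hab⟩ : {p : EuclideanSpace ℝ (Fin d) × EuclideanSpace ℝ (Fin d) // p.1 ≠ p.2})
  have hne : (0 : EuclideanSpace ℝ (Fin d)) ≠ EuclideanSpace.single ⟨0, hd⟩ (1 : ℝ) := by
    intro h
    have := congrArg (fun v : EuclideanSpace ℝ (Fin d) => v ⟨0, hd⟩) h
    simp [EuclideanSpace.single_apply] at this
  haveI : Nontrivial (EuclideanSpace ℝ (Fin d)) := ⟨_, _, hne⟩
  have hK2 : 2 ≤ K := by
    refine le_trans ?_ (hKub _ _ hne)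
    set a := dist (φ 0) (φ (EuclideanSpace.single ⟨0, hd⟩ (1 : ℝ))) with ha'
    set b := dist (0 : EuclideanSpace ℝ (Fin d)) (EuclideanSpace.single ⟨0, hd⟩ (1 : ℝ)) with hb'
    have ha : 0 < a := dist_pos.2 fun h => hne (hbij.1 h)
    have hb : 0 < b := dist_pos.2 hne
    rw [div_add_div _ _ (ne_of_gt hb) (ne_of_gt ha), le_div_iff₀ (by positivity)]
    nlinarith [sq_nonneg (a - b)]
  have hKpos : (0 : ℝ) < K := lt_of_lt_of_le two_pos hK2
  have hKinv : ∀ a b, dist a b ≤ K * dist (φ a) (φ b) := by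
    intro a b
    rcases eq_or_ne a b with rfl | hab
    · simpa using mul_nonneg hKpos.le dist_nonneg
    · have hdpos' : 0 < dist (φ a) (φ b) := dist_pos.2 fun h => hab (hbij.1 h)
      have hdpos : 0 < dist a b := dist_pos.2 hab
      have h2 : dist a b / dist (φ a) (φ b) ≤ K :=
        le_trans (le_add_of_nonneg_left (by positivity)) (hKub a b hab)
      exact (div_le_iff₀ hdpos').1 h2
  -- notation
  set t0 : ℝ := r / K with ht0def
  have ht0pos : 0 < t0 := div_pos hr hKpos
  have ht0r : t0 ≤ r := by
    rw [ht0def]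
    calc r / K ≤ r / 1 := by apply div_le_div_of_nonneg_left hr.le one_pos; linarith
      _ = r := div_one r
  set g : ℝ × EuclideanSpace ℝ (Fin d) → ENNReal := fun q => ENNReal.ofReal (β q ^ 2 / q.1) with hgdef
  have hg : Measurable g := ENNReal.measurable_ofReal.comp ((hβmeas.pow_const 2).div measurable_fst)
  have nu_apply : ∀ (f : ℝ × EuclideanSpace ℝ (Fin d) → ENNReal) (a : ℝ)
      (T : Set (EuclideanSpace ℝ (Fin d))), MeasurableSet T →
      ((volume.restrict P).withDensity f) (Ioc (0 : ℝ) a ×ˢ T)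
        = ∫⁻ q in Ioc (0 : ℝ) a ×ˢ T, f q := by
    intro f a T hT
    rw [withDensity_apply _ (measurableSet_Ioc.prod hT),
      Measure.restrict_restrict (measurableSet_Ioc.prod hT)]
    congr 1
    rw [hP, Set.prod_inter_prod, Set.inter_univ, Set.inter_eq_left.2 Ioc_subset_Ioi_self]
  set E : Set (EuclideanSpace ℝ (Fin d)) := φ '' ball x r with hEdef
  have himg : ∀ s : Set (EuclideanSpace ℝ (Fin d)), φ '' s = Function.invFun φ ⁻¹' s := by
    intro s
    ext y
    constructor
    · rintro ⟨a, ha, rfl⟩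
      simpa [hleft a] using ha
    · intro hy
      exact ⟨_, hy, hright y⟩
  have hEmeas : MeasurableSet E := by
    rw [hEdef, himg]
    exact measurableSet_ball.preimage hA'.continuous.measurable
  have hvol_img : ∀ s : Set (EuclideanSpace ℝ (Fin d)), MeasurableSet (φ '' s) →
      volume (φ '' s) = volume s := by
    intro s hs
    have h1 : φ ⁻¹' (φ '' s) = s := Set.preimage_image_eq _ hbij.1
    have := hpres.measure_preimage hs.nullMeasurableSet
    rw [h1] at this
    exact this.symm
  have hEvol : volume E = volume (ball x r) := by
    rw [hEdef, hvol_img _ (hEdef ▸ hEmeas)]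
  -- Step 1: rewrite LHS
  have hΦ : MeasurePreserving (Prod.map (id : ℝ → ℝ) φ)
      (volume : Measure (ℝ × EuclideanSpace ℝ (Fin d))) volume :=
    (MeasurePreserving.id volume).prod hpres
  have key1 : ((volume.restrict P).withDensity
        (fun q => ENNReal.ofReal (β (q.1, φ q.2) ^ 2 / q.1))) (Ioc (0 : ℝ) r ×ˢ ball x r)
      = ∫⁻ q in Ioc (0 : ℝ) r ×ˢ E, g q := by
    rw [nu_apply _ r _ measurableSet_ball]
    have hpre : (Prod.map (id : ℝ → ℝ) φ) ⁻¹' (Ioc (0 : ℝ) r ×ˢ E)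
        = Ioc (0 : ℝ) r ×ˢ ball x r := by
      rw [Set.preimage_prod_map_prod, Set.preimage_id, hEdef, Set.preimage_image_eq _ hbij.1]
    calc ∫⁻ q in Ioc (0 : ℝ) r ×ˢ ball x r, ENNReal.ofReal (β (q.1, φ q.2) ^ 2 / q.1)
        = ∫⁻ q in (Prod.map (id : ℝ → ℝ) φ) ⁻¹' (Ioc (0 : ℝ) r ×ˢ E),
            g (Prod.map (id : ℝ → ℝ) φ q) := by rw [hpre]; rfl
      _ = ∫⁻ q in Ioc (0 : ℝ) r ×ˢ E, g q :=
          hΦ.setLIntegral_comp_preimage (measurableSet_Ioc.prod hEmeas) hg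
  -- split
  have hsplit : ∫⁻ q in Ioc (0 : ℝ) r ×ˢ E, g q
      ≤ (∫⁻ q in Ioc (0 : ℝ) t0 ×ˢ E, g q) + ∫⁻ q in Ioc t0 r ×ˢ E, g q := by
    rw [← Ioc_union_Ioc_eq_Ioc ht0pos.le ht0r, Set.union_prod]
    exact lintegral_union_le _ _ _
  set c : ENNReal := volume (ball (0 : EuclideanSpace ℝ (Fin d)) t0) with hcdef
  have hc0 : c ≠ 0 := (measure_ball_pos volume 0 ht0pos).ne'
  have hcT : c ≠ ⊤ := measure_ball_lt_top.ne
  have hballc : ∀ z : EuclideanSpace ℝ (Fin d), volume (ball z t0) = c := fun z =>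
    Measure.addHaar_ball_center volume z t0
  -- the union U
  set U : Set (EuclideanSpace ℝ (Fin d)) := ⋃ e ∈ E, ball e t0 with hUdef
  have hUmeas : MeasurableSet U := (isOpen_biUnion fun _ _ => isOpen_ball).measurableSet
  have hU_sub : U ⊆ φ '' ball x (2 * r) := by
    intro y hy
    rw [hUdef] at hy
    simp only [Set.mem_iUnion, exists_prop] at hy
    obtain ⟨e, heE, hye⟩ := hy
    rw [hEdef] at heE
    obtain ⟨b, hb, rfl⟩ := heE
    refine ⟨Function.invFun φ y, ?_, hright y⟩
    have h1 : dist (Function.invFun φ y) b ≤ K * dist y (φ b) := by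
      have := hKinv (Function.invFun φ y) b
      rwa [hright y] at this
    have h2 : dist y (φ b) < t0 := mem_ball.1 hye
    have hKt0 : K * t0 = r := by rw [ht0def]; field_simp
    have : dist (Function.invFun φ y) x < 2 * r := by
      calc dist (Function.invFun φ y) x ≤ dist (Function.invFun φ y) b + dist b x :=
            dist_triangle _ _ _
        _ < K * t0 + r := by
            have := mem_ball.1 hb
            have h3 : K * dist y (φ b) < K * t0 := (mul_lt_mul_iff_right₀ hKpos).2 h2
            linarith [h1.trans_lt h3]
        _ = 2 * r := by rw [hKt0]; ring
    exact mem_ball.2 this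
  have hUvol : volume U ≤ ENNReal.ofReal (2 ^ d) * volume (ball x r) := by
    have hm2 : MeasurableSet (φ '' ball x (2 * r)) := by
      rw [himg]
      exact measurableSet_ball.preimage hA'.continuous.measurable
    calc volume U ≤ volume (φ '' ball x (2 * r)) := measure_mono hU_sub
      _ = volume (ball x (2 * r)) := hvol_img _ hm2
      _ = ENNReal.ofReal (2 ^ d) * volume (ball x r) := by
          rw [Measure.addHaar_ball volume x (by positivity : (0 : ℝ) ≤ 2 * r),
            Measure.addHaar_ball volume x hr.le, ← mul_assoc, ← ENNReal.ofReal_mul (by positivity)]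
          congr 2
          have hfr : Module.finrank ℝ (EuclideanSpace ℝ (Fin d)) = d := by
            simp [finrank_euclideanSpace]
          rw [hfr, mul_pow]
  -- bottom part via averaging
  have hbot : ∫⁻ q in Ioc (0 : ℝ) t0 ×ˢ E, g q
      ≤ ENNReal.ofReal M * (ENNReal.ofReal (2 ^ d) * volume (ball x r)) := by
    set F : EuclideanSpace ℝ (Fin d) → ℝ × EuclideanSpace ℝ (Fin d) → ENNReal :=
      fun y q => (Ioc (0 : ℝ) t0 ×ˢ ball y t0).indicator g q with hFdef
    have hFmeas : Measurable (Function.uncurry F) := by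
      have heq : Function.uncurry F =
          ({p : EuclideanSpace ℝ (Fin d) × (ℝ × EuclideanSpace ℝ (Fin d)) |
              p.2.1 ∈ Ioc (0 : ℝ) t0} ∩
            {p | dist p.2.2 p.1 < t0}).indicator (fun p => g p.2) := by
        funext p
        simp only [Function.uncurry, hFdef, Set.indicator_apply, Set.mem_prod, mem_ball,
          Set.mem_inter_iff, Set.mem_setOf_eq]
      rw [heq]
      refine Measurable.indicator (hg.comp measurable_snd) (MeasurableSet.inter ?_ ?_)
      · exact (measurable_fst.comp measurable_snd) measurableSet_Ioc
      · exact measurableSet_lt ((measurable_snd.snd).dist measurable_fst) measurable_const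
    have hswap : ∫⁻ y in U, ∫⁻ q, F y q ∂volume ∂volume
        = ∫⁻ q, ∫⁻ y in U, F y q ∂volume ∂volume :=
      lintegral_lintegral_swap hFmeas.aemeasurable
    have hlow : (∫⁻ q in Ioc (0 : ℝ) t0 ×ˢ E, g q) * c
        ≤ ∫⁻ q, ∫⁻ y in U, F y q ∂volume ∂volume := by
      rw [← lintegral_indicator (measurableSet_Ioc.prod hEmeas),
        ← lintegral_mul_const c ((hg.indicator (measurableSet_Ioc.prod hEmeas)))]
      refine lintegral_mono fun q => ?_
      by_cases hq : q ∈ Ioc (0 : ℝ) t0 ×ˢ E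
      · rw [Set.indicator_of_mem hq]
        have hball_sub : ball q.2 t0 ⊆ U := by
          intro y hy
          exact Set.mem_biUnion hq.2 hy
        have step1 : g q * c = ∫⁻ y in U, (ball q.2 t0).indicator (fun _ => g q) y ∂volume := by
          rw [lintegral_indicator measurableSet_ball,
            Measure.restrict_restrict measurableSet_ball, setLIntegral_const,
            Set.inter_eq_left.2 hball_sub, hballc]
        rw [step1]
        refine lintegral_mono fun y => ?_
        by_cases hy : y ∈ ball q.2 t0
        · rw [Set.indicator_of_mem hy]
          simp only [hFdef]
          have hmem : q ∈ Ioc (0 : ℝ) t0 ×ˢ ball y t0 := by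
            refine ⟨hq.1, mem_ball.2 ?_⟩
            rw [dist_comm]
            exact mem_ball.1 hy
          rw [Set.indicator_of_mem hmem]
        · rw [Set.indicator_of_notMem hy]
          exact zero_le
      · rw [Set.indicator_of_notMem hq, zero_mul]
        exact zero_le
    have hup : ∫⁻ y in U, ∫⁻ q, F y q ∂volume ∂volume
        ≤ ENNReal.ofReal M * c * volume U := by
      calc ∫⁻ y in U, ∫⁻ q, F y q ∂volume ∂volume
          ≤ ∫⁻ _ in U, (ENNReal.ofReal M * c) ∂volume := by
            refine lintegral_mono fun y => ?_
            simp only [hFdef]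
            rw [lintegral_indicator (measurableSet_Ioc.prod measurableSet_ball)]
            have := hCar y t0 ht0pos
            rw [nu_apply _ t0 _ measurableSet_ball] at this
            calc ∫⁻ q in Ioc (0 : ℝ) t0 ×ˢ ball y t0, g q
                ≤ ENNReal.ofReal M * volume (ball y t0) := this
              _ = ENNReal.ofReal M * c := by rw [hballc]
        _ = ENNReal.ofReal M * c * volume U := by
            rw [setLIntegral_const]
    have hchain : (∫⁻ q in Ioc (0 : ℝ) t0 ×ˢ E, g q) * c
        ≤ (ENNReal.ofReal M * volume U) * c := by
      calc (∫⁻ q in Ioc (0 : ℝ) t0 ×ˢ E, g q) * c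
          ≤ ∫⁻ q, ∫⁻ y in U, F y q ∂volume ∂volume := hlow
        _ = ∫⁻ y in U, ∫⁻ q, F y q ∂volume ∂volume := hswap.symm
        _ ≤ ENNReal.ofReal M * c * volume U := hup
        _ = (ENNReal.ofReal M * volume U) * c := by ring
    have := (ENNReal.mul_le_mul_iff_left hc0 hcT).1 hchain
    calc ∫⁻ q in Ioc (0 : ℝ) t0 ×ˢ E, g q ≤ ENNReal.ofReal M * volume U := this
      _ ≤ ENNReal.ofReal M * (ENNReal.ofReal (2 ^ d) * volume (ball x r)) :=
          mul_le_mul_right hUvol _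
  -- top part
  have hlogK : 0 ≤ Real.log K := Real.log_nonneg (by linarith)
  have htop : ∫⁻ q in Ioc t0 r ×ˢ E, g q
      ≤ ENNReal.ofReal (N ^ 2 * Real.log K) * volume (ball x r) := by
    have hsub : Ioc t0 r ×ˢ E ⊆ P := by
      rw [hP]
      refine Set.prod_mono ?_ (Set.subset_univ E)
      intro t ht
      exact mem_Ioi.2 (ht0pos.trans ht.1)
    have h1 : ∀ᵐ q ∂(volume.restrict P), (‖β q‖₊ : ENNReal) ≤ eLpNormEssSup β (volume.restrict P) :=
      ae_le_eLpNormEssSup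
    have h2 := ae_restrict_of_ae_restrict_of_subset hsub h1
    have hae : ∀ᵐ q ∂(volume.restrict (Ioc t0 r ×ˢ E)), g q ≤ ENNReal.ofReal (N ^ 2 / q.1) := by
      filter_upwards [h2, ae_restrict_mem (measurableSet_Ioc.prod hEmeas)] with q hq hqmem
      have hq1pos : 0 < q.1 := ht0pos.trans hqmem.1.1
      have hfin : eLpNormEssSup β (volume.restrict P) ≠ ⊤ := by
        rw [← eLpNorm_exponent_top]; exact hβbound.ne
      have hnorm : ‖β q‖ ≤ N := by
        have := ENNReal.toReal_mono hfin hq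
        simpa [hN, eLpNorm_exponent_top] using this
      have habs : |β q| ≤ N := by rwa [← Real.norm_eq_abs]
      have hβle : β q ^ 2 ≤ N ^ 2 := by
        calc β q ^ 2 = |β q| ^ 2 := (sq_abs _).symm
          _ ≤ N ^ 2 := pow_le_pow_left₀ (abs_nonneg _) habs 2
      exact ENNReal.ofReal_le_ofReal ((div_le_div_iff_of_pos_right hq1pos).2 hβle)
    have hrestr : (volume : Measure (ℝ × EuclideanSpace ℝ (Fin d))).restrict (Ioc t0 r ×ˢ E)
        = ((volume : Measure ℝ).restrict (Ioc t0 r)).prod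
            ((volume : Measure (EuclideanSpace ℝ (Fin d))).restrict E) := by
      rw [Measure.prod_restrict]
      rfl
    have hIoc : ∫⁻ t in Ioc t0 r, ENNReal.ofReal (N ^ 2 / t)
        = ENNReal.ofReal (N ^ 2 * Real.log K) := by
      have hc : ContinuousOn (fun t : ℝ => N ^ 2 / t) (Icc t0 r) :=
        continuousOn_const.div continuousOn_id fun t ht => ne_of_gt (lt_of_lt_of_le ht0pos ht.1)
      have hInt : IntegrableOn (fun t : ℝ => N ^ 2 / t) (Ioc t0 r) volume :=
        (hc.integrableOn_Icc).mono_set Ioc_subset_Icc_self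
      have hnn : 0 ≤ᶠ[ae (volume.restrict (Ioc t0 r))] fun t : ℝ => N ^ 2 / t := by
        filter_upwards [ae_restrict_mem measurableSet_Ioc] with t ht
        exact div_nonneg (sq_nonneg _) (le_of_lt (ht0pos.trans ht.1))
      rw [← ofReal_integral_eq_lintegral_ofReal hInt hnn]
      congr 1
      have hIeq : ∫ t in Ioc t0 r, N ^ 2 / t = ∫ t in t0..r, N ^ 2 * t⁻¹ := by
        rw [intervalIntegral.integral_of_le ht0r]
        apply setIntegral_congr_fun measurableSet_Ioc
        intro t _
        rw [div_eq_mul_inv]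
      rw [hIeq, intervalIntegral.integral_const_mul, integral_inv]
      · congr 1
        rw [ht0def]
        field_simp
      · rw [Set.uIcc_of_le ht0r]
        intro h
        exact absurd h.1 (not_le.2 ht0pos)
    calc ∫⁻ q in Ioc t0 r ×ˢ E, g q
        ≤ ∫⁻ q in Ioc t0 r ×ˢ E, ENNReal.ofReal (N ^ 2 / q.1) := lintegral_mono_ae hae
      _ = (∫⁻ t in Ioc t0 r, ENNReal.ofReal (N ^ 2 / t)) * volume E := by
          rw [hrestr]
          have := lintegral_prod_mul (μ := (volume : Measure ℝ).restrict (Ioc t0 r))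
            (ν := (volume : Measure (EuclideanSpace ℝ (Fin d))).restrict E)
            (f := fun t : ℝ => ENNReal.ofReal (N ^ 2 / t)) (g := fun _ => (1 : ENNReal))
            (ENNReal.measurable_ofReal.comp
              ((measurable_const.div measurable_id)) : Measurable fun t : ℝ => ENNReal.ofReal (N ^ 2 / t)).aemeasurable aemeasurable_const
          simp only [mul_one, lintegral_one, Measure.restrict_apply_univ] at this
          exact this
      _ = ENNReal.ofReal (N ^ 2 * Real.log K) * volume (ball x r) := by
          rw [hEvol, hIoc]
  -- combine
  rw [key1]
  refine le_trans (hsplit.trans (add_le_add hbot htop)) ?_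
  have heq1 : ENNReal.ofReal M * (ENNReal.ofReal (2 ^ d) * volume (ball x r))
      + ENNReal.ofReal (N ^ 2 * Real.log K) * volume (ball x r)
      = ENNReal.ofReal (M * 2 ^ d + N ^ 2 * Real.log K) * volume (ball x r) := by
    rw [← mul_assoc, ← ENNReal.ofReal_mul hM,
      ENNReal.ofReal_add (by positivity) (by positivity), add_mul]
  rw [heq1]
  refine mul_le_mul_left (ENNReal.ofReal_le_ofReal ?_) _
  have h2d : (1 : ℝ) ≤ 2 ^ d := one_le_pow₀ (by norm_num)
  nlinarith [mul_nonneg hlogK (sq_nonneg N), mul_nonneg hM (sub_nonneg.2 h2d),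
    mul_nonneg (mul_nonneg hlogK (sq_nonneg N)) (sub_nonneg.2 h2d)]
end

section
/- Let d ≥ 1 and let φ : ℝ^d → ℝ^d be a bi-Lipschitz homeomorphism preserving Lebesgue measure. Let β : (0,∞) × ℝ^d → ℝ be measurable and bounded, let μ be the measure on (0,∞) × ℝ^d with density |β(t,x)|²/t with respect to dt ⊗ dx, and suppose μ is a Carleson measure with norm at most M and that ‖β‖_{L^∞}² ≤ C₀·M for some C₀ > 0. Then the measure μ^{♯φ} with density |β(t, φ(x))|²/t with respect to dt ⊗ dx is a Carleson measure with norm at most C·(1 + C₀)·log(K(φ))·M, where C depends only on d. -/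
open Metric MeasureTheory Set
open scoped ENNReal NNReal

/-- Averaging lemma: a Carleson-type bound on cylinders over balls implies a bound on
cylinders over arbitrary sets in terms of the volume of an `s`-thickening. -/
lemma avg_lemma {d : ℕ} (ν : Measure (ℝ × EuclideanSpace ℝ (Fin d))) [SFinite ν] (M : ℝ)
    (hC : ∀ (c : EuclideanSpace ℝ (Fin d)) (r : ℝ), 0 < r →
      ν (Ioc (0:ℝ) r ×ˢ ball c r) ≤ ENNReal.ofReal M * volume (ball c r))
    (S : Set (EuclideanSpace ℝ (Fin d))) (hS : MeasurableSet S) {s : ℝ} (hs : 0 < s) :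
    ν (Ioc (0:ℝ) s ×ˢ S) ≤ ENNReal.ofReal M * volume (thickening s S) := by
  set T : Set (ℝ × EuclideanSpace ℝ (Fin d)) := Ioc (0:ℝ) s ×ˢ S with hT
  have hTm : MeasurableSet T := measurableSet_Ioc.prod hS
  set V : ℝ≥0∞ := volume (ball (0 : EuclideanSpace ℝ (Fin d)) s) with hV
  have hVpos : 0 < V := measure_ball_pos _ _ hs
  have hVne : V ≠ ⊤ := measure_ball_lt_top.ne
  set U : Set ((ℝ × EuclideanSpace ℝ (Fin d)) × EuclideanSpace ℝ (Fin d)) :=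
    {p | dist p.2 p.1.2 < s} with hU
  have hUm : MeasurableSet U := by
    have : IsOpen U := isOpen_lt (by fun_prop) continuous_const
    exact this.measurableSet
  have h1 : ((ν.restrict T).prod volume) U = V * ν T := by
    rw [Measure.prod_apply hUm]
    have : ∀ q : ℝ × EuclideanSpace ℝ (Fin d), (Prod.mk q ⁻¹' U) = ball q.2 s := by
      intro q; ext c; simp [hU, mem_ball, dist_comm]
    simp only [this]
    have : ∀ q : ℝ × EuclideanSpace ℝ (Fin d), volume (ball q.2 s) = V := fun q =>
      Measure.addHaar_ball_center volume q.2 s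
    simp only [this, lintegral_const, Measure.restrict_apply_univ]
  have h2 : ((ν.restrict T).prod volume) U
      ≤ ENNReal.ofReal M * V * volume (thickening s S) := by
    rw [Measure.prod_apply_symm hUm]
    have hb : ∀ c : EuclideanSpace ℝ (Fin d),
        (ν.restrict T) ((fun q => (q, c)) ⁻¹' U)
          ≤ (thickening s S).indicator (fun _ => ENNReal.ofReal M * V) c := by
      intro c
      have hset : ((fun q : ℝ × EuclideanSpace ℝ (Fin d) => (q, c)) ⁻¹' U)
          = univ ×ˢ ball c s := by
        ext q; simp [hU, mem_ball, dist_comm]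
      rw [hset, Measure.restrict_apply (MeasurableSet.univ.prod measurableSet_ball)]
      have hinter : (univ ×ˢ ball c s) ∩ T = Ioc (0:ℝ) s ×ˢ (ball c s ∩ S) := by
        rw [hT, prod_inter_prod, univ_inter]
      rw [hinter]
      by_cases hcth : c ∈ thickening s S
      · have hsub : Ioc (0:ℝ) s ×ˢ (ball c s ∩ S) ⊆ Ioc (0:ℝ) s ×ˢ ball c s :=
          prod_mono subset_rfl inter_subset_left
        calc ν (Ioc (0:ℝ) s ×ˢ (ball c s ∩ S)) ≤ ν (Ioc (0:ℝ) s ×ˢ ball c s) :=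
              measure_mono hsub
          _ ≤ ENNReal.ofReal M * volume (ball c s) := hC c s hs
          _ = ENNReal.ofReal M * V := by rw [Measure.addHaar_ball_center volume c s]
          _ = (thickening s S).indicator (fun _ => ENNReal.ofReal M * V) c := by
              rw [indicator_of_mem hcth]
      · have hempty : ball c s ∩ S = ∅ := by
          by_contra h
          obtain ⟨y, hy⟩ := nonempty_iff_ne_empty.2 h
          exact hcth (mem_thickening_iff.2 ⟨y, hy.2, by simpa [dist_comm] using hy.1⟩)
        simp [hempty, indicator]
    calc ∫⁻ c, (ν.restrict T) ((fun q => (q, c)) ⁻¹' U) ∂volume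
        ≤ ∫⁻ c, (thickening s S).indicator (fun _ => ENNReal.ofReal M * V) c ∂volume :=
          lintegral_mono hb
      _ = ENNReal.ofReal M * V * volume (thickening s S) := by
          rw [lintegral_indicator isOpen_thickening.measurableSet]
          simp [mul_comm]
  have key : V * ν T ≤ V * (ENNReal.ofReal M * volume (thickening s S)) := by
    rw [← h1]
    calc ((ν.restrict T).prod volume) U ≤ ENNReal.ofReal M * V * volume (thickening s S) := h2
      _ = V * (ENNReal.ofReal M * volume (thickening s S)) := by ring
  exact (ENNReal.mul_le_mul_iff_right hVpos.ne' hVne).1 key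


/-- Let `φ` be a bi-Lipschitz measure-preserving homeomorphism of `ℝ^d`, `β` measurable and
bounded, `μ` the measure with density `|β(t,x)|²/t`, Carleson with norm at most `M`, with
`‖β‖_∞² ≤ C₀·M`. Then `μ^{♯φ}` (density `|β(t,φ(x))|²/t`) is Carleson with norm at most
`C·(1 + C₀)·log(K(φ))·M`, where `C` depends only on `d`. -/
theorem stmt16 (d : ℕ) (hd : 1 ≤ d) :
    ∃ C : ℝ, 0 < C ∧
      ∀ (φ : EuclideanSpace ℝ (Fin d) → EuclideanSpace ℝ (Fin d)),
        Function.Bijective φ →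
        (∃ A : NNReal, LipschitzWith A φ) →
        (∃ A : NNReal, LipschitzWith A (Function.invFun φ)) →
        MeasurePreserving φ volume volume →
        ∀ β : ℝ × EuclideanSpace ℝ (Fin d) → ℝ, Measurable β →
          eLpNorm β ⊤ (volume.restrict (Ioi (0 : ℝ) ×ˢ univ)) < ⊤ →
          ∀ (M C₀ : ℝ), 0 ≤ M → 0 < C₀ →
          (∀ (x : EuclideanSpace ℝ (Fin d)) (r : ℝ), 0 < r →
            ((volume.restrict (Ioi (0 : ℝ) ×ˢ univ)).withDensity
                (fun q => ENNReal.ofReal (β q ^ 2 / q.1))) (Ioc (0 : ℝ) r ×ˢ ball x r)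
              ≤ ENNReal.ofReal M * volume (ball x r)) →
          ((eLpNorm β ⊤ (volume.restrict (Ioi (0 : ℝ) ×ˢ univ))).toReal) ^ 2 ≤ C₀ * M →
          ∀ (x : EuclideanSpace ℝ (Fin d)) (r : ℝ), 0 < r →
            ((volume.restrict (Ioi (0 : ℝ) ×ˢ univ)).withDensity
                (fun q => ENNReal.ofReal (β (q.1, φ q.2) ^ 2 / q.1))) (Ioc (0 : ℝ) r ×ˢ ball x r)
              ≤ ENNReal.ofReal (C * (1 + C₀) * Real.log (Kconst φ) * M)
                * volume (ball x r) := by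
  have hlog2 : (0:ℝ) < Real.log 2 := Real.log_pos (by norm_num)
  refine ⟨(2:ℝ) ^ d / Real.log 2 + 1, by positivity, ?_⟩
  intro φ hbij hlipφ hlipinv hpres β hβm hbinf M C₀ hM hC₀ hcar hbound x r hr
  haveI : Nonempty (Fin d) := ⟨⟨0, hd⟩⟩
  obtain ⟨A, hA⟩ := hlipφ
  obtain ⟨A', hA'⟩ := hlipinv
  have hinj := hbij.injective
  have hsurj := hbij.surjective
  have hlinv : Function.LeftInverse (Function.invFun φ) φ := Function.leftInverse_invFun hinj
  have hrinv : Function.RightInverse (Function.invFun φ) φ := Function.rightInverse_invFun hsurj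
  -- boundedness of the defining family of `Kconst`
  have hbdd : BddAbove (Set.range (fun q : {p : EuclideanSpace ℝ (Fin d) ×
      EuclideanSpace ℝ (Fin d) // p.1 ≠ p.2} =>
      dist (φ q.1.1) (φ q.1.2) / dist q.1.1 q.1.2 +
        dist q.1.1 q.1.2 / dist (φ q.1.1) (φ q.1.2))) := by
    refine ⟨(A : ℝ) + (A' : ℝ), ?_⟩
    rintro _ ⟨q, rfl⟩
    have hd1 : 0 < dist q.1.1 q.1.2 := dist_pos.2 q.2
    have hd2 : 0 < dist (φ q.1.1) (φ q.1.2) := dist_pos.2 (fun h => q.2 (hinj h))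
    have h1 : dist (φ q.1.1) (φ q.1.2) / dist q.1.1 q.1.2 ≤ (A : ℝ) := by
      rw [div_le_iff₀ hd1]; exact hA.dist_le_mul _ _
    have h2 : dist q.1.1 q.1.2 / dist (φ q.1.1) (φ q.1.2) ≤ (A' : ℝ) := by
      rw [div_le_iff₀ hd2]
      have := hA'.dist_le_mul (φ q.1.1) (φ q.1.2)
      rwa [hlinv _, hlinv _] at this
    exact add_le_add h1 h2
  have hK2 : (2:ℝ) ≤ Kconst φ := by
    obtain ⟨a, b, hab⟩ := exists_pair_ne (EuclideanSpace ℝ (Fin d))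
    have hd1 : 0 < dist a b := dist_pos.2 hab
    have hd2 : 0 < dist (φ a) (φ b) := dist_pos.2 fun h => hab (hinj h)
    have h2 : (2:ℝ) ≤ dist (φ a) (φ b) / dist a b + dist a b / dist (φ a) (φ b) := by
      rw [div_add_div _ _ (ne_of_gt hd1) (ne_of_gt hd2), le_div_iff₀ (by positivity)]
      nlinarith [sq_nonneg (dist (φ a) (φ b) - dist a b)]
    exact h2.trans (le_ciSup hbdd ⟨(a, b), hab⟩)
  have hKpos : (0:ℝ) < Kconst φ := lt_of_lt_of_le two_pos hK2
  have hKlip : ∀ a b, dist (Function.invFun φ a) (Function.invFun φ b)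
      ≤ Kconst φ * dist a b := by
    intro a b
    rcases eq_or_ne a b with rfl | hab
    · simp [mul_nonneg hKpos.le dist_nonneg]
    · have hu : φ (Function.invFun φ a) = a := hrinv a
      have hv : φ (Function.invFun φ b) = b := hrinv b
      have huv : Function.invFun φ a ≠ Function.invFun φ b := fun h => hab (by rw [← hu, ← hv, h])
      have hd2 : 0 < dist a b := dist_pos.2 hab
      have hle := le_ciSup hbdd ⟨(Function.invFun φ a, Function.invFun φ b), huv⟩
      simp only [hu, hv] at hle
      have h1 : dist (Function.invFun φ a) (Function.invFun φ b) / dist a b ≤ Kconst φ := by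
        refine le_trans (le_add_of_nonneg_left (by positivity)) hle
      rw [div_le_iff₀ hd2] at h1; linarith
  -- the image description of φ '' A
  have himg : ∀ A : Set (EuclideanSpace ℝ (Fin d)), φ '' A = Function.invFun φ ⁻¹' A := by
    intro A; ext c
    constructor
    · rintro ⟨a, ha, rfl⟩; simpa [hlinv a] using ha
    · intro hc; exact ⟨_, hc, hrinv c⟩
  have hinvcont : Continuous (Function.invFun φ) := hA'.continuous
  have himg_meas : ∀ {A : Set (EuclideanSpace ℝ (Fin d))}, MeasurableSet A →
      MeasurableSet (φ '' A) := by
    intro A hAm; rw [himg]; exact hinvcont.measurable hAm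
  have hvol_img : ∀ A : Set (EuclideanSpace ℝ (Fin d)), MeasurableSet A →
      volume (φ '' A) = volume A := by
    intro A hAm
    have hm : MeasurableSet (φ '' A) := himg_meas hAm
    have h := hpres.measure_preimage hm.nullMeasurableSet
    rw [Set.preimage_image_eq A hinj] at h; exact h.symm
  set R : Set (ℝ × EuclideanSpace ℝ (Fin d)) := Ioi (0:ℝ) ×ˢ univ with hR
  have hRm : MeasurableSet R := measurableSet_Ioi.prod MeasurableSet.univ
  set g : ℝ × EuclideanSpace ℝ (Fin d) → ℝ≥0∞ :=
    fun q => ENNReal.ofReal (β q ^ 2 / q.1) with hg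
  have hg_meas : Measurable g := ((hβm.pow_const 2).div measurable_fst).ennreal_ofReal
  set ν : Measure (ℝ × EuclideanSpace ℝ (Fin d)) := (volume.restrict R).withDensity g with hν
  haveI : SFinite ν := by rw [hν]; infer_instance
  set S' : Set (EuclideanSpace ℝ (Fin d)) := φ '' ball x r with hS'
  have hS'm : MeasurableSet S' := himg_meas measurableSet_ball
  -- change of variables
  have hΦpres : MeasurePreserving (Prod.map id φ)
      (volume : Measure (ℝ × EuclideanSpace ℝ (Fin d))) volume := by
    have h := (MeasurePreserving.id (volume : Measure ℝ)).prod hpres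
    rwa [← Measure.volume_eq_prod] at h
  have hRpre : (Prod.map id φ) ⁻¹' R = R := by
    ext q; simp [hR, Set.mem_prod, Prod.map]
  have hΦR : MeasurePreserving (Prod.map id φ) (volume.restrict R) (volume.restrict R) := by
    have h := hΦpres.restrict_preimage hRm
    rwa [hRpre] at h
  have hchg : ((volume.restrict R).withDensity
        (fun q => ENNReal.ofReal (β (q.1, φ q.2) ^ 2 / q.1))) (Ioc (0:ℝ) r ×ˢ ball x r)
      = ν (Ioc (0:ℝ) r ×ˢ S') := by
    rw [withDensity_apply _ (measurableSet_Ioc.prod measurableSet_ball),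
      hν, withDensity_apply _ (measurableSet_Ioc.prod hS'm)]
    have hpre : (Prod.map id φ) ⁻¹' (Ioc (0:ℝ) r ×ˢ S') = Ioc (0:ℝ) r ×ˢ ball x r := by
      ext q
      simp [hS', Set.mem_prod, Prod.map, hinj.mem_set_image]
    rw [← hpre]
    exact (hΦR.setLIntegral_comp_preimage (measurableSet_Ioc.prod hS'm) hg_meas).symm ▸ rfl
    -- split at scale s = r / K
  set s : ℝ := r / Kconst φ with hsdef
  have hs : 0 < s := div_pos hr hKpos
  have hsr : s ≤ r := by
    rw [hsdef]
    exact div_le_self hr.le (by linarith)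
  have hsub2 : Ioc s r ×ˢ S' ⊆ R := by
    rw [hR]
    exact prod_mono (fun t ht => hs.trans ht.1) (subset_univ _)
  have hsplit : ν (Ioc (0:ℝ) r ×ˢ S') ≤ ν (Ioc (0:ℝ) s ×ˢ S') + ν (Ioc s r ×ˢ S') := by
    calc ν (Ioc (0:ℝ) r ×ˢ S') = ν ((Ioc (0:ℝ) s ∪ Ioc s r) ×ˢ S') := by
          rw [Ioc_union_Ioc_eq_Ioc hs.le hsr]
      _ = ν ((Ioc (0:ℝ) s ×ˢ S') ∪ (Ioc s r ×ˢ S')) := by rw [union_prod]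
      _ ≤ _ := measure_union_le _ _
  -- Part 1 : small scales, via the averaging lemma
  have hthick : thickening s S' ⊆ φ '' ball x (2 * r) := by
    intro c hc
    obtain ⟨z, hzS, hdz⟩ := mem_thickening_iff.1 hc
    obtain ⟨w, hw, rfl⟩ := hzS
    refine ⟨Function.invFun φ c, ?_, hrinv c⟩
    have h1 : dist (Function.invFun φ c) w ≤ Kconst φ * dist c (φ w) := by
      have h := hKlip c (φ w)
      rwa [hlinv w] at h
    have h2 : Kconst φ * dist c (φ w) < Kconst φ * s := mul_lt_mul_of_pos_left hdz hKpos
    have hKs : Kconst φ * s = r := by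
      rw [hsdef]; field_simp
    have h3 : dist (Function.invFun φ c) x ≤ dist (Function.invFun φ c) w + dist w x :=
      dist_triangle _ _ _
    have hw' : dist w x < r := mem_ball.1 hw
    have : dist (Function.invFun φ c) x < 2 * r := by
      have := h1.trans_lt h2
      rw [hKs] at this
      linarith
    exact mem_ball.2 this
  have hvol2 : volume (ball x (2 * r)) = ENNReal.ofReal (2 ^ d) * volume (ball x r) := by
    rw [Measure.addHaar_ball volume x (by positivity : (0:ℝ) ≤ 2 * r),
      Measure.addHaar_ball volume x hr.le, finrank_euclideanSpace_fin, ← mul_assoc,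
      ← ENNReal.ofReal_mul (by positivity), mul_pow]
  have hpart1 : ν (Ioc (0:ℝ) s ×ˢ S') ≤ ENNReal.ofReal (M * 2 ^ d) * volume (ball x r) := by
    have h0 := avg_lemma ν M hcar S' hS'm hs
    have h1 : volume (thickening s S') ≤ ENNReal.ofReal (2 ^ d) * volume (ball x r) := by
      calc volume (thickening s S') ≤ volume (φ '' ball x (2 * r)) := measure_mono hthick
        _ = volume (ball x (2 * r)) := hvol_img _ measurableSet_ball
        _ = ENNReal.ofReal (2 ^ d) * volume (ball x r) := hvol2
    calc ν (Ioc (0:ℝ) s ×ˢ S') ≤ ENNReal.ofReal M * volume (thickening s S') := h0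
      _ ≤ ENNReal.ofReal M * (ENNReal.ofReal (2 ^ d) * volume (ball x r)) :=
          mul_le_mul_right h1 _
      _ = ENNReal.ofReal (M * 2 ^ d) * volume (ball x r) := by
          rw [← mul_assoc, ← ENNReal.ofReal_mul hM]
  -- Part 2 : large scales, via the L^∞ bound
  have hN : ∀ᵐ q ∂(volume.restrict R),
      |β q| ≤ (eLpNorm β ⊤ (volume.restrict R)).toReal := by
    have h1 : ∀ᵐ q ∂(volume.restrict R),
        (‖β q‖₊ : ℝ≥0∞) ≤ eLpNormEssSup β (volume.restrict R) := ae_le_eLpNormEssSup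
    have hlt : eLpNormEssSup β (volume.restrict R) ≠ ⊤ := by
      rw [← eLpNorm_exponent_top]
      exact hbinf.ne
    filter_upwards [h1] with q hq
    have h2 : ((‖β q‖₊ : ℝ≥0∞)).toReal ≤ (eLpNormEssSup β (volume.restrict R)).toReal :=
      ENNReal.toReal_mono hlt hq
    simpa [Real.norm_eq_abs, eLpNorm_exponent_top] using h2
  have hpart2 : ν (Ioc s r ×ˢ S')
      ≤ ENNReal.ofReal (C₀ * M * Real.log (Kconst φ)) * volume (ball x r) := by
    have hTm : MeasurableSet (Ioc s r ×ˢ S') := measurableSet_Ioc.prod hS'm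
    rw [hν, withDensity_apply _ hTm, Measure.restrict_restrict hTm, inter_eq_left.2 hsub2]
    have hmono : volume.restrict (Ioc s r ×ˢ S') ≤ volume.restrict R :=
      Measure.restrict_mono hsub2 le_rfl
    have hae : ∀ᵐ q ∂(volume.restrict (Ioc s r ×ˢ S')),
        g q ≤ ENNReal.ofReal ((C₀ * M) / q.1) := by
      filter_upwards [hN.filter_mono (ae_mono hmono), ae_restrict_mem hTm] with q hq1 hq2
      have hq1pos : 0 < q.1 := hs.trans hq2.1.1
      have hsq : β q ^ 2 ≤ C₀ * M := by
        nlinarith [abs_nonneg (β q), sq_abs (β q)]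
      rw [hg]
      exact ENNReal.ofReal_le_ofReal ((div_le_div_iff_of_pos_right hq1pos).2 hsq)
    have hIone : IntegrableOn (fun t : ℝ => (C₀ * M) / t) (Ioc s r) volume := by
      refine (ContinuousOn.integrableOn_compact isCompact_Icc ?_).mono_set Ioc_subset_Icc_self
      exact continuousOn_const.div continuousOn_id fun t ht => ne_of_gt (hs.trans_le ht.1)
    have hnn : 0 ≤ᵐ[volume.restrict (Ioc s r)] fun t : ℝ => (C₀ * M) / t := by
      filter_upwards [ae_restrict_mem measurableSet_Ioc] with t ht
      exact div_nonneg (by positivity) (hs.trans ht.1).le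
    have hrs : r / s = Kconst φ := by
      rw [hsdef]; field_simp
    have hint : ∫⁻ t in Ioc s r, ENNReal.ofReal ((C₀ * M) / t) ∂volume
        = ENNReal.ofReal (C₀ * M * Real.log (Kconst φ)) := by
      rw [← ofReal_integral_eq_lintegral_ofReal hIone hnn]
      congr 1
      rw [← intervalIntegral.integral_of_le hsr]
      have heq : (fun t : ℝ => (C₀ * M) / t) = fun t : ℝ => (C₀ * M) * t⁻¹ := by
        funext t; rw [div_eq_mul_inv]
      rw [heq, intervalIntegral.integral_const_mul, integral_inv_of_pos hs (hs.trans_le hsr),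
        hrs, mul_assoc]
    have hprod : ∫⁻ q in Ioc s r ×ˢ S', ENNReal.ofReal ((C₀ * M) / q.1) ∂volume
        = (∫⁻ t in Ioc s r, ENNReal.ofReal ((C₀ * M) / t) ∂volume) * volume S' := by
      rw [Measure.volume_eq_prod, ← Measure.prod_restrict,
        MeasureTheory.lintegral_prod _ (by fun_prop)]
      simp only [lintegral_const, Measure.restrict_apply_univ]
      exact lintegral_mul_const _ (by fun_prop)
    calc ∫⁻ q in Ioc s r ×ˢ S', g q ∂volume
        ≤ ∫⁻ q in Ioc s r ×ˢ S', ENNReal.ofReal ((C₀ * M) / q.1) ∂volume :=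
          lintegral_mono_ae hae
      _ = (∫⁻ t in Ioc s r, ENNReal.ofReal ((C₀ * M) / t) ∂volume) * volume S' := hprod
      _ = ENNReal.ofReal (C₀ * M * Real.log (Kconst φ)) * volume (ball x r) := by
          rw [hint, hS', hvol_img _ measurableSet_ball]
  -- final combination
  have hlogK : Real.log 2 ≤ Real.log (Kconst φ) :=
    Real.log_le_log (by norm_num) hK2
  have hlogKpos : 0 < Real.log (Kconst φ) := lt_of_lt_of_le hlog2 hlogK
  have harith : M * 2 ^ d + C₀ * M * Real.log (Kconst φ)
      ≤ ((2:ℝ) ^ d / Real.log 2 + 1) * (1 + C₀) * Real.log (Kconst φ) * M := by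
    have h2d : (0:ℝ) < 2 ^ d := by positivity
    have hD : (2:ℝ) ^ d / Real.log 2 * Real.log 2 = 2 ^ d := div_mul_cancel₀ _ hlog2.ne'
    nlinarith [mul_nonneg (mul_nonneg (div_nonneg h2d.le hlog2.le) hM)
        (sub_nonneg.2 hlogK),
      mul_nonneg (mul_nonneg (mul_nonneg (div_nonneg h2d.le hlog2.le) hC₀.le) hM)
        hlogKpos.le,
      mul_nonneg hM hlogKpos.le,
      mul_nonneg (mul_nonneg hC₀.le hM) hlogKpos.le]
  calc ((volume.restrict R).withDensity
        (fun q => ENNReal.ofReal (β (q.1, φ q.2) ^ 2 / q.1))) (Ioc (0:ℝ) r ×ˢ ball x r)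
      = ν (Ioc (0:ℝ) r ×ˢ S') := hchg
    _ ≤ ν (Ioc (0:ℝ) s ×ˢ S') + ν (Ioc s r ×ˢ S') := hsplit
    _ ≤ ENNReal.ofReal (M * 2 ^ d) * volume (ball x r)
        + ENNReal.ofReal (C₀ * M * Real.log (Kconst φ)) * volume (ball x r) :=
        add_le_add hpart1 hpart2
    _ = ENNReal.ofReal (M * 2 ^ d + C₀ * M * Real.log (Kconst φ)) * volume (ball x r) := by
        rw [← add_mul, ← ENNReal.ofReal_add (by positivity)
          (by positivity)]
    _ ≤ ENNReal.ofReal (((2:ℝ) ^ d / Real.log 2 + 1) * (1 + C₀) * Real.log (Kconst φ) * M)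
        * volume (ball x r) :=
        mul_le_mul_left (ENNReal.ofReal_le_ofReal harith) _
end

section
/- Let d ≥ 1, p ∈ [1,∞), L ≥ 0 and t ≥ 0. Let ψ : ℝ^d → ℝ^d be a homeomorphism preserving Lebesgue measure and satisfying e^{−Lt}|x − y| ≤ |ψ(x) − ψ(y)| ≤ e^{Lt}|x − y| for all x, y ∈ ℝ^d. There is a constant C depending only on d and p such that: if u₀ ∈ L^p_loc(ℝ^d) satisfies (|B|⁻¹ ∫_B |u₀ − av_B u₀|^p)^{1/p} ≤ N for every ball B ⊂ ℝ^d, then the function u := u₀ ∘ ψ⁻¹ satisfies (|B|⁻¹ ∫_B |u − av_B u|^p)^{1/p} ≤ C·(1 + L·t)·N for every ball B ⊂ ℝ^d. -/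
open Metric MeasureTheory Set
open scoped ENNReal NNReal

variable {d : ℕ}
local notation "E" => EuclideanSpace ℝ (Fin d)



lemma stmt18_vol_pos (hd : 1 ≤ d) (z : E) {s : ℝ} (hs : 0 < s) :
    0 < (volume (ball z s)).toReal := by
  haveI : Nonempty (Fin d) := ⟨⟨0, hd⟩⟩
  exact ENNReal.toReal_pos (measure_ball_pos volume z hs).ne' measure_ball_lt_top.ne

lemma stmt18_vol_eq (hd : 1 ≤ d) (z : E) {s : ℝ} (hs : 0 ≤ s) :
    (volume (ball z s)).toReal = s ^ d * (volume (ball (0:E) 1)).toReal := by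
  haveI : Nonempty (Fin d) := ⟨⟨0, hd⟩⟩
  haveI : Nontrivial E := by
    have h : Module.finrank ℝ E = d := finrank_euclideanSpace_fin
    have : 0 < Module.finrank ℝ E := by omega
    exact Module.nontrivial_of_finrank_pos this
  rw [Measure.addHaar_ball volume z hs, ENNReal.toReal_mul, ENNReal.toReal_ofReal (by positivity),
    finrank_euclideanSpace_fin]

lemma stmt18_jensen (hd : 1 ≤ d) {p : ℝ} (hp : 1 ≤ p) {s : Set E}
    (h0 : volume s ≠ 0) (hfin : volume s ≠ ⊤) {f : E → ℝ}
    (hf : MemLp f (ENNReal.ofReal p) (volume.restrict s)) :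
    ⨍ y in s, |f y| ≤ (⨍ y in s, |f y| ^ p) ^ (1/p) := by
  set μ := volume.restrict s with hμ
  have hp0 : (0:ℝ) < p := lt_of_lt_of_le one_pos hp
  haveI : IsFiniteMeasure μ := ⟨by rw [hμ, Measure.restrict_apply_univ]; exact hfin.lt_top⟩
  haveI : NeZero μ := ⟨by rw [hμ]; simpa [Measure.restrict_eq_zero] using h0⟩
  have hint : Integrable (fun y => |f y|) μ := by
    have h1 : MemLp f 1 μ := hf.mono_exponent (by
      simpa using ENNReal.one_le_ofReal.2 hp)
    exact (memLp_one_iff_integrable.1 h1).abs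
  have hintp : Integrable (fun y => |f y| ^ p) μ := by
    have := hf.integrable_norm_rpow (by simpa using hp0) ENNReal.ofReal_ne_top
    simpa [ENNReal.toReal_ofReal hp0.le, Real.norm_eq_abs] using this
  have hconv : ConvexOn ℝ (Ici 0) (fun x : ℝ => x ^ p) := convexOn_rpow hp
  have hcont : ContinuousOn (fun x : ℝ => x ^ p) (Ici 0) :=
    ContinuousOn.rpow_const continuousOn_id (fun x _ => Or.inr hp0.le)
  have hmem : ∀ᵐ y ∂μ, |f y| ∈ Ici (0:ℝ) := .of_forall fun y => mem_Ici.2 (abs_nonneg _)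
  have key := hconv.map_average_le hcont isClosed_Ici hmem hint hintp
  have havg0 : (0:ℝ) ≤ ⨍ y, |f y| ∂μ := by
    rw [average]
    exact integral_nonneg fun y => abs_nonneg _
  have heq : ⨍ y, |f y| ∂μ = ((⨍ y, |f y| ∂μ) ^ p) ^ (1/p) := by
    rw [← Real.rpow_mul havg0, mul_one_div, div_self hp0.ne', Real.rpow_one]
  calc ⨍ y, |f y| ∂μ = ((⨍ y, |f y| ∂μ) ^ p) ^ (1/p) := heq
    _ ≤ (⨍ y, |f y| ^ p ∂μ) ^ (1/p) :=
        Real.rpow_le_rpow (Real.rpow_nonneg havg0 p) key (by positivity)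


-- |average| ≤ average of abs
lemma stmt18_abs_avg {μ : Measure E} (f : E → ℝ) :
    |⨍ y, f y ∂μ| ≤ ⨍ y, |f y| ∂μ := by
  rw [average_eq, average_eq, smul_eq_mul, smul_eq_mul, abs_mul,
    abs_of_nonneg (by positivity : (0:ℝ) ≤ (μ.real univ)⁻¹)]
  exact mul_le_mul_of_nonneg_left
    (by simpa [Real.norm_eq_abs] using norm_integral_le_integral_norm (μ := μ) f)
    (by positivity)

-- ratio bound for averages of nonneg functions
lemma stmt18_ratio {s t : Set E} (hst : s ⊆ t) {g : E → ℝ}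
    (hg : ∀ y, 0 ≤ g y) (hgt : IntegrableOn g t)
    (h0 : (volume s).toReal ≠ 0) (hfin : volume t ≠ ⊤) :
    ⨍ y in s, g y ≤ ((volume t).toReal / (volume s).toReal) * ⨍ y in t, g y := by
  rw [setAverage_eq, setAverage_eq, smul_eq_mul, smul_eq_mul]
  have h1 : ∫ y in s, g y ≤ ∫ y in t, g y :=
    setIntegral_mono_set hgt (.of_forall fun y => hg y) (HasSubset.Subset.eventuallyLE hst)
  have h2 : (0:ℝ) ≤ (volume s).toReal⁻¹ := by positivity
  calc (volume s).toReal⁻¹ * ∫ y in s, g y ≤ (volume s).toReal⁻¹ * ∫ y in t, g y := by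
        exact mul_le_mul_of_nonneg_left h1 h2
    _ = (volume t).toReal / (volume s).toReal * ((volume t).toReal⁻¹ * ∫ y in t, g y) := by
        have htne : (volume t).toReal ≠ 0 := by
          intro h
          apply h0
          have := ENNReal.toReal_mono hfin (measure_mono hst)
          have h0' : (0:ℝ) ≤ (volume s).toReal := ENNReal.toReal_nonneg
          nlinarith [this]
        field_simp


lemma stmt18_memp_sub (hd : 1 ≤ d) {p : ℝ} (hp : 1 ≤ p) {u₀ : E → ℝ} {c : ℝ} {s : Set E}
    (hfin : volume s ≠ ⊤)
    (hm : MemLp u₀ (ENNReal.ofReal p) (volume.restrict s)) :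
    MemLp (fun y => u₀ y - c) (ENNReal.ofReal p) (volume.restrict s) := by
  haveI : IsFiniteMeasure (volume.restrict s) :=
    ⟨by rw [Measure.restrict_apply_univ]; exact hfin.lt_top⟩
  exact hm.sub (memLp_const c)

lemma stmt18_int_abs_rpow (hd : 1 ≤ d) {p : ℝ} (hp : 1 ≤ p) {f : E → ℝ} {s : Set E}
    (hm : MemLp f (ENNReal.ofReal p) (volume.restrict s)) :
    IntegrableOn (fun y => |f y| ^ p) s volume := by
  have hp0 : (0:ℝ) < p := lt_of_lt_of_le one_pos hp
  have := hm.integrable_norm_rpow (by simpa using hp0) ENNReal.ofReal_ne_top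
  simpa [ENNReal.toReal_ofReal hp0.le, Real.norm_eq_abs, IntegrableOn] using this

lemma stmt18_int (hd : 1 ≤ d) {p : ℝ} (hp : 1 ≤ p) {f : E → ℝ} {s : Set E}
    (hfin : volume s ≠ ⊤)
    (hm : MemLp f (ENNReal.ofReal p) (volume.restrict s)) :
    IntegrableOn f s volume := by
  haveI : IsFiniteMeasure (volume.restrict s) :=
    ⟨by rw [Measure.restrict_apply_univ]; exact hfin.lt_top⟩
  exact memLp_one_iff_integrable.1
    (hm.mono_exponent (by simpa using ENNReal.one_le_ofReal.2 hp))

lemma stmt18_avg_sub_const (hd : 1 ≤ d) {f : E → ℝ} {z : E} {s : ℝ} (hs : 0 < s)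
    (hint : IntegrableOn f (ball z s) volume) (c : ℝ) :
    ⨍ y in ball z s, (f y - c) = (⨍ y in ball z s, f y) - c := by
  haveI : Nonempty (Fin d) := ⟨⟨0, hd⟩⟩
  have hv : (0:ℝ) < (volume (ball z s)).toReal := stmt18_vol_pos hd z hs
  rw [setAverage_eq, setAverage_eq, integral_sub hint (integrableOn_const measure_ball_lt_top.ne),
    setIntegral_const, smul_eq_mul, smul_eq_mul, smul_eq_mul, mul_sub]
  congr 1
  exact inv_mul_cancel_left₀ hv.ne' c

lemma stmt18_avg_diff (hd : 1 ≤ d) {p : ℝ} (hp : 1 ≤ p) {u₀ : E → ℝ} {N : ℝ}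
    (hmem : ∀ (x : E) (r : ℝ), 0 < r → MemLp u₀ (ENNReal.ofReal p) (volume.restrict (ball x r)))
    (hN : ∀ (x : E) (r : ℝ), 0 < r →
      (⨍ y in ball x r, |u₀ y - ⨍ z in ball x r, u₀ z| ^ p) ^ (1 / p) ≤ N)
    {z₁ z₂ : E} {s₁ s₂ : ℝ} (hs₁ : 0 < s₁) (hsub : ball z₁ s₁ ⊆ ball z₂ s₂)
    (hs₂ : s₂ ≤ 4 * s₁) :
    |(⨍ y in ball z₁ s₁, u₀ y) - ⨍ y in ball z₂ s₂, u₀ y| ≤ 4 ^ d * N := by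
  haveI : Nonempty (Fin d) := ⟨⟨0, hd⟩⟩
  have hp0 : (0:ℝ) < p := lt_of_lt_of_le one_pos hp
  have hs₂0 : 0 < s₂ := lt_of_le_of_lt dist_nonneg (mem_ball.1 (hsub (mem_ball_self hs₁)))
  set c := ⨍ y in ball z₂ s₂, u₀ y with hc
  have hv₁ := stmt18_vol_pos hd z₁ hs₁
  have hv₂ := stmt18_vol_pos hd z₂ hs₂0
  have hm₁ : MemLp (fun y => u₀ y - c) (ENNReal.ofReal p) (volume.restrict (ball z₁ s₁)) :=
    stmt18_memp_sub hd hp measure_ball_lt_top.ne (hmem z₁ s₁ hs₁)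
  have hm₂ : MemLp (fun y => u₀ y - c) (ENNReal.ofReal p) (volume.restrict (ball z₂ s₂)) :=
    stmt18_memp_sub hd hp measure_ball_lt_top.ne (hmem z₂ s₂ hs₂0)
  have step1 : (⨍ y in ball z₁ s₁, u₀ y) - c = ⨍ y in ball z₁ s₁, (u₀ y - c) :=
    (stmt18_avg_sub_const hd hs₁ (stmt18_int hd hp measure_ball_lt_top.ne (hmem z₁ s₁ hs₁)) c).symm
  have step2 : |⨍ y in ball z₁ s₁, (u₀ y - c)| ≤ ⨍ y in ball z₁ s₁, |u₀ y - c| :=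
    stmt18_abs_avg (fun y => u₀ y - c)
  have step3 : ⨍ y in ball z₁ s₁, |u₀ y - c| ≤ (⨍ y in ball z₁ s₁, |u₀ y - c| ^ p) ^ (1/p) :=
    stmt18_jensen hd hp (measure_ball_pos volume z₁ hs₁).ne' measure_ball_lt_top.ne hm₁
  set R : ℝ := (volume (ball z₂ s₂)).toReal / (volume (ball z₁ s₁)).toReal with hR
  have step4 : ⨍ y in ball z₁ s₁, |u₀ y - c| ^ p ≤ R * ⨍ y in ball z₂ s₂, |u₀ y - c| ^ p :=
    stmt18_ratio hsub (fun y => Real.rpow_nonneg (abs_nonneg _) p)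
      (stmt18_int_abs_rpow hd hp hm₂) hv₁.ne' measure_ball_lt_top.ne
  have hRle : R ≤ 4 ^ d := by
    have hc1 : 0 < (volume (ball (0:E) 1)).toReal := stmt18_vol_pos hd 0 one_pos
    rw [hR, stmt18_vol_eq hd z₁ hs₁.le, stmt18_vol_eq hd z₂ hs₂0.le,
      div_le_iff₀ (mul_pos (pow_pos hs₁ d) hc1)]
    have h1 : s₂ ^ d ≤ (4 * s₁) ^ d := pow_le_pow_left₀ hs₂0.le hs₂ d
    calc s₂ ^ d * (volume (ball (0:E) 1)).toReal ≤ (4 * s₁) ^ d * (volume (ball (0:E) 1)).toReal :=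
          mul_le_mul_of_nonneg_right h1 hc1.le
      _ = 4 ^ d * (s₁ ^ d * (volume (ball (0:E) 1)).toReal) := by ring
  have hX := hN z₂ s₂ hs₂0
  rw [← hc] at hX
  have hXnn : (0:ℝ) ≤ ⨍ y in ball z₂ s₂, |u₀ y - c| ^ p := by
    rw [setAverage_eq]
    have : (0:ℝ) ≤ ∫ y in ball z₂ s₂, |u₀ y - c| ^ p :=
      integral_nonneg fun y => Real.rpow_nonneg (abs_nonneg _) p
    positivity
  have hRnn : (0:ℝ) ≤ R := by positivity
  have step5 : (⨍ y in ball z₁ s₁, |u₀ y - c| ^ p) ^ (1/p) ≤ 4 ^ d * N := by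
    have h1 : (⨍ y in ball z₁ s₁, |u₀ y - c| ^ p) ^ (1/p)
        ≤ (R * ⨍ y in ball z₂ s₂, |u₀ y - c| ^ p) ^ (1/p) := by
      apply Real.rpow_le_rpow _ step4 (by positivity)
      rw [setAverage_eq]
      have : (0:ℝ) ≤ ∫ y in ball z₁ s₁, |u₀ y - c| ^ p :=
        integral_nonneg fun y => Real.rpow_nonneg (abs_nonneg _) p
      positivity
    have h2 : (R * ⨍ y in ball z₂ s₂, |u₀ y - c| ^ p) ^ (1/p)
        = R ^ (1/p) * (⨍ y in ball z₂ s₂, |u₀ y - c| ^ p) ^ (1/p) :=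
      Real.mul_rpow hRnn hXnn
    have h3 : R ^ (1/p) ≤ 4 ^ d := by
      calc R ^ (1/p) ≤ (4 ^ d : ℝ) ^ (1/p) :=
            Real.rpow_le_rpow hRnn hRle (by positivity)
        _ ≤ (4 ^ d : ℝ) ^ (1:ℝ) := by
            apply Real.rpow_le_rpow_of_exponent_le (one_le_pow₀ (by norm_num))
            rw [div_le_one hp0]; exact hp
        _ = 4 ^ d := Real.rpow_one _
    calc (⨍ y in ball z₁ s₁, |u₀ y - c| ^ p) ^ (1/p)
        ≤ R ^ (1/p) * (⨍ y in ball z₂ s₂, |u₀ y - c| ^ p) ^ (1/p) := by rw [← h2]; exact h1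
      _ ≤ 4 ^ d * N := mul_le_mul h3 hX (Real.rpow_nonneg hXnn _) (by positivity)
  calc |(⨍ y in ball z₁ s₁, u₀ y) - c| = |⨍ y in ball z₁ s₁, (u₀ y - c)| := by rw [step1]
    _ ≤ ⨍ y in ball z₁ s₁, |u₀ y - c| := step2
    _ ≤ (⨍ y in ball z₁ s₁, |u₀ y - c| ^ p) ^ (1/p) := step3
    _ ≤ 4 ^ d * N := step5

lemma stmt18_chain (hd : 1 ≤ d) {p : ℝ} (hp : 1 ≤ p) {u₀ : E → ℝ} {N : ℝ}
    (hmem : ∀ (x : E) (r : ℝ), 0 < r → MemLp u₀ (ENNReal.ofReal p) (volume.restrict (ball x r)))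
    (hN : ∀ (x : E) (r : ℝ), 0 < r →
      (⨍ y in ball x r, |u₀ y - ⨍ z in ball x r, u₀ z| ^ p) ^ (1 / p) ≤ N)
    (z : E) {s : ℝ} (hs : 0 < s) (n : ℕ) :
    |(⨍ y in ball z s, u₀ y) - ⨍ y in ball z (2 ^ n * s), u₀ y| ≤ n * (4 ^ d * N) := by
  induction n with
  | zero => simp
  | succ n ih =>
    have h2 : (0:ℝ) < 2 ^ n * s := by positivity
    have hpw : (0:ℝ) < 2 ^ n := pow_pos (by norm_num) n
    have hmono : (2:ℝ) ^ n * s ≤ 2 ^ (n+1) * s := by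
      have : (2:ℝ) ^ n ≤ 2 ^ (n+1) := by
        apply pow_le_pow_right₀ (by norm_num) (by omega)
      nlinarith
    have hstep := stmt18_avg_diff hd hp hmem hN (z₁ := z) (z₂ := z)
      (s₁ := 2 ^ n * s) (s₂ := 2 ^ (n+1) * s) h2
      (ball_subset_ball hmono)
      (by rw [pow_succ]; nlinarith)
    calc |(⨍ y in ball z s, u₀ y) - ⨍ y in ball z (2 ^ (n+1) * s), u₀ y|
        ≤ |(⨍ y in ball z s, u₀ y) - ⨍ y in ball z (2 ^ n * s), u₀ y|
          + |(⨍ y in ball z (2 ^ n * s), u₀ y) - ⨍ y in ball z (2 ^ (n+1) * s), u₀ y| := by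
          apply abs_sub_le
      _ ≤ n * (4 ^ d * N) + 4 ^ d * N := add_le_add ih hstep
      _ = (n + 1 : ℕ) * (4 ^ d * N) := by push_cast; ring

lemma stmt18_add_rpow {p a b : ℝ} (hp : 0 ≤ p) (ha : 0 ≤ a) (hb : 0 ≤ b) :
    (a + b) ^ p ≤ 2 ^ p * (a ^ p + b ^ p) := by
  have h1 : a + b ≤ 2 * max a b := by
    rcases le_total a b with h | h
    · simp [max_eq_right h]; linarith
    · simp [max_eq_left h]; linarith
  have hm : (0:ℝ) ≤ max a b := le_max_of_le_left ha
  calc (a + b) ^ p ≤ (2 * max a b) ^ p :=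
        Real.rpow_le_rpow (by linarith) h1 hp
    _ = 2 ^ p * (max a b) ^ p := Real.mul_rpow (by norm_num) hm
    _ ≤ 2 ^ p * (a ^ p + b ^ p) := by
        apply mul_le_mul_of_nonneg_left _ (Real.rpow_nonneg (by norm_num) p)
        rcases le_total a b with h | h
        · rw [max_eq_right h]
          have := Real.rpow_nonneg ha p
          linarith
        · rw [max_eq_left h]
          have := Real.rpow_nonneg hb p
          linarith

lemma stmt18_rpow_inv_le {x p : ℝ} (hx : 1 ≤ x) (hp : 1 ≤ p) : x ^ (1/p) ≤ x := by
  have hp0 : (0:ℝ) < p := lt_of_lt_of_le one_pos hp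
  calc x ^ (1/p) ≤ x ^ (1:ℝ) :=
        Real.rpow_le_rpow_of_exponent_le hx (by rw [div_le_one hp0]; exact hp)
    _ = x := Real.rpow_one x


lemma stmt18_int_union_le {g : E → ℝ} (hg : ∀ y, 0 ≤ g y) {s t : Set E}
    (hs : MeasurableSet s) (ht : MeasurableSet t) (hint : IntegrableOn g (s ∪ t) volume) :
    ∫ z in s ∪ t, g z ≤ (∫ z in s, g z) + ∫ z in t, g z := by
  have hdecomp : s ∪ t = s ∪ (t \ s) := by rw [union_diff_self]
  rw [hdecomp, setIntegral_union disjoint_sdiff_right (ht.diff hs)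
    (hint.mono_set (by rw [hdecomp]; exact subset_union_left))
    (hint.mono_set (by rw [hdecomp]; exact subset_union_right))]
  gcongr _ + ?_
  exact setIntegral_mono_set (hint.mono_set subset_union_right)
    (.of_forall hg) (HasSubset.Subset.eventuallyLE diff_subset)

lemma stmt18_int_biUnion_le {g : E → ℝ} (hg : ∀ y, 0 ≤ g y) (F : Finset E) {r' : ℝ}
    (hint : IntegrableOn g (⋃ i ∈ (F : Set E), ball i r') volume) :
    ∫ z in ⋃ i ∈ (F : Set E), ball i r', g z ≤ ∑ i ∈ F, ∫ z in ball i r', g z := by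
  classical
  induction F using Finset.induction_on with
  | empty => simp
  | @insert a F' ha ih =>
    have hun : (⋃ i ∈ ((insert a F' : Finset E) : Set E), ball i r')
        = ball a r' ∪ ⋃ i ∈ (F' : Set E), ball i r' := by
      simp [Set.iUnion_iUnion_eq_or_left]
    rw [hun] at hint ⊢
    have hmeas2 : MeasurableSet (⋃ i ∈ (F' : Set E), ball i r') :=
      (isOpen_biUnion fun i _ => isOpen_ball).measurableSet
    calc ∫ z in ball a r' ∪ ⋃ i ∈ (F' : Set E), ball i r', g z
        ≤ (∫ z in ball a r', g z) + ∫ z in ⋃ i ∈ (F' : Set E), ball i r', g z :=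
          stmt18_int_union_le hg measurableSet_ball hmeas2 hint
      _ ≤ (∫ z in ball a r', g z) + ∑ i ∈ F', ∫ z in ball i r', g z := by
          gcongr _ + ?_
          exact ih (hint.mono_set subset_union_right)
      _ = ∑ i ∈ insert a F', ∫ z in ball i r', g z := by
          rw [Finset.sum_insert ha]
set_option maxHeartbeats 2000000 in
/-- BMO estimate for the solution `u = u₀ ∘ ψ⁻¹` of a transport equation along a
measure-preserving flow map `ψ` satisfying `e^{−Lt}|x−y| ≤ |ψ(x)−ψ(y)| ≤ e^{Lt}|x−y|`:
if `u₀` has `BMO_p` seminorm at most `N` then `u` has `BMO_p` seminorm at most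
`C·(1 + L·t)·N`, with `C` depending only on `d` and `p`. -/
theorem stmt18 (d : ℕ) (hd : 1 ≤ d) (p : ℝ) (hp : 1 ≤ p) :
    ∃ C : ℝ, 0 < C ∧
      ∀ (L t : ℝ), 0 ≤ L → 0 ≤ t →
      ∀ (ψ : EuclideanSpace ℝ (Fin d) → EuclideanSpace ℝ (Fin d)),
        Function.Bijective ψ →
        MeasurePreserving ψ volume volume →
        (∀ x y, Real.exp (-(L * t)) * dist x y ≤ dist (ψ x) (ψ y) ∧
          dist (ψ x) (ψ y) ≤ Real.exp (L * t) * dist x y) →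
        ∀ (u₀ : EuclideanSpace ℝ (Fin d) → ℝ) (N : ℝ), 0 ≤ N →
          (∀ (x : EuclideanSpace ℝ (Fin d)) (r : ℝ), 0 < r →
            MemLp u₀ (ENNReal.ofReal p) (volume.restrict (ball x r))) →
          (∀ (x : EuclideanSpace ℝ (Fin d)) (r : ℝ), 0 < r →
            (⨍ y in ball x r, |u₀ y - ⨍ z in ball x r, u₀ z| ^ p) ^ (1 / p) ≤ N) →
          ∀ (x : EuclideanSpace ℝ (Fin d)) (r : ℝ), 0 < r →
            (⨍ y in ball x r,
                |u₀ (Function.invFun ψ y) -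
                  ⨍ z in ball x r, u₀ (Function.invFun ψ z)| ^ p) ^ (1 / p)
              ≤ C * (1 + L * t) * N := by
  haveI : Nonempty (Fin d) := ⟨⟨0, hd⟩⟩
  have hp0 : (0:ℝ) < p := lt_of_lt_of_le one_pos hp
  refine ⟨2 ^ (2*p) * 4 * 4 ^ d * 4 ^ (d+1), by positivity, ?_⟩
  classical
  intro L t hL ht ψ hbij hmp hlip u₀ N hN0 hmem hN x r hr
  set φ := Function.invFun ψ with hφdef
  set K := Real.exp (L * t) with hKdef
  have hLt : (0:ℝ) ≤ L * t := mul_nonneg hL ht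
  have hK0 : (0:ℝ) < K := Real.exp_pos _
  have hK1 : (1:ℝ) ≤ K := Real.one_le_exp hLt
  have hψφ : ∀ y, ψ (φ y) = y := fun y => Function.rightInverse_invFun hbij.surjective y
  have hφψ : ∀ z, φ (ψ z) = z := fun z => Function.leftInverse_invFun hbij.injective z
  have hψlip : ∀ a b, dist (ψ a) (ψ b) ≤ K * dist a b := fun a b => (hlip a b).2
  have hφlip : ∀ a b, dist (φ a) (φ b) ≤ K * dist a b := by
    intro a b
    have h := (hlip (φ a) (φ b)).1
    rw [hψφ, hψφ, Real.exp_neg, ← hKdef] at h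
    exact (inv_mul_le_iff₀ hK0).1 h
  have hφcont : Continuous φ :=
    (LipschitzWith.of_dist_le_mul (K := Real.toNNReal K) (fun a b => by
      rw [Real.coe_toNNReal K hK0.le]; exact hφlip a b)).continuous
  have hψcont : Continuous ψ :=
    (LipschitzWith.of_dist_le_mul (K := Real.toNNReal K) (fun a b => by
      rw [Real.coe_toNNReal K hK0.le]; exact hψlip a b)).continuous
  let h : EuclideanSpace ℝ (Fin d) ≃ₜ EuclideanSpace ℝ (Fin d) :=
    { toFun := ψ, invFun := φ, left_inv := hφψ, right_inv := hψφ,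
      continuous_toFun := hψcont, continuous_invFun := hφcont }
  have hmpφ : MeasurePreserving φ volume volume :=
    MeasurePreserving.symm h.toMeasurableEquiv hmp
  have hembφ : MeasurableEmbedding φ := h.symm.measurableEmbedding
  set Bt := ψ ⁻¹' (ball x r) with hBtdef
  have hBtm : MeasurableSet Bt := (isOpen_ball.preimage hψcont).measurableSet
  set y₀ := φ x with hy₀def
  have hBt_sub : Bt ⊆ ball y₀ (K * r) := by
    intro z hz
    have h1 : dist (ψ z) x < r := hz
    have h2 : dist z y₀ ≤ K * dist (ψ z) x := by
      have := hφlip (ψ z) x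
      rwa [hφψ] at this
    exact mem_ball.2 (lt_of_le_of_lt h2 (by nlinarith))
  have hpre : φ ⁻¹' Bt = ball x r := by
    ext z
    simp only [hBtdef, Set.mem_preimage, hψφ]
  have hCOV : ∀ g : EuclideanSpace ℝ (Fin d) → ℝ,
      ∫ y in ball x r, g (φ y) = ∫ z in Bt, g z := by
    intro g
    rw [← hpre]
    exact hmpφ.setIntegral_preimage_emb hembφ g Bt
  set ρ := r / K with hρdef
  have hρ0 : 0 < ρ := div_pos hr hK0
  have hKρ : K * ρ = r := by
    rw [hρdef]; field_simp
  -- counting estimate for separated subsets of Bt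
  have hcount : ∀ F : Finset (EuclideanSpace ℝ (Fin d)), ↑F ⊆ Bt →
      (∀ a ∈ F, ∀ b ∈ F, a ≠ b → ρ ≤ dist a b) →
      (F.card : ℝ≥0∞) * volume (ball (0 : EuclideanSpace ℝ (Fin d)) (ρ/2))
        ≤ volume (ball x (2*r)) := by
    intro F hFsub hFsep
    have hdisj : (↑F : Set (EuclideanSpace ℝ (Fin d))).PairwiseDisjoint
        (fun i => ψ '' ball i (ρ/2)) := by
      intro a ha b hb hab
      exact Set.disjoint_image_of_injective hbij.injective
        (ball_disjoint_ball (by linarith [hFsep a ha b hb hab]))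
    have hmeas : ∀ i : EuclideanSpace ℝ (Fin d), MeasurableSet (ψ '' ball i (ρ/2)) := by
      intro i
      exact (h.isOpen_image.2 isOpen_ball).measurableSet
    have hvol : ∀ i : EuclideanSpace ℝ (Fin d),
        volume (ψ '' ball i (ρ/2)) = volume (ball (0 : EuclideanSpace ℝ (Fin d)) (ρ/2)) := by
      intro i
      have h1 : ψ ⁻¹' (ψ '' ball i (ρ/2)) = ball i (ρ/2) :=
        Set.preimage_image_eq _ hbij.injective
      have h2 := hmp.measure_preimage (hmeas i).nullMeasurableSet
      rw [h1] at h2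
      rw [← h2, Measure.addHaar_ball_center]
    have hsub2 : ∀ i ∈ F, ψ '' ball i (ρ/2) ⊆ ball x (2*r) := by
      intro i hi w hw
      obtain ⟨v, hv, rfl⟩ := hw
      have h1 : dist (ψ v) (ψ i) ≤ K * dist v i := hψlip v i
      have h2 : dist (ψ i) x < r := hFsub hi
      have h3 : dist v i < ρ/2 := mem_ball.1 hv
      have h4 : K * dist v i ≤ K * (ρ/2) := by nlinarith [dist_nonneg (x := v) (y := i)]
      have h5 : K * (ρ/2) = r/2 := by rw [← hKρ]; ring
      calc dist (ψ v) x ≤ dist (ψ v) (ψ i) + dist (ψ i) x := dist_triangle _ _ _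
        _ < r/2 + r := by rw [← h5]; exact add_lt_add_of_le_of_lt (h1.trans h4) h2
        _ ≤ 2*r := by linarith
    calc (F.card : ℝ≥0∞) * volume (ball (0 : EuclideanSpace ℝ (Fin d)) (ρ/2))
        = ∑ i ∈ F, volume (ψ '' ball i (ρ/2)) := by
          simp [hvol, Finset.sum_const, nsmul_eq_mul]
      _ = volume (⋃ i ∈ (F : Set (EuclideanSpace ℝ (Fin d))), ψ '' ball i (ρ/2)) :=
          (measure_biUnion_finset hdisj (fun i _ => hmeas i)).symm
      _ ≤ volume (ball x (2*r)) := by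
          apply measure_mono
          intro w hw
          simp only [Set.mem_iUnion] at hw
          obtain ⟨i, hi, hwi⟩ := hw
          exact hsub2 i hi hwi
  -- maximal separated set
  have hv0 : volume (ball (0 : EuclideanSpace ℝ (Fin d)) (ρ/2)) ≠ 0 :=
    (measure_ball_pos volume _ (by linarith)).ne'
  have hVfin : volume (ball x (2*r)) ≠ ⊤ := measure_ball_lt_top.ne
  set S : Set ℕ := {n | ∃ F : Finset (EuclideanSpace ℝ (Fin d)), ↑F ⊆ Bt ∧
    (∀ a ∈ F, ∀ b ∈ F, a ≠ b → ρ ≤ dist a b) ∧ F.card = n} with hSdef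
  have hS0 : 0 ∈ S := ⟨∅, by simp, by simp, rfl⟩
  have hSbdd : BddAbove S := by
    refine ⟨⌊(volume (ball x (2*r))).toReal
      / (volume (ball (0 : EuclideanSpace ℝ (Fin d)) (ρ/2))).toReal⌋₊, fun n hn => ?_⟩
    obtain ⟨F, hFsub, hFsep, hFcard⟩ := hn
    have h1 := hcount F hFsub hFsep
    have hvpos : 0 < (volume (ball (0 : EuclideanSpace ℝ (Fin d)) (ρ/2))).toReal :=
      stmt18_vol_pos hd 0 (by linarith)
    have h2 : (n : ℝ) * (volume (ball (0 : EuclideanSpace ℝ (Fin d)) (ρ/2))).toReal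
        ≤ (volume (ball x (2*r))).toReal := by
      have h3 := ENNReal.toReal_mono hVfin h1
      rw [hFcard] at h3
      rwa [ENNReal.toReal_mul, ENNReal.toReal_natCast] at h3
    exact Nat.le_floor (by rw [le_div_iff₀ hvpos]; exact h2)
  obtain ⟨F, hFsub, hFsep, hFcard⟩ := Nat.sSup_mem ⟨0, hS0⟩ hSbdd
  have hmax : ∀ z ∈ Bt, ∃ i ∈ F, dist z i < ρ := by
    intro z hz
    by_contra hcon
    push_neg at hcon
    have hzF : z ∉ F := by
      intro hzF
      have := hcon z hzF
      simp at this
      linarith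
    have hnew : sSup S + 1 ∈ S := by
      refine ⟨insert z F, ?_, ?_, ?_⟩
      · intro w hw
        rcases Finset.mem_insert.1 hw with h1 | h1
        · subst h1; exact hz
        · exact hFsub h1
      · intro a ha b hb hab
        rcases Finset.mem_insert.1 ha with h1 | h1 <;>
          rcases Finset.mem_insert.1 hb with h2 | h2
        · exact absurd (h1.trans h2.symm) hab
        · subst h1; exact hcon b h2
        · subst h2; rw [dist_comm]; exact hcon a h1
        · exact hFsep a h1 b h2 hab
      · rw [Finset.card_insert_of_notMem hzF, hFcard]
    have := le_csSup hSbdd hnew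
    omega
  -- the chaining exponent k
  set m := ⌈(2*(L*t))/Real.log 2⌉₊ with hmdef
  set k := 2 + m with hkdef
  have hlog2 : (0:ℝ) < Real.log 2 := Real.log_pos (by norm_num)
  have ha0 : (0:ℝ) ≤ 2*(L*t)/Real.log 2 := by positivity
  have hexp_eq : (2:ℝ) ^ ((2*(L*t))/Real.log 2 : ℝ) = K^2 := by
    rw [Real.rpow_def_of_pos (by norm_num : (0:ℝ) < 2)]
    rw [hKdef, ← Real.exp_nat_mul]
    congr 1
    push_cast
    field_simp
  have hpowk : ((2:ℝ))^k = 4 * (2:ℝ) ^ ((m:ℕ):ℝ) := by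
    rw [hkdef, pow_add, Real.rpow_natCast]
    norm_num
  have hk1 : 4 * K^2 ≤ (2:ℝ)^k := by
    have h2 : (2*(L*t))/Real.log 2 ≤ (m:ℝ) := Nat.le_ceil _
    have h3 : (2:ℝ) ^ ((2*(L*t))/Real.log 2 : ℝ) ≤ (2:ℝ) ^ ((m:ℕ):ℝ) :=
      Real.rpow_le_rpow_of_exponent_le (by norm_num) h2
    rw [hexp_eq] at h3
    rw [hpowk]
    nlinarith
  have hk3 : ((2:ℝ))^k ≤ 8 * K^2 := by
    have h2 : (m:ℝ) < (2*(L*t))/Real.log 2 + 1 := Nat.ceil_lt_add_one ha0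
    have h3 : (2:ℝ) ^ ((m:ℕ):ℝ) ≤ (2:ℝ) ^ ((2*(L*t))/Real.log 2 + 1 : ℝ) :=
      Real.rpow_le_rpow_of_exponent_le (by norm_num) h2.le
    have h4 : (2:ℝ) ^ ((2*(L*t))/Real.log 2 + 1 : ℝ)
        = K^2 * 2 := by
      rw [Real.rpow_add (by norm_num), hexp_eq, Real.rpow_one]
    rw [h4] at h3
    rw [hpowk]
    nlinarith
  have hk2 : (k:ℝ) ≤ 3*(1 + L*t) := by
    have h2 : (m:ℝ) < (2*(L*t))/Real.log 2 + 1 := Nat.ceil_lt_add_one ha0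
    have hlog23 : (2:ℝ) ≤ 3 * Real.log 2 := by
      linarith [Real.log_two_gt_d9]
    have h3 : (2*(L*t))/Real.log 2 ≤ 3*(L*t) := by
      rw [div_le_iff₀ hlog2]
      nlinarith [mul_nonneg hLt (by linarith : (0:ℝ) ≤ 3*Real.log 2 - 2)]
    have : (k:ℝ) = 2 + (m:ℝ) := by rw [hkdef]; push_cast; ring
    rw [this]
    nlinarith
  -- the comparison constant c and per-ball bound
  set c := ⨍ z in ball y₀ (2*K*r), u₀ z with hcdef
  have h2Kr : (0:ℝ) < 2*K*r := by positivity
  have hDi : ∀ i ∈ F, |(⨍ y in ball i ρ, u₀ y) - c| ≤ ((k:ℝ)+1) * (4^d*N) := by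
    intro i hi
    have hiBt : i ∈ Bt := hFsub hi
    have hiy₀ : dist i y₀ < K * r := mem_ball.1 (hBt_sub hiBt)
    have h1 := stmt18_chain hd hp hmem hN i hρ0 k
    have h2kρ : (0:ℝ) < 2^k * ρ := by positivity
    have hsubo : ball y₀ (2*K*r) ⊆ ball i ((2:ℝ)^k * ρ) := by
      intro w hw
      have hw1 : dist w y₀ < 2*K*r := mem_ball.1 hw
      have h4 : 4*K^2*ρ ≤ 2^k * ρ := by nlinarith
      have h5 : 4*K^2*ρ = 4*K*r := by rw [← hKρ]; ring
      apply mem_ball.2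
      calc dist w i ≤ dist w y₀ + dist y₀ i := dist_triangle _ _ _
        _ < 2*K*r + K*r := by rw [dist_comm y₀ i]; exact add_lt_add hw1 hiy₀
        _ ≤ 2^k * ρ := by nlinarith
    have hleo : (2:ℝ)^k * ρ ≤ 4 * (2*K*r) := by
      have h5 : 8*K^2*ρ = 8*K*r := by rw [← hKρ]; ring
      nlinarith
    have houter := stmt18_avg_diff hd hp hmem hN (z₁ := y₀) (z₂ := i)
      (s₁ := 2*K*r) (s₂ := (2:ℝ)^k * ρ) h2Kr hsubo hleo
    rw [← hcdef] at houter
    calc |(⨍ y in ball i ρ, u₀ y) - c|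
        ≤ |(⨍ y in ball i ρ, u₀ y) - ⨍ y in ball i ((2:ℝ)^k * ρ), u₀ y|
          + |(⨍ y in ball i ((2:ℝ)^k * ρ), u₀ y) - c| := abs_sub_le _ _ _
      _ ≤ (k:ℝ) * (4^d*N) + 4^d*N := by
          apply add_le_add h1
          rw [← abs_sub_comm]
          exact houter
      _ = ((k:ℝ)+1) * (4^d*N) := by ring
  -- integral estimate over Bt
  set g : EuclideanSpace ℝ (Fin d) → ℝ := fun z => |u₀ z - c| ^ p with hgdef
  have hgnn : ∀ z, 0 ≤ g z := fun z => Real.rpow_nonneg (abs_nonneg _) p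
  have hKrρ : (0:ℝ) < K*r + ρ := by positivity
  have hmemD : MemLp (fun z => u₀ z - c) (ENNReal.ofReal p)
      (volume.restrict (ball y₀ (K*r + ρ))) :=
    stmt18_memp_sub hd hp measure_ball_lt_top.ne (hmem y₀ (K*r+ρ) hKrρ)
  have hgintD : IntegrableOn g (ball y₀ (K*r + ρ)) volume :=
    stmt18_int_abs_rpow hd hp hmemD
  have hBiD : ∀ i ∈ F, ball i ρ ⊆ ball y₀ (K*r + ρ) := by
    intro i hi w hw
    have h1 : dist i y₀ < K*r := mem_ball.1 (hBt_sub (hFsub hi))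
    have h2 : dist w i < ρ := mem_ball.1 hw
    exact mem_ball.2 (lt_of_le_of_lt (dist_triangle w i y₀) (by linarith))
  have hUD : (⋃ i ∈ (F : Set (EuclideanSpace ℝ (Fin d))), ball i ρ) ⊆ ball y₀ (K*r+ρ) := by
    intro w hw
    simp only [Set.mem_iUnion] at hw
    obtain ⟨i, hi, hwi⟩ := hw
    exact hBiD i hi hwi
  have hcover : Bt ⊆ ⋃ i ∈ (F : Set (EuclideanSpace ℝ (Fin d))), ball i ρ := by
    intro z hz
    obtain ⟨i, hi, hzi⟩ := hmax z hz
    exact Set.mem_biUnion hi (mem_ball.2 hzi)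
  have hstep1 : ∫ z in Bt, g z ≤ ∑ i ∈ F, ∫ z in ball i ρ, g z := by
    calc ∫ z in Bt, g z ≤ ∫ z in ⋃ i ∈ (F : Set (EuclideanSpace ℝ (Fin d))), ball i ρ, g z :=
          setIntegral_mono_set (hgintD.mono_set hUD) (.of_forall hgnn)
            (HasSubset.Subset.eventuallyLE hcover)
      _ ≤ _ := stmt18_int_biUnion_le hgnn F (hgintD.mono_set hUD)
  set β := ((k:ℝ)+1) * (4^d*N) with hβdef
  have hβ0 : 0 ≤ β := by positivity
  have hsti : ∀ i ∈ F, ∫ z in ball i ρ, g z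
      ≤ (volume (ball i ρ)).toReal * (2^p * (N^p + β^p)) := by
    intro i hi
    set a := ⨍ y in ball i ρ, u₀ y with hadef
    have hmi : MemLp (fun z => u₀ z - a) (ENNReal.ofReal p) (volume.restrict (ball i ρ)) :=
      stmt18_memp_sub hd hp measure_ball_lt_top.ne (hmem i ρ hρ0)
    have hinti : IntegrableOn (fun z => |u₀ z - a| ^ p) (ball i ρ) volume :=
      stmt18_int_abs_rpow hd hp hmi
    have hvi : 0 < (volume (ball i ρ)).toReal := stmt18_vol_pos hd i hρ0
    have hXi : ∫ z in ball i ρ, |u₀ z - a| ^ p ≤ (volume (ball i ρ)).toReal * N^p := by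
      have h1 := hN i ρ hρ0
      rw [← hadef] at h1
      have hIznn : (0:ℝ) ≤ ∫ z in ball i ρ, |u₀ z - a| ^ p :=
        integral_nonneg fun z => Real.rpow_nonneg (abs_nonneg _) _
      have hXnn : 0 ≤ ⨍ z in ball i ρ, |u₀ z - a| ^ p := by
        rw [setAverage_eq]
        positivity
      have h2 : (⨍ z in ball i ρ, |u₀ z - a| ^ p) ≤ N^p := by
        have h3 := Real.rpow_le_rpow (Real.rpow_nonneg hXnn _) h1 hp0.le
        rwa [← Real.rpow_mul hXnn, one_div_mul_cancel hp0.ne', Real.rpow_one] at h3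
      rw [setAverage_eq, smul_eq_mul] at h2
      have h4 := mul_le_mul_of_nonneg_left h2 hvi.le
      calc ∫ z in ball i ρ, |u₀ z - a| ^ p
          = (volume (ball i ρ)).toReal
            * ((volume (ball i ρ)).toReal⁻¹ * ∫ z in ball i ρ, |u₀ z - a| ^ p) := by
            field_simp
        _ ≤ (volume (ball i ρ)).toReal * N^p := h4
    have hpoint : ∀ z ∈ ball i ρ, g z ≤ 2^p * (|u₀ z - a|^p + β^p) := by
      intro z _
      have h1 : |u₀ z - c| ≤ |u₀ z - a| + |a - c| := abs_sub_le _ _ _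
      have h2 : g z ≤ (|u₀ z - a| + |a - c|)^p :=
        Real.rpow_le_rpow (abs_nonneg _) h1 hp0.le
      have h3 := stmt18_add_rpow hp0.le (abs_nonneg (u₀ z - a)) (abs_nonneg (a - c))
      have h4 : |a - c|^p ≤ β^p := by
        apply Real.rpow_le_rpow (abs_nonneg _) _ hp0.le
        rw [hβdef]
        exact hDi i hi
      calc g z ≤ (|u₀ z - a| + |a - c|)^p := h2
        _ ≤ 2^p * (|u₀ z - a|^p + |a - c|^p) := h3
        _ ≤ 2^p * (|u₀ z - a|^p + β^p) := by
            apply mul_le_mul_of_nonneg_left (add_le_add_right h4 _)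
              (Real.rpow_nonneg (by norm_num) p)
    have hgi : IntegrableOn g (ball i ρ) volume := hgintD.mono_set (hBiD i hi)
    have hRHSint : IntegrableOn (fun z => 2^p * (|u₀ z - a|^p + β^p)) (ball i ρ) volume :=
      (hinti.add (integrableOn_const measure_ball_lt_top.ne)).const_mul _
    have h5 : ∫ z in ball i ρ, g z ≤ ∫ z in ball i ρ, 2^p * (|u₀ z - a|^p + β^p) :=
      setIntegral_mono_on hgi hRHSint measurableSet_ball hpoint
    have h6 : ∫ z in ball i ρ, (2:ℝ)^p * (|u₀ z - a|^p + β^p)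
        = 2^p * ((∫ z in ball i ρ, |u₀ z - a|^p)
          + (volume (ball i ρ)).toReal * β^p) := by
      rw [integral_const_mul, integral_add hinti (integrableOn_const measure_ball_lt_top.ne),
        setIntegral_const, smul_eq_mul]
      rfl
    calc ∫ z in ball i ρ, g z ≤ ∫ z in ball i ρ, 2^p * (|u₀ z - a|^p + β^p) := h5
      _ = 2^p * ((∫ z in ball i ρ, |u₀ z - a|^p) + (volume (ball i ρ)).toReal * β^p) := h6
      _ ≤ 2^p * ((volume (ball i ρ)).toReal * N^p + (volume (ball i ρ)).toReal * β^p) := by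
          apply mul_le_mul_of_nonneg_left (add_le_add_left hXi _)
            (Real.rpow_nonneg (by norm_num) p)
      _ = (volume (ball i ρ)).toReal * (2^p * (N^p + β^p)) := by ring
  -- sum of volumes
  set c₁ := (volume (ball (0 : EuclideanSpace ℝ (Fin d)) 1)).toReal with hc₁def
  have hc₁0 : 0 < c₁ := stmt18_vol_pos hd 0 one_pos
  have hvolsum : ∑ i ∈ F, (volume (ball i ρ)).toReal = (F.card : ℝ) * (ρ^d * c₁) := by
    rw [Finset.sum_congr rfl (fun i _ => stmt18_vol_eq hd i hρ0.le), Finset.sum_const,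
      nsmul_eq_mul]
  have hcardvol : (F.card : ℝ) * (ρ^d * c₁) ≤ 4^d * (volume (ball x r)).toReal := by
    have h1 := hcount F hFsub hFsep
    have h2 := ENNReal.toReal_mono hVfin h1
    rw [ENNReal.toReal_mul, ENNReal.toReal_natCast] at h2
    rw [stmt18_vol_eq hd 0 (by linarith : (0:ℝ) ≤ ρ/2)] at h2
    rw [stmt18_vol_eq hd x (by linarith : (0:ℝ) ≤ 2*r)] at h2
    rw [stmt18_vol_eq hd x hr.le]
    have h3 : (ρ/2)^d = ρ^d / 2^d := div_pow ρ 2 d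
    have h4 : (2*r)^d = 2^d * r^d := mul_pow 2 r d
    rw [h3, h4] at h2
    have h5 : (0:ℝ) < 2^d := by positivity
    -- h2 : card * (ρ^d/2^d * c₁) ≤ 2^d * r^d * c₁
    have h6 : (F.card : ℝ) * (ρ^d * c₁) = 2^d * ((F.card : ℝ) * (ρ^d/2^d * c₁)) := by
      field_simp
    rw [h6]
    calc 2^d * ((F.card : ℝ) * (ρ^d/2^d * c₁)) ≤ 2^d * (2^d * r^d * c₁) := by
          apply mul_le_mul_of_nonneg_left h2 h5.le
      _ = 4^d * (r^d * c₁) := by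
          rw [show (4:ℝ) = 2*2 by norm_num, mul_pow]
          ring
  have hmain : ∫ z in Bt, g z
      ≤ 4^d * (volume (ball x r)).toReal * (2^p * (N^p + β^p)) := by
    have hZnn : (0:ℝ) ≤ 2^p * (N^p + β^p) := by
      have := Real.rpow_nonneg hN0 p
      have := Real.rpow_nonneg hβ0 p
      have := Real.rpow_nonneg (by norm_num : (0:ℝ) ≤ 2) p
      positivity
    calc ∫ z in Bt, g z ≤ ∑ i ∈ F, ∫ z in ball i ρ, g z := hstep1
      _ ≤ ∑ i ∈ F, (volume (ball i ρ)).toReal * (2^p * (N^p + β^p)) :=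
          Finset.sum_le_sum hsti
      _ = (∑ i ∈ F, (volume (ball i ρ)).toReal) * (2^p * (N^p + β^p)) :=
          (Finset.sum_mul ..).symm
      _ ≤ 4^d * (volume (ball x r)).toReal * (2^p * (N^p + β^p)) := by
          apply mul_le_mul_of_nonneg_right _ hZnn
          rw [hvolsum]
          exact hcardvol
  -- transfer to u = u₀ ∘ φ
  set volB := (volume (ball x r)).toReal with hvolBdef
  have hvolB0 : 0 < volB := stmt18_vol_pos hd x hr
  have hu_memp : MemLp (fun y => u₀ (φ y)) (ENNReal.ofReal p)
      (volume.restrict (ball x r)) := by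
    have h1 : MemLp u₀ (ENNReal.ofReal p) (volume.restrict Bt) :=
      (hmem y₀ (K*r) (by positivity)).mono_measure (Measure.restrict_mono hBt_sub le_rfl)
    have h2 : volume.restrict Bt = Measure.map φ (volume.restrict (ball x r)) := by
      have h3 := Measure.restrict_map (μ := (volume : Measure (EuclideanSpace ℝ (Fin d))))
        hembφ.measurable hBtm
      rw [hmpφ.map_eq, hpre] at h3
      exact h3
    rw [h2] at h1
    exact hembφ.memLp_map_measure_iff.1 h1
  have huc : MemLp (fun y => u₀ (φ y) - c) (ENNReal.ofReal p)
      (volume.restrict (ball x r)) :=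
    stmt18_memp_sub hd hp measure_ball_lt_top.ne hu_memp
  have hu_int : IntegrableOn (fun y => u₀ (φ y)) (ball x r) volume :=
    stmt18_int hd hp measure_ball_lt_top.ne hu_memp
  set A := ⨍ z in ball x r, u₀ (φ z) with hAdef
  set E₁ := ⨍ y in ball x r, |u₀ (φ y) - c|^p with hE₁def
  have hCg : ∫ y in ball x r, |u₀ (φ y) - c|^p = ∫ z in Bt, g z := hCOV g
  have hE₁nn : 0 ≤ E₁ := by
    rw [hE₁def, setAverage_eq, smul_eq_mul]
    have h1 : (0:ℝ) ≤ ∫ y in ball x r, |u₀ (φ y) - c|^p :=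
      integral_nonneg fun y => Real.rpow_nonneg (abs_nonneg _) _
    positivity
  have hE1 : E₁ ≤ 4^d * (2^p * (N^p + β^p)) := by
    rw [hE₁def, setAverage_eq, smul_eq_mul, hCg, measureReal_def, ← hvolBdef]
    have h1 := mul_le_mul_of_nonneg_left hmain (inv_nonneg.2 hvolB0.le)
    calc volB⁻¹ * ∫ z in Bt, g z
        ≤ volB⁻¹ * (4^d * volB * (2^p * (N^p + β^p))) := h1
      _ = 4^d * (2^p * (N^p + β^p)) := by field_simp
  have hACle : |A - c| ≤ E₁ ^ (1/p) := by
    have h1 : A - c = ⨍ y in ball x r, (u₀ (φ y) - c) :=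
      (stmt18_avg_sub_const hd hr hu_int c).symm
    calc |A - c| = |⨍ y in ball x r, (u₀ (φ y) - c)| := by rw [h1]
      _ ≤ ⨍ y in ball x r, |u₀ (φ y) - c| := stmt18_abs_avg _
      _ ≤ E₁ ^ (1/p) :=
          stmt18_jensen hd hp (measure_ball_pos volume x hr).ne' measure_ball_lt_top.ne huc
  have hcA : |c - A|^p ≤ E₁ := by
    have h1 : |c - A| ≤ E₁ ^ (1/p) := by rw [abs_sub_comm]; exact hACle
    have h2 := Real.rpow_le_rpow (abs_nonneg _) h1 hp0.le
    rwa [← Real.rpow_mul hE₁nn, one_div_mul_cancel hp0.ne', Real.rpow_one] at h2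
  -- final oscillation bound
  have huA : MemLp (fun y => u₀ (φ y) - A) (ENNReal.ofReal p)
      (volume.restrict (ball x r)) :=
    stmt18_memp_sub hd hp measure_ball_lt_top.ne hu_memp
  have hintA : IntegrableOn (fun y => |u₀ (φ y) - A|^p) (ball x r) volume :=
    stmt18_int_abs_rpow hd hp huA
  have hintc : IntegrableOn (fun y => |u₀ (φ y) - c|^p) (ball x r) volume :=
    stmt18_int_abs_rpow hd hp huc
  have hpt : ∀ y ∈ ball x r, |u₀ (φ y) - A|^p ≤ 2^p * (|u₀ (φ y) - c|^p + E₁) := by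
    intro y _
    have h1 : |u₀ (φ y) - A| ≤ |u₀ (φ y) - c| + |c - A| := abs_sub_le _ _ _
    have h2 : |u₀ (φ y) - A|^p ≤ (|u₀ (φ y) - c| + |c - A|)^p :=
      Real.rpow_le_rpow (abs_nonneg _) h1 hp0.le
    have h3 := stmt18_add_rpow hp0.le (abs_nonneg (u₀ (φ y) - c)) (abs_nonneg (c - A))
    calc |u₀ (φ y) - A|^p ≤ (|u₀ (φ y) - c| + |c - A|)^p := h2
      _ ≤ 2^p * (|u₀ (φ y) - c|^p + |c - A|^p) := h3
      _ ≤ 2^p * (|u₀ (φ y) - c|^p + E₁) := by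
          apply mul_le_mul_of_nonneg_left (add_le_add_right hcA _)
            (Real.rpow_nonneg (by norm_num) p)
  have hE₁int : ∫ y in ball x r, |u₀ (φ y) - c|^p = volB * E₁ := by
    rw [hE₁def, setAverage_eq, smul_eq_mul, measureReal_def, ← hvolBdef]
    field_simp
  have hW : (⨍ y in ball x r, |u₀ (φ y) - A|^p) ≤ 2^p * (E₁ + E₁) := by
    rw [setAverage_eq, smul_eq_mul, measureReal_def, ← hvolBdef]
    have hRHSint : IntegrableOn (fun y => (2:ℝ)^p * (|u₀ (φ y) - c|^p + E₁)) (ball x r) volume :=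
      (hintc.add (integrableOn_const measure_ball_lt_top.ne)).const_mul _
    have h5 : ∫ y in ball x r, |u₀ (φ y) - A|^p
        ≤ ∫ y in ball x r, 2^p * (|u₀ (φ y) - c|^p + E₁) :=
      setIntegral_mono_on hintA hRHSint measurableSet_ball hpt
    have h6 : ∫ y in ball x r, (2:ℝ)^p * (|u₀ (φ y) - c|^p + E₁)
        = 2^p * (volB * E₁ + volB * E₁) := by
      rw [integral_const_mul, integral_add hintc (integrableOn_const measure_ball_lt_top.ne),
        setIntegral_const, smul_eq_mul, hE₁int, measureReal_def, ← hvolBdef]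
    calc volB⁻¹ * ∫ y in ball x r, |u₀ (φ y) - A|^p
        ≤ volB⁻¹ * (2^p * (volB * E₁ + volB * E₁)) := by
          apply mul_le_mul_of_nonneg_left _ (inv_nonneg.2 hvolB0.le)
          rw [← h6]
          exact h5
      _ = 2^p * (E₁ + E₁) := by field_simp
  have hWnn : 0 ≤ ⨍ y in ball x r, |u₀ (φ y) - A|^p := by
    rw [setAverage_eq, smul_eq_mul]
    have h1 : (0:ℝ) ≤ ∫ y in ball x r, |u₀ (φ y) - A|^p :=
      integral_nonneg fun y => Real.rpow_nonneg (abs_nonneg _) _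
    positivity
  -- assemble constants
  set γ := (4:ℝ)^(d+1) * ((1+L*t)*N) with hγdef
  have h1Lt : (1:ℝ) ≤ 1 + L*t := by linarith
  have hγ0 : 0 ≤ γ := by positivity
  have h4d1 : (1:ℝ) ≤ 4^d := one_le_pow₀ (by norm_num)
  have hNγ : N ≤ γ := by
    rw [hγdef, pow_succ]
    have h1 : (1:ℝ) ≤ 4^d * 4 * (1+L*t) := by
      have h2 : (1:ℝ)*1 ≤ (4^d*4) * (1+L*t) :=
        mul_le_mul (by linarith) h1Lt zero_le_one (by positivity)
      linarith
    calc N = 1 * N := (one_mul N).symm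
      _ ≤ (4^d * 4 * (1+L*t)) * N := mul_le_mul_of_nonneg_right h1 hN0
      _ = 4^d * 4 * ((1+L*t)*N) := by ring
  have hβγ : β ≤ γ := by
    rw [hβdef, hγdef, pow_succ]
    have hk2' : (k:ℝ) + 1 ≤ 4*(1+L*t) := by linarith
    have h40 : (0:ℝ) ≤ 4^d * N := by positivity
    calc ((k:ℝ)+1) * (4^d*N) ≤ 4*(1+L*t) * (4^d*N) :=
          mul_le_mul_of_nonneg_right hk2' h40
      _ = 4^d * 4 * ((1+L*t)*N) := by ring
  have hZ : N^p + β^p ≤ 2*γ^p := by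
    have h1 : N^p ≤ γ^p := Real.rpow_le_rpow hN0 hNγ hp0.le
    have h2 : β^p ≤ γ^p := Real.rpow_le_rpow hβ0 hβγ hp0.le
    linarith
  have h2p1 : (1:ℝ) ≤ 2^p := by
    have := Real.rpow_le_rpow_of_exponent_le (one_le_two) hp0.le
    rwa [Real.rpow_zero] at this
  have h2pnn : (0:ℝ) ≤ 2^p := by linarith
  set Cst := (2:ℝ)^(2*p) * 4 * 4^d with hCstdef
  have hCsteq : (2:ℝ)^p * 2 * (4^d * ((2:ℝ)^p * 2)) = Cst := by
    rw [hCstdef, show (2:ℝ)^(2*p) = 2^p * 2^p by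
      rw [← Real.rpow_add (by norm_num : (0:ℝ) < 2)]; ring_nf]
    ring
  have h22p1 : (1:ℝ) ≤ 2^(2*p) := by
    have := Real.rpow_le_rpow_of_exponent_le (one_le_two) (by linarith : (0:ℝ) ≤ 2*p)
    rwa [Real.rpow_zero] at this
  have hCst1 : (1:ℝ) ≤ Cst := by
    rw [hCstdef]
    have h2 : (1:ℝ)*1 ≤ (2^(2*p)*4) * (4^d) :=
      mul_le_mul (by linarith) h4d1 zero_le_one (by positivity)
    linarith
  have hWfin : (⨍ y in ball x r, |u₀ (φ y) - A|^p) ≤ Cst * γ^p := by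
    have hγpnn : (0:ℝ) ≤ γ^p := Real.rpow_nonneg hγ0 p
    calc (⨍ y in ball x r, |u₀ (φ y) - A|^p) ≤ 2^p * (E₁ + E₁) := hW
      _ = 2^p * 2 * E₁ := by ring
      _ ≤ 2^p * 2 * (4^d * (2^p * (N^p + β^p))) := by
          apply mul_le_mul_of_nonneg_left hE1
          positivity
      _ ≤ 2^p * 2 * (4^d * (2^p * (2*γ^p))) := by
          have h7 : 4^d * (2^p * (N^p + β^p)) ≤ 4^d * (2^p * (2*γ^p)) := by
            apply mul_le_mul_of_nonneg_left _ (by positivity : (0:ℝ) ≤ (4:ℝ)^d)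
            exact mul_le_mul_of_nonneg_left hZ h2pnn
          apply mul_le_mul_of_nonneg_left h7
          positivity
      _ = (2^p * 2 * (4^d * (2^p * 2))) * γ^p := by ring
      _ = Cst * γ^p := by rw [hCsteq]
  -- conclude
  have hfinal : (⨍ y in ball x r, |u₀ (φ y) - A|^p) ^ (1/p) ≤ Cst * γ := by
    have hγpnn : (0:ℝ) ≤ γ^p := Real.rpow_nonneg hγ0 p
    have hCstnn : (0:ℝ) ≤ Cst := by linarith
    calc (⨍ y in ball x r, |u₀ (φ y) - A|^p) ^ (1/p)
        ≤ (Cst * γ^p) ^ (1/p) := Real.rpow_le_rpow hWnn hWfin (by positivity)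
      _ = Cst ^ (1/p) * (γ^p) ^ (1/p) := Real.mul_rpow hCstnn hγpnn
      _ = Cst ^ (1/p) * γ := by
          rw [← Real.rpow_mul hγ0, mul_one_div, div_self hp0.ne', Real.rpow_one]
      _ ≤ Cst * γ := mul_le_mul_of_nonneg_right (stmt18_rpow_inv_le hCst1 hp) hγ0
  calc (⨍ y in ball x r, |u₀ (φ y) - A|^p) ^ (1/p) ≤ Cst * γ := hfinal
    _ = 2 ^ (2*p) * 4 * 4 ^ d * 4 ^ (d+1) * (1 + L*t) * N := by
        rw [hCstdef, hγdef]; ring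
end
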